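/- arXiv:1501.03878 — 7 statements merged into one kernel-verified Lean document; each statement's English description precedes it below -/
import Mathlib

section
/- For every real constant c, the function v(θ) := −2 log(√(c²+1) − c cos θ) satisfies v''(θ) + (cos θ/sin θ) v'(θ) + 2(e^{v(θ)} − 1) = 0 for all θ ∈ (0,π), together with v'(0) = v'(π) = 0. -/
open Real Set

lemma stmt_2_key (s x y c : ℝ) (hy : y ≠ 0) (hf : s - c*x ≠ 0)
    (hs : s^2 = c^2+1) (hxy : y^2 = 1 - x^2) :
    -2 * ((c*x*(s-c*x) - c*y*(c*y))/(s-c*x)^2) + x/y * (-2*(c*y/(s-c*x)))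
      + 2*(((s-c*x)^2)⁻¹ - 1) = 0 := by
  field_simp
  linear_combination (-2) * hs + 2 * c^2 * hxy

theorem stmt_2 (c : ℝ) (v : ℝ → ℝ)
    (hv : v = fun θ : ℝ =>
      -2 * Real.log (Real.sqrt (c ^ 2 + 1) - c * Real.cos θ)) :
    (∀ θ ∈ Ioo (0:ℝ) π,
      deriv (deriv v) θ + (Real.cos θ / Real.sin θ) * deriv v θ
        + 2 * (Real.exp (v θ) - 1) = 0) ∧
    deriv v 0 = 0 ∧ deriv v π = 0 := by
  set s : ℝ := Real.sqrt (c ^ 2 + 1) with hs_def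
  have hs2 : s ^ 2 = c ^ 2 + 1 := Real.sq_sqrt (by positivity)
  have hpos : ∀ θ : ℝ, 0 < s - c * Real.cos θ := by
    intro θ
    have h1 : c * Real.cos θ ≤ |c| := by
      calc c * Real.cos θ ≤ |c * Real.cos θ| := le_abs_self _
        _ = |c| * |Real.cos θ| := abs_mul _ _
        _ ≤ |c| * 1 := by
            gcongr
            exact Real.abs_cos_le_one θ
        _ = |c| := mul_one _
    have h2 : |c| < s := by
      have : |c| = Real.sqrt (c ^ 2) := by
        rw [Real.sqrt_sq_eq_abs]
      rw [this, hs_def]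
      exact Real.sqrt_lt_sqrt (by positivity) (by linarith)
    linarith
  have hf : ∀ θ : ℝ, HasDerivAt (fun θ : ℝ => s - c * Real.cos θ)
      (c * Real.sin θ) θ := by
    intro θ
    have := ((Real.hasDerivAt_cos θ).const_mul c).const_sub s
    simpa using this
  have hv' : ∀ θ : ℝ, HasDerivAt v
      (-2 * (c * Real.sin θ / (s - c * Real.cos θ))) θ := by
    intro θ
    rw [hv]
    exact ((hf θ).log (ne_of_gt (hpos θ))).const_mul (-2)
  have hderiv : deriv v = fun θ =>
      -2 * (c * Real.sin θ / (s - c * Real.cos θ)) :=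
    funext fun θ => (hv' θ).deriv
  refine ⟨?_, ?_, ?_⟩
  · intro θ hθ
    have hsin : Real.sin θ ≠ 0 :=
      ne_of_gt (Real.sin_pos_of_pos_of_lt_pi hθ.1 hθ.2)
    have hfne : s - c * Real.cos θ ≠ 0 := ne_of_gt (hpos θ)
    have hnum : HasDerivAt (fun θ : ℝ => c * Real.sin θ)
        (c * Real.cos θ) θ := (Real.hasDerivAt_sin θ).const_mul c
    have hq : HasDerivAt (fun θ : ℝ => c * Real.sin θ / (s - c * Real.cos θ))
        ((c * Real.cos θ * (s - c * Real.cos θ) -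
          c * Real.sin θ * (c * Real.sin θ)) / (s - c * Real.cos θ) ^ 2) θ :=
      hnum.div (hf θ) hfne
    have hdd : deriv (deriv v) θ =
        -2 * ((c * Real.cos θ * (s - c * Real.cos θ) -
          c * Real.sin θ * (c * Real.sin θ)) / (s - c * Real.cos θ) ^ 2) := by
      rw [hderiv]
      exact (hq.const_mul (-2)).deriv
    have hexp : Real.exp (v θ) = ((s - c * Real.cos θ) ^ 2)⁻¹ := by
      simp only [hv]
      have h3 : -2 * Real.log (s - c * Real.cos θ) =
          Real.log (((s - c * Real.cos θ) ^ 2)⁻¹) := by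
        rw [Real.log_inv, Real.log_pow]
        push_cast
        ring
      rw [h3, Real.exp_log (by positivity)]
    rw [hdd, hderiv, hexp]
    have hsc : Real.sin θ ^ 2 = 1 - Real.cos θ ^ 2 := by
      have := Real.sin_sq_add_cos_sq θ
      linarith
    exact stmt_2_key s (Real.cos θ) (Real.sin θ) c hsin hfne hs2 hsc
  · rw [hderiv]
    simp
  · rw [hderiv]
    simp
end

section
/- Let N ≥ 4 be an integer, ᾱ ∈ ℝ, and κ̄ := log(2(N−3)). Let x̄ ∈ C²(ℝ) be the unique entire solution of x̄'' + (N−3) x̄' + 2(N−3)(e^{x̄} − 1) = 0 with x̄(s) − 2s + κ̄ − ᾱ → 0 and e^{−s}(x̄'(s) − 2) → 0 as s → −∞. Then (x̄(s), x̄'(s)) → (0,0) as s → ∞. -/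
open Real Filter Set

lemma stmt_8_aux (a : ℝ) (ha : 1 ≤ a) (x : ℝ → ℝ) (hx2 : ContDiff ℝ 2 x)
    (hode : ∀ s : ℝ, deriv (deriv x) s + a * deriv x s + 2 * a * (Real.exp (x s) - 1) = 0) :
    Tendsto x atTop (nhds 0) ∧ Tendsto (deriv x) atTop (nhds 0) := by
  have ha0 : 0 < a := lt_of_lt_of_le one_pos ha
  rw [show (2 : WithTop ℕ∞) = 1 + 1 from rfl, contDiff_succ_iff_deriv] at hx2
  obtain ⟨hxdiff, -, hy1⟩ := hx2
  set y := deriv x with hy_def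
  have hydiff : Differentiable ℝ y := hy1.differentiable one_ne_zero
  have hxd : ∀ s, HasDerivAt x (y s) s := by
    rw [hy_def]; exact fun s => (hxdiff s).hasDerivAt
  have hyd : ∀ s, HasDerivAt y (-(a * y s + 2 * a * (Real.exp (x s) - 1))) s := by
    intro s
    have h := (hydiff s).hasDerivAt
    have := hode s
    refine h.congr_deriv ?_
    linarith
  clear_value y
  -- the energy
  set E : ℝ → ℝ := fun s => (y s)^2 / 2 + 2 * a * (Real.exp (x s) - x s) with hE_def
  have hEd : ∀ s, HasDerivAt E (-(a * (y s)^2)) s := by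
    intro s
    have h1 : HasDerivAt (fun s => (y s)^2 / 2)
        ((2 * y s ^ 1 * -(a * y s + 2 * a * (Real.exp (x s) - 1))) / 2) s :=
      (((hyd s).pow 2)).div_const 2
    have h2 : HasDerivAt (fun s => 2 * a * (Real.exp (x s) - x s))
        (2 * a * (Real.exp (x s) * y s - y s)) s := by
      exact (((Real.hasDerivAt_exp (x s)).comp s (hxd s)).sub (hxd s)).const_mul (2*a)
    have := h1.add h2
    refine this.congr_deriv ?_
    ring
  clear_value E
  have hEanti : Antitone E := by
    apply antitone_of_deriv_nonpos (fun s => (hEd s).differentiableAt)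
    intro s
    rw [(hEd s).deriv]
    nlinarith [sq_nonneg (y s)]
  have hElb : ∀ s, 2 * a ≤ E s := by
    intro s
    have := Real.add_one_le_exp (x s)
    have := sq_nonneg (y s)
    simp only [hE_def]
    nlinarith
  -- limit of E
  set L := ⨅ s, E s with hL_def
  clear_value L
  have hbdd : BddBelow (range E) := ⟨2*a, fun v ⟨s, hs⟩ => hs ▸ hElb s⟩
  have hEL : Tendsto E atTop (nhds L) := by
    rw [hL_def]; exact tendsto_atTop_ciInf hEanti hbdd
  -- bounds on [0, ∞)
  set C := E 0 with hC_def
  clear_value C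
  have hC2 : 2 * a ≤ C := by rw [hC_def]; exact hElb 0
  have hC0 : 0 < C := by linarith
  have hEb : ∀ s, 0 ≤ s → E s ≤ C := by rw [hC_def]; exact fun s hs => hEanti hs
  have hysq : ∀ s, 0 ≤ s → (y s)^2 ≤ 2 * C := by
    intro s hs
    have h1 := hEb s hs
    have h2 := Real.add_one_le_exp (x s)
    simp only [hE_def] at h1
    have h4 : 2 * a * 1 ≤ 2 * a * (Real.exp (x s) - x s) :=
      mul_le_mul_of_nonneg_left (by linarith) (by linarith)
    linarith only [h1, h4, ha, hC0]
  have hyb : ∀ s, 0 ≤ s → |y s| ≤ C + 1 := by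
    intro s hs
    have h1 := hysq s hs
    have h2 : (|y s| - 1)^2 ≥ 0 := sq_nonneg _
    have h3 : |y s|^2 = (y s)^2 := sq_abs _
    nlinarith [abs_nonneg (y s)]
  have hgb : ∀ s, 0 ≤ s → Real.exp (x s) - x s ≤ C := by
    intro s hs
    have h1 := hEb s hs
    have h2 := sq_nonneg (y s)
    have h3 := Real.add_one_le_exp (x s)
    simp only [hE_def] at h1
    have h4 : (1:ℝ) ≤ Real.exp (x s) - x s := by linarith
    have h5 : 2 * a * (Real.exp (x s) - x s) ≤ C := by linarith only [h1, h2]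
    nlinarith [mul_nonneg (by linarith : (0:ℝ) ≤ 2*a - 2) (by linarith : (0:ℝ) ≤ Real.exp (x s) - x s), h4, h5, hC0, ha]
  have hxb : ∀ s, 0 ≤ s → |x s| ≤ C := by
    intro s hs
    have h1 := hgb s hs
    have h2 : 0 < Real.exp (x s) := Real.exp_pos _
    have h3 : Real.exp 1 * x s ≤ Real.exp (x s) := by
      have := Real.add_one_le_exp (x s - 1)
      have he : Real.exp (x s - 1) = Real.exp (x s) / Real.exp 1 := Real.exp_sub _ _
      rw [he] at this
      have hepos : 0 < Real.exp 1 := Real.exp_pos 1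
      calc Real.exp 1 * x s = (x s - 1 + 1) * Real.exp 1 := by ring
        _ ≤ (Real.exp (x s) / Real.exp 1) * Real.exp 1 := by
            apply mul_le_mul_of_nonneg_right this hepos.le
        _ = Real.exp (x s) := by field_simp
    have he1 : (2:ℝ) ≤ Real.exp 1 := by
      have := Real.add_one_le_exp (1:ℝ); linarith
    rw [abs_le]
    constructor
    · nlinarith
    · nlinarith
  have hexb : ∀ s, 0 ≤ s → Real.exp (x s) ≤ Real.exp C := by
    intro s hs
    exact Real.exp_le_exp.mpr ((abs_le.mp (hxb s hs)).2)
  -- bound on deriv y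
  set M := a * (C + 1) + 2 * a * (Real.exp C + 1) with hM_def
  clear_value M
  have hM0 : 0 < M := by rw [hM_def]; positivity
  have hMb : ∀ s, 0 ≤ s → |(-(a * y s + 2 * a * (Real.exp (x s) - 1)))| ≤ M := by
    intro s hs
    have h1 := hyb s hs
    have h2 := hexb s hs
    have h3 : 0 < Real.exp (x s) := Real.exp_pos _
    rw [abs_neg]
    calc |a * y s + 2 * a * (Real.exp (x s) - 1)| ≤ |a * y s| + |2 * a * (Real.exp (x s) - 1)| := abs_add_le _ _
      _ = a * |y s| + 2 * a * |Real.exp (x s) - 1| := by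
          rw [abs_mul, abs_mul, abs_of_nonneg ha0.le, abs_of_nonneg (by linarith : (0:ℝ) ≤ 2*a)]
      _ ≤ M := by
          rw [hM_def]
          have h4 : |Real.exp (x s) - 1| ≤ Real.exp C + 1 := by
            rw [abs_le]; constructor <;> nlinarith [Real.exp_pos C]
          have := mul_le_mul_of_nonneg_left h1 ha0.le
          nlinarith
  -- Lipschitz property of y on [0, ∞)
  have hlip : ∀ t u : ℝ, 0 ≤ t → t ≤ u → |y u - y t| ≤ M * (u - t) := by
    intro t u ht htu
    have hconv : Convex ℝ (Ici (0:ℝ)) := convex_Ici 0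
    have h := hconv.norm_image_sub_le_of_norm_hasDerivWithin_le
      (f := y) (f' := fun s => -(a * y s + 2 * a * (Real.exp (x s) - 1))) (C := M)
      (fun s hs => (hyd s).hasDerivWithinAt) (fun s hs => hMb s hs) ht (le_trans ht htu)
    rw [Real.norm_eq_abs, Real.norm_eq_abs, abs_of_nonneg (by linarith : (0:ℝ) ≤ u - t)] at h
    exact h
  -- integral identity
  have hycont : Continuous y := hydiff.continuous
  have hint : ∀ t u : ℝ, (∫ s in t..u, a * (y s)^2) = E t - E u := by
    intro t u
    have h1 : (∫ s in t..u, -(a * (y s)^2)) = E u - E t := by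
      apply intervalIntegral.integral_eq_sub_of_hasDerivAt (fun s _ => hEd s)
      exact ((continuous_const.mul (hycont.pow 2)).neg).intervalIntegrable t u
    have h2 : (∫ s in t..u, -(a * (y s)^2)) = -(∫ s in t..u, a * (y s)^2) :=
      intervalIntegral.integral_neg
    linarith
  -- y tends to 0
  have hytend : Tendsto y atTop (nhds 0) := by
    by_contra hcon
    rw [Metric.tendsto_atTop] at hcon
    push_neg at hcon
    obtain ⟨ε, hε, hfreq⟩ := hcon
    set h := ε / (2 * M) with hh_def
    clear_value h
    have hh0 : 0 < h := by rw [hh_def]; positivity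
    have hdiff0 : Tendsto (fun t => E t - E (t + h)) atTop (nhds 0) := by
      have h2 : Tendsto (fun t => E (t + h)) atTop (nhds L) :=
        hEL.comp (tendsto_atTop_add_const_right atTop h tendsto_id)
      have := hEL.sub h2
      simpa using this
    have hev : ∀ᶠ t in atTop, E t - E (t + h) < a * (ε^2/4) * h := by
      apply hdiff0.eventually_lt_const
      positivity
    rw [eventually_atTop] at hev
    obtain ⟨T, hT⟩ := hev
    obtain ⟨t, ht, htb⟩ := hfreq (max T 0)
    have ht0 : (0:ℝ) ≤ t := le_trans (le_max_right T 0) ht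
    have htT : T ≤ t := le_trans (le_max_left T 0) ht
    rw [Real.dist_eq, sub_zero] at htb
    -- on [t, t+h], |y| ≥ ε/2
    have hlow : ∀ u ∈ Icc t (t + h), ε^2/4 ≤ (y u)^2 := by
      intro u hu
      have h1 : |y u - y t| ≤ M * (u - t) := hlip t u ht0 hu.1
      have h2 : M * (u - t) ≤ ε / 2 := by
        have hut : u - t ≤ h := by linarith [hu.2]
        have he : M * h = ε / 2 := by
          rw [hh_def]; field_simp
        calc M * (u - t) ≤ M * h := mul_le_mul_of_nonneg_left hut hM0.le
          _ = ε / 2 := he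
      have h4 : ε / 2 ≤ |y u| := by
        have h5 := abs_sub_abs_le_abs_sub (y t) (y u)
        rw [abs_sub_comm] at h5
        linarith only [htb, h5, h1, h2]
      calc ε^2/4 = (ε/2)^2 := by ring
        _ ≤ |y u|^2 := by apply sq_le_sq' <;> [linarith [abs_nonneg (y u)]; exact h4]
        _ = (y u)^2 := sq_abs _
    have hintlb : a * (ε^2/4) * h ≤ ∫ s in t..(t+h), a * (y s)^2 := by
      have h1 : (∫ _ in t..(t+h), a * (ε^2/4)) ≤ ∫ s in t..(t+h), a * (y s)^2 := by
        apply intervalIntegral.integral_mono_on (by linarith)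
          (intervalIntegrable_const) ((continuous_const.mul (hycont.pow 2)).intervalIntegrable t (t+h))
        intro s hs
        have := hlow s hs
        simp only [Pi.mul_apply, Pi.pow_apply]
        nlinarith
      rw [intervalIntegral.integral_const, smul_eq_mul] at h1
      calc a * (ε^2/4) * h = (t + h - t) * (a * (ε^2/4)) := by ring
        _ ≤ _ := h1
    rw [hint t (t+h)] at hintlb
    exact absurd (hT t htT) (not_lt.mpr (by linarith))
  -- the function exp∘x - x converges
  have hxcont : Continuous x := hxdiff.continuous
  have hgtend : Tendsto (fun s => Real.exp (x s) - x s) atTop (nhds (L / (2 * a))) := by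
    have hy2 : Tendsto (fun s => (y s) * (y s) / 2) atTop (nhds 0) := by
      have := (hytend.mul hytend).div_const 2
      simpa using this
    have h1 : Tendsto (fun s => (E s - (y s) * (y s) / 2) / (2 * a)) atTop
        (nhds ((L - 0) / (2 * a))) := (hEL.sub hy2).div_const (2 * a)
    rw [sub_zero] at h1
    apply h1.congr
    intro s
    rw [hE_def]
    field_simp
    ring
  -- x tends to 0
  have hxtend : Tendsto x atTop (nhds 0) := by
    by_contra hcon
    rw [Metric.tendsto_atTop] at hcon
    push_neg at hcon
    obtain ⟨ε, hε, hfreq⟩ := hcon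
    simp only [Real.dist_eq, sub_zero] at hfreq
    set m := min (Real.exp ε - ε - 1) (Real.exp (-ε) + ε - 1) with hm_def
    clear_value m
    have hm : 0 < m := by
      rw [hm_def]
      apply lt_min
      · have := Real.add_one_lt_exp (ne_of_gt hε); linarith
      · have := Real.add_one_lt_exp (neg_ne_zero.mpr hε.ne')
        linarith
    -- derivative of z ↦ exp z - z
    have hgd : ∀ z : ℝ, HasDerivAt (fun z => Real.exp z - z) (Real.exp z - 1) z :=
      fun z => (Real.hasDerivAt_exp z).sub (hasDerivAt_id z)
    have hgcont : Continuous (fun z : ℝ => Real.exp z - z) := Real.continuous_exp.sub continuous_id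
    have hmono : MonotoneOn (fun z => Real.exp z - z) (Ici 0) := by
      apply monotoneOn_of_deriv_nonneg (convex_Ici 0) hgcont.continuousOn
        (fun z _ => (hgd z).differentiableAt.differentiableWithinAt)
      intro z hz
      rw [interior_Ici] at hz
      rw [(hgd z).deriv]
      have : Real.exp 0 ≤ Real.exp z := Real.exp_le_exp.mpr (le_of_lt hz)
      rw [Real.exp_zero] at this
      linarith
    have hanti : AntitoneOn (fun z => Real.exp z - z) (Iic 0) := by
      apply antitoneOn_of_deriv_nonpos (convex_Iic 0) hgcont.continuousOn
        (fun z _ => (hgd z).differentiableAt.differentiableWithinAt)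
      intro z hz
      rw [interior_Iic] at hz
      rw [(hgd z).deriv]
      have : Real.exp z ≤ Real.exp 0 := Real.exp_le_exp.mpr (le_of_lt hz)
      rw [Real.exp_zero] at this
      linarith
    have glem : ∀ z : ℝ, ε ≤ |z| → 1 + m ≤ Real.exp z - z := by
      intro z hz
      rcases le_abs.mp hz with h | h
      · have h1 := hmono (mem_Ici.mpr hε.le) (mem_Ici.mpr (by linarith : (0:ℝ) ≤ z)) h
        have h2 : m ≤ Real.exp ε - ε - 1 := by rw [hm_def]; exact min_le_left _ _
        simp only at h1
        linarith
      · have h1 := hanti (mem_Iic.mpr (by linarith : z ≤ 0)) (mem_Iic.mpr (by linarith : -ε ≤ 0))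
          (by linarith : z ≤ -ε)
        have h2 : m ≤ Real.exp (-ε) + ε - 1 := by rw [hm_def]; exact min_le_right _ _
        simp only at h1
        linarith
    -- the limit L/(2a) is at least 1 + m
    have hc : 1 + m ≤ L / (2 * a) := by
      by_contra hc
      push_neg at hc
      have hev := hgtend.eventually_lt_const hc
      rw [eventually_atTop] at hev
      obtain ⟨T, hT⟩ := hev
      obtain ⟨n, hn, hnb⟩ := hfreq T
      exact absurd (hT n hn) (not_lt.mpr (glem (x n) hnb))
    have hev2 : ∀ᶠ s in atTop, 1 + m / 2 < Real.exp (x s) - x s :=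
      hgtend.eventually_const_lt (by linarith)
    -- continuity at 0 provides δ
    obtain ⟨δ, hδ0, hδ⟩ := Metric.continuousAt_iff.mp hgcont.continuousAt (m/2) (by positivity)
    rw [eventually_atTop] at hev2
    obtain ⟨T, hT⟩ := hev2
    have hsep : ∀ s, T ≤ s → δ ≤ |x s| := by
      intro s hs
      by_contra hlt
      push_neg at hlt
      have h1 := hδ (show dist (x s) (0:ℝ) < δ by rw [Real.dist_eq, sub_zero]; exact hlt)
      rw [Real.dist_eq] at h1
      simp only [Real.exp_zero, sub_zero] at h1
      rw [abs_lt] at h1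
      have h2 := hT s hs
      linarith [h1.1, h1.2]
    -- dichotomy on the sign of x on [T, ∞)
    rcases le_or_gt 0 (x T) with hsign | hsign
    · -- x s ≥ δ for all s ≥ T
      have hall : ∀ s, T ≤ s → δ ≤ x s := by
        intro s hs
        by_contra hlt
        push_neg at hlt
        have h1 : x s ≤ -δ := by
          have h2 := hsep s hs
          rcases abs_cases (x s) with ⟨h3, _⟩ | ⟨h3, _⟩ <;> linarith
        have hxT : δ ≤ x T := by
          have h2 := hsep T le_rfl
          rcases abs_cases (x T) with ⟨h3, _⟩ | ⟨h3, _⟩ <;> linarith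
        have h0mem : (0:ℝ) ∈ Icc (x s) (x T) := ⟨by linarith, by linarith⟩
        obtain ⟨u, hu, hu0⟩ := intermediate_value_Icc' hs (hxcont.continuousOn) h0mem
        have := hsep u hu.1
        rw [hu0] at this
        simp at this
        linarith
      -- now y must blow up
      set p := Real.exp δ - 1 with hp_def
      clear_value p
      have hp : 0 < p := by
        rw [hp_def]
        have : Real.exp 0 < Real.exp δ := Real.exp_lt_exp.mpr hδ0
        rw [Real.exp_zero] at this
        linarith
      obtain ⟨T', hT'⟩ := eventually_atTop.mp (hytend.eventually (eventually_abs_sub_lt 0 hp))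
      simp only [sub_zero] at hT'
      set T₂ := max T T' with hT₂_def
      clear_value T₂
      have hT₂T : T ≤ T₂ := hT₂_def ▸ le_max_left _ _
      have hyT : ∀ s, T₂ ≤ s → |y s| < p :=
        fun s hs => hT' s (le_trans (hT₂_def ▸ le_max_right T T') hs)
      have hderiv_bound : ∀ s, T₂ ≤ s → -(a * y s + 2 * a * (Real.exp (x s) - 1)) + a * p ≤ 0 := by
        intro s hs
        have h1 : δ ≤ x s := hall s (le_trans hT₂T hs)
        have h2 : Real.exp δ ≤ Real.exp (x s) := Real.exp_le_exp.mpr h1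
        have h3 : -p < y s := (abs_lt.mp (hyT s hs)).1
        have h4 : p ≤ Real.exp (x s) - 1 := by rw [hp_def]; linarith
        have h5 : a * -p < a * y s := mul_lt_mul_of_pos_left h3 ha0
        have h6 : a * p ≤ a * (Real.exp (x s) - 1) := mul_le_mul_of_nonneg_left h4 ha0.le
        linarith
      have hφd : ∀ s, HasDerivAt (fun s => y s + a * p * s)
          (-(a * y s + 2 * a * (Real.exp (x s) - 1)) + a * p) s := by
        intro s
        have h2 : HasDerivAt (fun s : ℝ => a * p * s) (a * p) s := by
          simpa using (hasDerivAt_id s).const_mul (a * p)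
        exact (hyd s).add h2
      have hφanti : AntitoneOn (fun s => y s + a * p * s) (Ici T₂) := by
        refine antitoneOn_of_deriv_nonpos (convex_Ici T₂)
          (fun s _ => ((hφd s).differentiableAt.continuousAt).continuousWithinAt)
          (fun s _ => (hφd s).differentiableAt.differentiableWithinAt) ?_
        intro s hs
        rw [interior_Ici] at hs
        rw [(hφd s).deriv]
        exact hderiv_bound s (le_of_lt hs)
      set s₀ := T₂ + (y T₂ + p + 1) / (a * p) with hs₀_def
      clear_value s₀
      have hap : 0 < a * p := by positivity
      have hnum : 0 < y T₂ + p + 1 := by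
        have := (abs_lt.mp (hyT T₂ le_rfl)).1
        linarith
      have hs₀T₂ : T₂ ≤ s₀ := by
        rw [hs₀_def]
        have : 0 < (y T₂ + p + 1) / (a * p) := div_pos hnum hap
        linarith
      have h1 := hφanti (mem_Ici.mpr le_rfl) (mem_Ici.mpr hs₀T₂) hs₀T₂
      simp only at h1
      have h2 : a * p * s₀ = a * p * T₂ + (y T₂ + p + 1) := by
        rw [hs₀_def]
        field_simp
      have h3 : y s₀ ≤ -p - 1 := by
        rw [h2] at h1
        linarith
      have h4 := (abs_lt.mp (hyT s₀ hs₀T₂)).1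
      linarith
    · -- x s ≤ -δ for all s ≥ T
      have hall : ∀ s, T ≤ s → x s ≤ -δ := by
        intro s hs
        by_contra hlt
        push_neg at hlt
        have h1 : δ ≤ x s := by
          have h2 := hsep s hs
          rcases abs_cases (x s) with ⟨h3, _⟩ | ⟨h3, _⟩ <;> linarith
        have hxT : x T ≤ -δ := by
          have h2 := hsep T le_rfl
          rcases abs_cases (x T) with ⟨h3, _⟩ | ⟨h3, _⟩ <;> linarith
        have h0mem : (0:ℝ) ∈ Icc (x T) (x s) := ⟨by linarith, by linarith⟩
        obtain ⟨u, hu, hu0⟩ := intermediate_value_Icc hs (hxcont.continuousOn) h0mem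
        have := hsep u hu.1
        rw [hu0] at this
        simp at this
        linarith
      set q := 1 - Real.exp (-δ) with hq_def
      clear_value q
      have hq : 0 < q := by
        rw [hq_def]
        have : Real.exp (-δ) < Real.exp 0 := Real.exp_lt_exp.mpr (by linarith)
        rw [Real.exp_zero] at this
        linarith
      obtain ⟨T', hT'⟩ := eventually_atTop.mp (hytend.eventually (eventually_abs_sub_lt 0 hq))
      simp only [sub_zero] at hT'
      set T₂ := max T T' with hT₂_def
      clear_value T₂
      have hT₂T : T ≤ T₂ := hT₂_def ▸ le_max_left _ _
      have hyT : ∀ s, T₂ ≤ s → |y s| < q :=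
        fun s hs => hT' s (le_trans (hT₂_def ▸ le_max_right T T') hs)
      have hderiv_bound : ∀ s, T₂ ≤ s → 0 ≤ -(a * y s + 2 * a * (Real.exp (x s) - 1)) - a * q := by
        intro s hs
        have h1 : x s ≤ -δ := hall s (le_trans hT₂T hs)
        have h2 : Real.exp (x s) ≤ Real.exp (-δ) := Real.exp_le_exp.mpr h1
        have h3 : y s < q := (abs_lt.mp (hyT s hs)).2
        have h4 : Real.exp (x s) - 1 ≤ -q := by rw [hq_def]; linarith
        have h5 : a * y s < a * q := mul_lt_mul_of_pos_left h3 ha0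
        have h6 : a * (Real.exp (x s) - 1) ≤ a * -q := mul_le_mul_of_nonneg_left h4 ha0.le
        linarith
      have hφd : ∀ s, HasDerivAt (fun s => y s - a * q * s)
          (-(a * y s + 2 * a * (Real.exp (x s) - 1)) - a * q) s := by
        intro s
        have h2 : HasDerivAt (fun s : ℝ => a * q * s) (a * q) s := by
          simpa using (hasDerivAt_id s).const_mul (a * q)
        exact (hyd s).sub h2
      have hφmono : MonotoneOn (fun s => y s - a * q * s) (Ici T₂) := by
        refine monotoneOn_of_deriv_nonneg (convex_Ici T₂)
          (fun s _ => ((hφd s).differentiableAt.continuousAt).continuousWithinAt)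
          (fun s _ => (hφd s).differentiableAt.differentiableWithinAt) ?_
        intro s hs
        rw [interior_Ici] at hs
        rw [(hφd s).deriv]
        exact hderiv_bound s (le_of_lt hs)
      set s₀ := T₂ + (q + 1 - y T₂) / (a * q) with hs₀_def
      clear_value s₀
      have haq : 0 < a * q := by positivity
      have hnum : 0 < q + 1 - y T₂ := by
        have := (abs_lt.mp (hyT T₂ le_rfl)).2
        linarith
      have hs₀T₂ : T₂ ≤ s₀ := by
        rw [hs₀_def]
        have : 0 < (q + 1 - y T₂) / (a * q) := div_pos hnum haq
        linarith
      have h1 := hφmono (mem_Ici.mpr le_rfl) (mem_Ici.mpr hs₀T₂) hs₀T₂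
      simp only at h1
      have h2 : a * q * s₀ = a * q * T₂ + (q + 1 - y T₂) := by
        rw [hs₀_def]
        field_simp
      have h3 : q + 1 ≤ y s₀ := by
        rw [h2] at h1
        linarith
      have h4 := (abs_lt.mp (hyT s₀ hs₀T₂)).2
      linarith
  exact ⟨hxtend, hytend⟩


theorem stmt_8 (N : ℕ) (hN : 4 ≤ N) (α κ : ℝ)
    (hκ : κ = Real.log (2 * ((N : ℝ) - 3)))
    (x : ℝ → ℝ) (hx2 : ContDiff ℝ 2 x)
    (hode : ∀ s : ℝ, deriv (deriv x) s + ((N : ℝ) - 3) * deriv x s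
        + 2 * ((N : ℝ) - 3) * (Real.exp (x s) - 1) = 0)
    (hlim1 : Tendsto (fun s => x s - 2 * s + κ - α) atBot (nhds 0))
    (hlim2 : Tendsto (fun s => Real.exp (-s) * (deriv x s - 2)) atBot (nhds 0)) :
    Tendsto x atTop (nhds 0) ∧ Tendsto (deriv x) atTop (nhds 0) := by
  have hN4 : (4:ℝ) ≤ (N:ℝ) := by exact_mod_cast hN
  exact stmt_8_aux ((N:ℝ) - 3) (by linarith) x hx2 hode
end

section
/- Let N be an integer with 4 ≤ N ≤ 10, ᾱ ∈ ℝ, and κ̄ := log(2(N−3)). Let x̄ ∈ C²(ℝ) be the unique entire solution of x̄'' + (N−3) x̄' + 2(N−3)(e^{x̄} − 1) = 0 with x̄(s) − 2s + κ̄ − ᾱ → 0 and e^{−s}(x̄'(s) − 2) → 0 as s → −∞, and set ȳ := x̄'. Then there exists a strictly increasing sequence s₁ < s₂ < ⋯ → ∞ such that ȳ(s_j) = 0 for every j ≥ 1 and x̄(s₂) < x̄(s₄) < ⋯ < x̄(s_{2j}) < ⋯ < 0 < ⋯ < x̄(s_{2j−1}) < ⋯ < x̄(s₃) < x̄(s₁).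 -/
open Real Filter

section SpiralProof
open Set

variable {b : ℝ} {x y : ℝ → ℝ}


/-- quadratic form bound -/
theorem formbound (b u v : ℝ) (hb1 : 1 ≤ b) (hb7 : b ≤ 7) (hu : |u| ≤ 1/16) :
    (1/64)*(u^2+v^2) ≤ b*u*v + 2*b*(u*(Real.exp u - 1)) + v^2 := by
  have he : |Real.exp u - 1 - u| ≤ u^2 := Real.abs_exp_sub_one_sub_id_le (by linarith [abs_nonneg u])
  have h1 : u*(Real.exp u - 1) ≥ u^2 - |u| * u^2 := by
    have h0 : |u * (Real.exp u - 1 - u)| ≤ |u| * u^2 := by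
      rw [abs_mul]
      exact mul_le_mul_of_nonneg_left he (abs_nonneg u)
    nlinarith [neg_abs_le (u * (Real.exp u - 1 - u))]
  have h2 : |u| * u^2 ≤ (1/16)*u^2 := by nlinarith [sq_nonneg u]
  have h3 : u*(Real.exp u - 1) ≥ (15/16)*u^2 := by linarith
  have h4 : 2*b*(u*(Real.exp u - 1)) ≥ 2*b*((15/16)*u^2) :=
    mul_le_mul_of_nonneg_left h3 (by linarith)
  nlinarith [sq_nonneg (63*v + 32*b*u), sq_nonneg u, sq_nonneg v,
    mul_nonneg (mul_nonneg (sub_nonneg.2 hb1) (sub_nonneg.2 hb7)) (sq_nonneg u)]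

/-- linear decay from derivative bound -/
theorem decayLemma (f F : ℝ → ℝ) (a b δ : ℝ) (hab : a ≤ b)
    (hF : ∀ u ∈ Set.Icc a b, HasDerivAt f (F u) u)
    (hFb : ∀ u ∈ Set.Icc a b, F u ≤ -δ) : f b + δ * (b - a) ≤ f a := by
  have key : ∀ u ∈ Set.Icc a b, HasDerivAt (fun v => f v + δ * v) (F u + δ) u := by
    intro u hu
    exact ((hF u hu).add ((hasDerivAt_id u).const_mul δ)).congr_deriv (by simp)
  have h : AntitoneOn (fun u => f u + δ * u) (Set.Icc a b) := by
    apply antitoneOn_of_deriv_nonpos (convex_Icc a b)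
    · exact ContinuousOn.add (fun u hu => ((hF u hu).continuousAt).continuousWithinAt)
        (by fun_prop)
    · intro u hu
      rw [interior_Icc] at hu
      exact ((key u (Set.mem_Icc_of_Ioo hu)).differentiableAt).differentiableWithinAt
    · intro u hu
      rw [interior_Icc] at hu
      have hu' : u ∈ Set.Icc a b := Set.mem_Icc_of_Ioo hu
      rw [(key u hu').deriv]
      linarith [hFb u hu']
  have := h (Set.left_mem_Icc.2 hab) (Set.right_mem_Icc.2 hab) hab
  simp only at this
  linarith

/-- lower bound for e^u - u - 1 near zero -/
theorem glb (u : ℝ) (hu : |u| ≤ 1) : u^2/4 ≤ Real.exp u - u - 1 := by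
  have h := Real.exp_bound hu (n := 3) (by norm_num)
  have hs : (∑ i ∈ Finset.range 3, u ^ i / (Nat.factorial i)) = 1 + u + u^2/2 := by
    simp [Finset.sum_range_succ, Nat.factorial]
    try ring
  rw [hs] at h
  norm_num [Nat.factorial] at h
  have h3 : |u|^3 = u^2 * |u| := by rw [pow_succ, sq_abs]
  have h4 : u^2 * |u| ≤ u^2 := by nlinarith [abs_nonneg u, sq_nonneg u]
  have := abs_le.1 h
  nlinarith [sq_nonneg u]

/-- away from zero, e^u - u - 1 is bounded below -/
theorem glb2 (ε : ℝ) (hε : 0 < ε) (hε1 : ε ≤ 1) (u : ℝ) (hu : ε ≤ |u|) :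
    ε^2/16 ≤ Real.exp u - u - 1 := by
  rcases le_or_gt (|u|) 1 with h1 | h1
  · have h2 : ε^2 ≤ u^2 := by
      have := sq_abs u
      nlinarith [abs_nonneg u]
    nlinarith [glb u h1]
  · -- |u| > 1
    have hb : (1:ℝ)/4 ≤ Real.exp u - u - 1 := by
      rcases le_or_gt u 0 with hneg | hpos
      · -- u ≤ -1
        have hu1 : u ≤ -1 := by
          rcases abs_cases u with ⟨h, _⟩ | ⟨h, _⟩ <;> linarith
        rcases le_or_gt u (-5/4) with h2 | h2
        · have : (0:ℝ) < Real.exp u := Real.exp_pos u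
          linarith
        · have hmon : Real.exp (-(5/4) : ℝ) ≤ Real.exp u := Real.exp_le_exp.2 (by linarith)
          have h5 : Real.exp (5/4 : ℝ) ≤ 4 := by
            have h6 : Real.exp (5/4 : ℝ) = Real.exp 1 * Real.exp (1/4 : ℝ) := by
              rw [← Real.exp_add]; norm_num
            have h7 : Real.exp (1/4 : ℝ) < 1 / (1 - 1/4) :=
              Real.exp_bound_div_one_sub_of_interval' (by norm_num) (by norm_num)
            have h8 : Real.exp 1 < 2.7182818286 := Real.exp_one_lt_d9
            rw [h6]
            nlinarith [Real.exp_pos (1:ℝ), Real.exp_pos (1/4:ℝ)]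
          have h9 : (1:ℝ)/4 ≤ Real.exp (-(5/4) : ℝ) := by
            rw [Real.exp_neg]
            have hp : (0:ℝ) < Real.exp (5/4 : ℝ) := Real.exp_pos _
            nlinarith [mul_inv_cancel₀ (ne_of_gt hp), inv_pos.2 hp]
          linarith
      · -- u > 1
        have hu1 : 1 ≤ u := by
          rcases abs_cases u with ⟨h, _⟩ | ⟨h, _⟩ <;> linarith
        have he : Real.exp 1 * u ≤ Real.exp u := by
          have := Real.add_one_le_exp (u - 1)
          have h2 : Real.exp u = Real.exp 1 * Real.exp (u - 1) := by
            rw [← Real.exp_add]; ring_nf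
          nlinarith [Real.exp_pos (1:ℝ), Real.exp_one_gt_d9]
        nlinarith [Real.exp_one_gt_d9]
    nlinarith

noncomputable def Vfun (b : ℝ) (x y : ℝ → ℝ) (s : ℝ) : ℝ :=
  (y s)^2/2 + 2*b*(Real.exp (x s) - x s - 1)


theorem Vderiv (hx' : ∀ s, HasDerivAt x (y s) s)
    (hy' : ∀ s, HasDerivAt y (-(b * y s) - 2*b*(Real.exp (x s) - 1)) s) (s : ℝ) :
    HasDerivAt (Vfun b x y) (-(b * (y s)^2)) s := by
  have d1 : HasDerivAt (fun u => (y u)^2/2) ((2 * y s ^ 1 * (-(b * y s) - 2*b*(Real.exp (x s) - 1)))/2) s :=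
    ((hy' s).pow 2).div_const 2
  have d2 : HasDerivAt (fun u => 2*b*(Real.exp (x u) - x u - 1))
      (2*b*(Real.exp (x s) * y s - y s)) s :=
    ((((hx' s).exp).sub (hx' s)).sub_const 1).const_mul (2*b)
  have : HasDerivAt (fun u => (y u)^2/2 + 2*b*(Real.exp (x u) - x u - 1)) _ s := d1.add d2
  convert this using 1
  · rfl
  · ring

theorem arctanDerivA (hx' : ∀ s, HasDerivAt x (y s) s)
    (hy' : ∀ s, HasDerivAt y (-(b * y s) - 2*b*(Real.exp (x s) - 1)) s)
    (s : ℝ) (hxs : x s ≠ 0) :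
    HasDerivAt (fun u => Real.arctan (y u / x u))
      (-(b*(x s)*(y s) + 2*b*((x s)*(Real.exp (x s) - 1)) + (y s)^2) / ((x s)^2 + (y s)^2)) s := by
  have hq : HasDerivAt (fun u => y u / x u)
      (((-(b * y s) - 2*b*(Real.exp (x s) - 1)) * x s - y s * y s) / (x s)^2) s :=
    (hy' s).div (hx' s) hxs
  have h2 := hq.arctan
  convert h2 using 1
  have hd : (x s)^2 + (y s)^2 > 0 := by positivity
  field_simp
  ring

theorem arctanDerivB (hx' : ∀ s, HasDerivAt x (y s) s)
    (hy' : ∀ s, HasDerivAt y (-(b * y s) - 2*b*(Real.exp (x s) - 1)) s)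
    (s : ℝ) (hys : y s ≠ 0) :
    HasDerivAt (fun u => Real.arctan (x u / y u))
      ((b*(x s)*(y s) + 2*b*((x s)*(Real.exp (x s) - 1)) + (y s)^2) / ((x s)^2 + (y s)^2)) s := by
  have hq : HasDerivAt (fun u => x u / y u)
      ((y s * y s - x s * (-(b * y s) - 2*b*(Real.exp (x s) - 1))) / (y s)^2) s :=
    (hx' s).div (hy' s) hys
  have h2 := hq.arctan
  convert h2 using 1
  have hd : (x s)^2 + (y s)^2 > 0 := by positivity
  field_simp
  ring



theorem exitX (hb1 : 1 ≤ b) (hb7 : b ≤ 7)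
    (hx' : ∀ s, HasDerivAt x (y s) s)
    (hy' : ∀ s, HasDerivAt y (-(b * y s) - 2*b*(Real.exp (x s) - 1)) s)
    {T t₀ : ℝ} (hT : ∀ s, T ≤ s → |x s| ≤ 1/16) (ht₀ : T ≤ t₀) (hx0 : x t₀ ≠ 0) :
    ∃ t₁, t₀ < t₁ ∧ x t₁ = 0 ∧ ∀ u ∈ Set.Ico t₀ t₁, x u ≠ 0 := by
  have hxc : Continuous x := continuous_iff_continuousAt.2 fun s => (hx' s).continuousAt
  set S : Set ℝ := {s : ℝ | t₀ ≤ s ∧ x s = 0} with hS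
  have hSclosed : IsClosed S := by
    have : S = Set.Ici t₀ ∩ x ⁻¹' {0} := by
      ext s; simp [hS, Set.mem_Ici, and_comm]
    rw [this]
    exact isClosed_Ici.inter (isClosed_singleton.preimage hxc)
  have hSne : S.Nonempty := by
    by_contra hSe
    rw [Set.not_nonempty_iff_eq_empty] at hSe
    have hnz : ∀ s, t₀ ≤ s → x s ≠ 0 := by
      intro s hs hxz
      have : s ∈ S := ⟨hs, hxz⟩
      rw [hSe] at this; exact this
    set W : ℝ := t₀ + 64*(2*π) with hW
    have hπ := Real.pi_pos
    have hWt : t₀ ≤ W := by nlinarith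
    have hdec := decayLemma (fun u => Real.arctan (y u / x u))
      (fun u => (-(b*(x u)*(y u) + 2*b*((x u)*(Real.exp (x u) - 1)) + (y u)^2) / ((x u)^2 + (y u)^2)))
      t₀ W (1/64) hWt
      (fun u hu => arctanDerivA hx' hy' u (hnz u hu.1))
      (fun u hu => by
        have hxu : x u ≠ 0 := hnz u hu.1
        have hr : (0:ℝ) < (x u)^2 + (y u)^2 := by positivity
        have hfb := formbound b (x u) (y u) hb1 hb7 (hT u (le_trans ht₀ hu.1))
        show -(b * x u * y u + 2 * b * (x u * (Real.exp (x u) - 1)) + y u ^ 2) / (x u ^ 2 + y u ^ 2) ≤ -(1/64)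
        rw [neg_div, neg_le_neg_iff]
        exact (le_div_iff₀ hr).2 (by linarith))
    have h1 : -(π/2) < Real.arctan (y W / x W) := Real.neg_pi_div_two_lt_arctan _
    have h2 : Real.arctan (y t₀ / x t₀) < π/2 := Real.arctan_lt_pi_div_two _
    have : (1:ℝ)/64 * (W - t₀) = 2*π := by rw [hW]; ring
    nlinarith
  have hbdd : BddBelow S := ⟨t₀, fun s hs => hs.1⟩
  have hmem := hSclosed.csInf_mem hSne hbdd
  set t₁ := sInf S
  refine ⟨t₁, ?_, hmem.2, ?_⟩
  · rcases lt_or_eq_of_le hmem.1 with h | h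
    · exact h
    · exact absurd (h ▸ hmem.2) hx0
  · intro u hu hxz
    have : t₁ ≤ u := csInf_le hbdd ⟨hu.1, hxz⟩
    exact absurd hu.2 (not_lt.2 this)

theorem exitY (hb1 : 1 ≤ b) (hb7 : b ≤ 7)
    (hx' : ∀ s, HasDerivAt x (y s) s)
    (hy' : ∀ s, HasDerivAt y (-(b * y s) - 2*b*(Real.exp (x s) - 1)) s)
    {T t₀ : ℝ} (hT : ∀ s, T ≤ s → |x s| ≤ 1/16) (ht₀ : T ≤ t₀) (hy0 : y t₀ ≠ 0) :
    ∃ t₁, t₀ < t₁ ∧ y t₁ = 0 ∧ ∀ u ∈ Set.Ico t₀ t₁, y u ≠ 0 := by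
  have hyc : Continuous y := continuous_iff_continuousAt.2 fun s => (hy' s).continuousAt
  set S : Set ℝ := {s : ℝ | t₀ ≤ s ∧ y s = 0} with hS
  have hSclosed : IsClosed S := by
    have : S = Set.Ici t₀ ∩ y ⁻¹' {0} := by
      ext s; simp [hS, Set.mem_Ici, and_comm]
    rw [this]
    exact isClosed_Ici.inter (isClosed_singleton.preimage hyc)
  have hSne : S.Nonempty := by
    by_contra hSe
    rw [Set.not_nonempty_iff_eq_empty] at hSe
    have hnz : ∀ s, t₀ ≤ s → y s ≠ 0 := by
      intro s hs hyz
      have : s ∈ S := ⟨hs, hyz⟩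
      rw [hSe] at this; exact this
    set W : ℝ := t₀ + 64*(2*π) with hW
    have hπ := Real.pi_pos
    have hWt : t₀ ≤ W := by nlinarith
    have hdec := decayLemma (fun u => -Real.arctan (x u / y u))
      (fun u => (-(b*(x u)*(y u) + 2*b*((x u)*(Real.exp (x u) - 1)) + (y u)^2) / ((x u)^2 + (y u)^2)))
      t₀ W (1/64) hWt
      (fun u hu => by
        have := (arctanDerivB hx' hy' u (hnz u hu.1)).neg
        rw [← neg_div] at this
        exact this)
      (fun u hu => by
        have hyu : y u ≠ 0 := hnz u hu.1
        have hr : (0:ℝ) < (x u)^2 + (y u)^2 := by positivity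
        have hfb := formbound b (x u) (y u) hb1 hb7 (hT u (le_trans ht₀ hu.1))
        show -(b * x u * y u + 2 * b * (x u * (Real.exp (x u) - 1)) + y u ^ 2) / (x u ^ 2 + y u ^ 2) ≤ -(1/64)
        rw [neg_div, neg_le_neg_iff]
        exact (le_div_iff₀ hr).2 (by linarith))
    have h1 : Real.arctan (x W / y W) < π/2 := Real.arctan_lt_pi_div_two _
    have h2 : -(π/2) < Real.arctan (x t₀ / y t₀) := Real.neg_pi_div_two_lt_arctan _
    have : (1:ℝ)/64 * (W - t₀) = 2*π := by rw [hW]; ring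
    nlinarith
  have hbdd : BddBelow S := ⟨t₀, fun s hs => hs.1⟩
  have hmem := hSclosed.csInf_mem hSne hbdd
  set t₁ := sInf S
  refine ⟨t₁, ?_, hmem.2, ?_⟩
  · rcases lt_or_eq_of_le hmem.1 with h | h
    · exact h
    · exact absurd (h ▸ hmem.2) hy0
  · intro u hu hyz
    have : t₁ ≤ u := csInf_le hbdd ⟨hu.1, hyz⟩
    exact absurd hu.2 (not_lt.2 this)



/-- sign constancy from no-zeros, by IVT -/
theorem signconst {f : ℝ → ℝ} (hf : Continuous f) {a c : ℝ} (hac : a ≤ c)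
    (hne : ∀ u ∈ Set.Ico a c, f u ≠ 0) (hpos : 0 < f a) :
    ∀ u ∈ Set.Ico a c, 0 < f u := by
  intro u hu
  rcases (hne u hu).lt_or_gt with h | h
  · exfalso
    have hmem : (0:ℝ) ∈ Set.Icc (f u) (f a) := ⟨h.le, hpos.le⟩
    obtain ⟨c', hc', hfc'⟩ := intermediate_value_Icc' hu.1 (hf.continuousOn) hmem
    exact hne c' ⟨hc'.1, lt_of_le_of_lt hc'.2 hu.2⟩ hfc'
  · exact h

theorem signconst' {f : ℝ → ℝ} (hf : Continuous f) {a c : ℝ} (hac : a ≤ c)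
    (hne : ∀ u ∈ Set.Ico a c, f u ≠ 0) (hneg : f a < 0) :
    ∀ u ∈ Set.Ico a c, f u < 0 := by
  intro u hu
  rcases (hne u hu).lt_or_gt with h | h
  · exact h
  · exfalso
    have hmem : (0:ℝ) ∈ Set.Icc (f a) (f u) := ⟨hneg.le, h.le⟩
    obtain ⟨c', hc', hfc'⟩ := intermediate_value_Icc hu.1 (hf.continuousOn) hmem
    exact hne c' ⟨hc'.1, lt_of_le_of_lt hc'.2 hu.2⟩ hfc'

theorem stepA (hb1 : 1 ≤ b) (hb7 : b ≤ 7)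
    (hx' : ∀ s, HasDerivAt x (y s) s)
    (hy' : ∀ s, HasDerivAt y (-(b * y s) - 2*b*(Real.exp (x s) - 1)) s)
    {T t₀ : ℝ} (hT : ∀ s, T ≤ s → |x s| ≤ 1/16) (ht₀ : T ≤ t₀)
    (hy0 : y t₀ = 0) (hx0 : 0 < x t₀) :
    ∃ t₂, t₀ < t₂ ∧ y t₂ = 0 ∧ x t₂ < 0 ∧ ∀ u ∈ Set.Ioo t₀ t₂, y u < 0 := by
  have hxc : Continuous x := continuous_iff_continuousAt.2 fun s => (hx' s).continuousAt
  have hyc : Continuous y := continuous_iff_continuousAt.2 fun s => (hy' s).continuousAt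
  obtain ⟨t₁, ht₁, hx1, hxne⟩ := exitX hb1 hb7 hx' hy' hT ht₀ (ne_of_gt hx0)
  have hxpos : ∀ u ∈ Set.Ico t₀ t₁, 0 < x u := signconst hxc ht₁.le hxne hx0
  -- z = e^{bs} y strictly decreasing on [t₀, t₁]
  have hz : StrictAntiOn (fun u => Real.exp (b*u) * y u) (Set.Icc t₀ t₁) := by
    apply strictAntiOn_of_deriv_neg (convex_Icc _ _) (by fun_prop)
    intro u hu
    rw [interior_Icc] at hu
    have hbu : HasDerivAt (fun v => b*v) b u := by simpa using (hasDerivAt_id u).const_mul b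
    have hD : HasDerivAt (fun v => Real.exp (b*v) * y v)
        (Real.exp (b*u) * b * y u + Real.exp (b*u) * (-(b * y u) - 2*b*(Real.exp (x u) - 1))) u :=
      (hbu.exp).mul (hy' u)
    rw [hD.deriv]
    have hxu : 0 < x u := hxpos u ⟨hu.1.le, hu.2⟩
    have hex : 1 < Real.exp (x u) := by
      rw [← Real.exp_zero]; exact Real.exp_lt_exp.2 hxu
    have hep : 0 < Real.exp (b*u) := Real.exp_pos _
    have heq : Real.exp (b*u) * b * y u + Real.exp (b*u) * (-(b * y u) - 2*b*(Real.exp (x u) - 1))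
        = -(Real.exp (b*u) * (2*b*(Real.exp (x u) - 1))) := by ring
    rw [heq]
    exact neg_lt_zero.2 (mul_pos hep (mul_pos (by linarith) (by linarith)))
  have hyneg : ∀ u ∈ Set.Ioc t₀ t₁, y u < 0 := by
    intro u hu
    have h := hz (Set.left_mem_Icc.2 ht₁.le) ⟨hu.1.le, hu.2⟩ hu.1
    simp only [hy0, mul_zero] at h
    nlinarith [Real.exp_pos (b*u)]
  have hy1 : y t₁ < 0 := hyneg t₁ ⟨ht₁, le_rfl⟩
  obtain ⟨t₂, ht₂, hy2, hyne⟩ := exitY hb1 hb7 hx' hy' hT (le_trans ht₀ ht₁.le) (ne_of_lt hy1)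
  have hynegs : ∀ u ∈ Set.Ico t₁ t₂, y u < 0 := signconst' hyc ht₂.le hyne hy1
  have hxdec : StrictAntiOn x (Set.Icc t₁ t₂) := by
    apply strictAntiOn_of_deriv_neg (convex_Icc _ _) (hxc.continuousOn)
    intro u hu
    rw [interior_Icc] at hu
    rw [(hx' u).deriv]
    exact hynegs u ⟨hu.1.le, hu.2⟩
  have hx2 : x t₂ < 0 := by
    have := hxdec (Set.left_mem_Icc.2 ht₂.le) (Set.right_mem_Icc.2 ht₂.le) ht₂
    rwa [hx1] at this
  refine ⟨t₂, lt_trans ht₁ ht₂, hy2, hx2, ?_⟩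
  intro u hu
  rcases le_or_gt u t₁ with h | h
  · exact hyneg u ⟨hu.1, h⟩
  · exact hynegs u ⟨h.le, hu.2⟩

theorem stepB (hb1 : 1 ≤ b) (hb7 : b ≤ 7)
    (hx' : ∀ s, HasDerivAt x (y s) s)
    (hy' : ∀ s, HasDerivAt y (-(b * y s) - 2*b*(Real.exp (x s) - 1)) s)
    {T t₀ : ℝ} (hT : ∀ s, T ≤ s → |x s| ≤ 1/16) (ht₀ : T ≤ t₀)
    (hy0 : y t₀ = 0) (hx0 : x t₀ < 0) :
    ∃ t₂, t₀ < t₂ ∧ y t₂ = 0 ∧ 0 < x t₂ ∧ ∀ u ∈ Set.Ioo t₀ t₂, 0 < y u := by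
  have hxc : Continuous x := continuous_iff_continuousAt.2 fun s => (hx' s).continuousAt
  have hyc : Continuous y := continuous_iff_continuousAt.2 fun s => (hy' s).continuousAt
  obtain ⟨t₁, ht₁, hx1, hxne⟩ := exitX hb1 hb7 hx' hy' hT ht₀ (ne_of_lt hx0)
  have hxneg : ∀ u ∈ Set.Ico t₀ t₁, x u < 0 := signconst' hxc ht₁.le hxne hx0
  have hz : StrictMonoOn (fun u => Real.exp (b*u) * y u) (Set.Icc t₀ t₁) := by
    apply strictMonoOn_of_deriv_pos (convex_Icc _ _) (by fun_prop)
    intro u hu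
    rw [interior_Icc] at hu
    have hbu : HasDerivAt (fun v => b*v) b u := by simpa using (hasDerivAt_id u).const_mul b
    have hD : HasDerivAt (fun v => Real.exp (b*v) * y v)
        (Real.exp (b*u) * b * y u + Real.exp (b*u) * (-(b * y u) - 2*b*(Real.exp (x u) - 1))) u :=
      (hbu.exp).mul (hy' u)
    rw [hD.deriv]
    have hxu : x u < 0 := hxneg u ⟨hu.1.le, hu.2⟩
    have hex : Real.exp (x u) < 1 := by
      rw [← Real.exp_zero]; exact Real.exp_lt_exp.2 hxu
    have hep : 0 < Real.exp (b*u) := Real.exp_pos _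
    have heq : Real.exp (b*u) * b * y u + Real.exp (b*u) * (-(b * y u) - 2*b*(Real.exp (x u) - 1))
        = Real.exp (b*u) * (2*b*(1 - Real.exp (x u))) := by ring
    rw [heq]
    exact mul_pos hep (mul_pos (by linarith) (by linarith))
  have hypos : ∀ u ∈ Set.Ioc t₀ t₁, 0 < y u := by
    intro u hu
    have h := hz (Set.left_mem_Icc.2 ht₁.le) ⟨hu.1.le, hu.2⟩ hu.1
    simp only [hy0, mul_zero] at h
    nlinarith [Real.exp_pos (b*u)]
  have hy1 : 0 < y t₁ := hypos t₁ ⟨ht₁, le_rfl⟩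
  obtain ⟨t₂, ht₂, hy2, hyne⟩ := exitY hb1 hb7 hx' hy' hT (le_trans ht₀ ht₁.le) (ne_of_gt hy1)
  have hyposs : ∀ u ∈ Set.Ico t₁ t₂, 0 < y u := signconst hyc ht₂.le hyne hy1
  have hxinc : StrictMonoOn x (Set.Icc t₁ t₂) := by
    apply strictMonoOn_of_deriv_pos (convex_Icc _ _) (hxc.continuousOn)
    intro u hu
    rw [interior_Icc] at hu
    rw [(hx' u).deriv]
    exact hyposs u ⟨hu.1.le, hu.2⟩
  have hx2 : 0 < x t₂ := by
    have := hxinc (Set.left_mem_Icc.2 ht₂.le) (Set.right_mem_Icc.2 ht₂.le) ht₂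
    rwa [hx1] at this
  refine ⟨t₂, lt_trans ht₁ ht₂, hy2, hx2, ?_⟩
  intro u hu
  rcases le_or_gt u t₁ with h | h
  · exact hypos u ⟨hu.1, h⟩
  · exact hyposs u ⟨h.le, hu.2⟩


theorem expLinear (u : ℝ) (hu : 1 ≤ u) : Real.exp 1 * u ≤ Real.exp u := by
  have := Real.add_one_le_exp (u - 1)
  have h2 : Real.exp u = Real.exp 1 * Real.exp (u - 1) := by
    rw [← Real.exp_add]; ring_nf
  nlinarith [Real.exp_pos (1:ℝ), Real.exp_one_gt_d9]


theorem Vnonneg (hb1 : 1 ≤ b) (s : ℝ) : 0 ≤ Vfun b x y s := by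
  have := Real.add_one_le_exp (x s)
  unfold Vfun
  nlinarith [sq_nonneg (y s)]

theorem Vanti (hb1 : 1 ≤ b) (hx' : ∀ s, HasDerivAt x (y s) s)
    (hy' : ∀ s, HasDerivAt y (-(b * y s) - 2*b*(Real.exp (x s) - 1)) s) :
    Antitone (Vfun b x y) := by
  apply antitone_of_deriv_nonpos
  · exact fun s => (Vderiv hx' hy' s).differentiableAt
  · intro s
    rw [(Vderiv hx' hy' s).deriv]
    nlinarith [sq_nonneg (y s)]

theorem ytends (hb1 : 1 ≤ b) (hb7 : b ≤ 7)
    (hx' : ∀ s, HasDerivAt x (y s) s)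
    (hy' : ∀ s, HasDerivAt y (-(b * y s) - 2*b*(Real.exp (x s) - 1)) s) :
    Tendsto y atTop (nhds 0) := by
  set V : ℝ → ℝ := Vfun b x y with hV
  set C : ℝ := V 0 with hC
  have hVanti : Antitone V := Vanti hb1 hx' hy'
  have hVnn : ∀ s, 0 ≤ V s := Vnonneg hb1
  have hCnn : 0 ≤ C := hVnn 0
  have hgnn : ∀ s : ℝ, 0 ≤ Real.exp (x s) - x s - 1 := by
    intro s; have := Real.add_one_le_exp (x s); linarith
  have hVle : ∀ s, 0 ≤ s → V s ≤ C := fun s hs => hVanti hs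
  have hyb : ∀ s, 0 ≤ s → (y s)^2 ≤ 2*C := by
    intro s hs
    have h1 := hVle s hs
    have h2 := hgnn s
    have : V s = (y s)^2/2 + 2*b*(Real.exp (x s) - x s - 1) := rfl
    nlinarith
  have hyabs : ∀ s, 0 ≤ s → |y s| ≤ Real.sqrt (2*C) := by
    intro s hs
    rw [← Real.sqrt_sq_eq_abs]
    exact Real.sqrt_le_sqrt (hyb s hs)
  have hgb : ∀ s, 0 ≤ s → Real.exp (x s) - x s - 1 ≤ C/2 := by
    intro s hs
    have h1 := hVle s hs
    have h2 := hgnn s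
    have : V s = (y s)^2/2 + 2*b*(Real.exp (x s) - x s - 1) := rfl
    nlinarith [sq_nonneg (y s)]
  have hxub : ∀ s, 0 ≤ s → x s ≤ C + 2 := by
    intro s hs
    rcases le_or_gt (x s) 1 with h | h
    · linarith
    · have he := expLinear (x s) h.le
      have hg := hgb s hs
      nlinarith [Real.exp_one_gt_d9]
  have heb : ∀ s, 0 ≤ s → |Real.exp (x s) - 1| ≤ 2*C + 4 := by
    intro s hs
    rw [abs_le]
    constructor
    · have := Real.exp_pos (x s); linarith
    · have := hgb s hs
      have := hxub s hs
      linarith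
  obtain ⟨M, hMpos, hyd⟩ : ∃ M : ℝ, 0 < M ∧
      ∀ s, 0 ≤ s → |(-(b * y s) - 2*b*(Real.exp (x s) - 1))| ≤ M := by
    refine ⟨7*Real.sqrt (2*C) + 14*(2*C+4), ?_, ?_⟩
    · have := Real.sqrt_nonneg (2*C)
      nlinarith
    intro s hs
    have h1 : |b * y s| ≤ 7 * Real.sqrt (2*C) := by
      rw [abs_mul, abs_of_nonneg (by linarith : (0:ℝ) ≤ b)]
      have := hyabs s hs
      have := abs_nonneg (y s)
      nlinarith [Real.sqrt_nonneg (2*C)]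
    have h2 : |2*b*(Real.exp (x s) - 1)| ≤ 14 * (2*C+4) := by
      rw [abs_mul, abs_of_nonneg (by linarith : (0:ℝ) ≤ 2*b)]
      have := heb s hs
      have := abs_nonneg (Real.exp (x s) - 1)
      nlinarith
    have heq : -(b * y s) - 2*b*(Real.exp (x s) - 1)
        = -((b * y s) + 2*b*(Real.exp (x s) - 1)) := by ring
    rw [heq, abs_neg]
    calc |b * y s + 2*b*(Real.exp (x s) - 1)|
        ≤ |b * y s| + |2*b*(Real.exp (x s) - 1)| := abs_add_le _ _
      _ ≤ 7*Real.sqrt (2*C) + 14*(2*C+4) := by linarith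
  -- Lipschitz bound for y on [0, ∞)
  have hlip : ∀ a t, 0 ≤ a → a ≤ t → |y t - y a| ≤ M * (t - a) := by
    intro a t ha hat
    have hmem : ∀ u ∈ Set.Icc a t, 0 ≤ u := fun u hu => le_trans ha hu.1
    have hup := decayLemma y (fun u => -(b * y u) - 2*b*(Real.exp (x u) - 1)) a t (-M) hat
      (fun u hu => hy' u)
      (fun u hu => by
        simp only [neg_neg]
        have := hyd u (hmem u hu); rw [abs_le] at this; linarith [this.2])
    have hdn := decayLemma (fun u => -(y u)) (fun u => -(-(b * y u) - 2*b*(Real.exp (x u) - 1)))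
      a t (-M) hat
      (fun u hu => (hy' u).neg)
      (fun u hu => by
        simp only [neg_neg]
        have := hyd u (hmem u hu); rw [abs_le] at this; linarith [this.1])
    rw [abs_le]
    constructor <;> nlinarith
  -- main contradiction
  by_contra hcon
  rw [Metric.tendsto_atTop] at hcon
  push_neg at hcon
  obtain ⟨ε, hε, hfreq⟩ := hcon
  obtain ⟨δ, hδpos, hδM⟩ : ∃ δ : ℝ, 0 < δ ∧ M * δ ≤ ε/2 := by
    refine ⟨ε/(2*M), by positivity, ?_⟩
    rw [mul_div_assoc', mul_comm, div_le_div_iff₀ (by positivity) (by norm_num)]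
    nlinarith
  obtain ⟨q, hqpos, hqe⟩ : ∃ q : ℝ, 0 < q ∧ q = b*(ε/2)^2*δ :=
    ⟨b*(ε/2)^2*δ, by positivity, rfl⟩
  -- key decay estimate
  have key : ∀ t, 0 ≤ t → ε ≤ |y t| → V (t + δ) ≤ V t - q := by
    intro t ht hyt
    have hlow : ∀ u ∈ Set.Icc t (t + δ), ε/2 ≤ |y u| := by
      intro u hu
      have h1 : |y u - y t| ≤ M * (u - t) := hlip t u ht hu.1
      have h2 : M * (u - t) ≤ M * δ := by
        apply mul_le_mul_of_nonneg_left _ hMpos.le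
        linarith [hu.2]
      have := abs_sub_abs_le_abs_sub (y t) (y u)
      rw [abs_sub_comm (y t) (y u)] at this
      linarith [hδM]
    have hdec := decayLemma V (fun u => -(b * (y u)^2)) t (t+δ) (b*(ε/2)^2)
      (by linarith)
      (fun u hu => Vderiv hx' hy' u)
      (fun u hu => by
        have h1 := hlow u hu
        have h2 : (ε/2)^2 ≤ (y u)^2 := by
          have := sq_abs (y u)
          nlinarith [abs_nonneg (y u)]
        nlinarith)
    rw [hqe]
    have : t + δ - t = δ := by ring
    rw [this] at hdec
    linarith
  -- construct escaping sequence
  have hfreq' : ∀ N : ℝ, ∃ n, N ≤ n ∧ ε ≤ |y n| := by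
    intro N
    obtain ⟨n, hn1, hn2⟩ := hfreq (max N 0)
    refine ⟨n, le_trans (le_max_left _ _) hn1, ?_⟩
    rwa [Real.dist_0_eq_abs] at hn2
  choose nxt hnxt1 hnxt2 using hfreq'
  set τ : ℕ → ℝ := fun k => Nat.rec (nxt 0) (fun _ prev => nxt (prev + δ)) k with hτ
  have hτ0 : (0:ℝ) ≤ τ 0 := hnxt1 0
  have hτstep : ∀ k, τ k + δ ≤ τ (k+1) := fun k => hnxt1 _
  have hτnn : ∀ k, 0 ≤ τ k := by
    intro k
    induction k with
    | zero => exact hτ0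
    | succ n ih => have := hτstep n; linarith
  have hτy : ∀ k, ε ≤ |y (τ k)| := by
    intro k
    cases k with
    | zero => exact hnxt2 0
    | succ n => exact hnxt2 _
  have hVdec : ∀ k : ℕ, V (τ k) ≤ V (τ 0) - k * q := by
    intro k
    induction k with
    | zero => simp
    | succ n ih =>
      have h1 := key (τ n) (hτnn n) (hτy n)
      have h2 : V (τ (n+1)) ≤ V (τ n + δ) := hVanti (hτstep n)
      push_cast
      nlinarith
  obtain ⟨k, hk⟩ := exists_nat_gt (V (τ 0) / q)
  have h1 := hVdec k
  have h2 := hVnn (τ k)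
  have h3 : V (τ 0) < k * q := by
    rw [div_lt_iff₀ hqpos] at hk
    linarith
  linarith


theorem xtends (hb1 : 1 ≤ b) (hb7 : b ≤ 7)
    (hx' : ∀ s, HasDerivAt x (y s) s)
    (hy' : ∀ s, HasDerivAt y (-(b * y s) - 2*b*(Real.exp (x s) - 1)) s) :
    Tendsto x atTop (nhds 0) := by
  have hxc : Continuous x := continuous_iff_continuousAt.2 fun s => (hx' s).continuousAt
  have hVnn := fun s => Vnonneg (x := x) (y := y) hb1 s
  have hVanti := Vanti hb1 hx' hy'
  have hy0 := ytends hb1 hb7 hx' hy'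
  have hgnn : ∀ s : ℝ, 0 ≤ Real.exp (x s) - x s - 1 := by
    intro s; have := Real.add_one_le_exp (x s); linarith
  obtain ⟨L, hLnn, hVlim⟩ : ∃ L, 0 ≤ L ∧ Tendsto (Vfun b x y) atTop (nhds L) := by
    refine ⟨⨅ s, Vfun b x y s, le_ciInf hVnn, tendsto_atTop_ciInf hVanti ⟨0, ?_⟩⟩
    rintro v ⟨s, rfl⟩
    exact hVnn s
  have hysq : Tendsto (fun s => (y s)^2/2) atTop (nhds 0) := by
    have := (hy0.mul hy0).div_const 2
    simpa [sq] using this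
  have hglim : Tendsto (fun s => 2*b*(Real.exp (x s) - x s - 1)) atTop (nhds L) := by
    have h := hVlim.sub hysq
    rw [sub_zero] at h
    convert h using 1
    funext s
    show 2*b*(Real.exp (x s) - x s - 1) = Vfun b x y s - (y s)^2/2
    unfold Vfun; ring
  have hL0 : L = 0 := by
    by_contra hL
    have hLpos : 0 < L := lt_of_le_of_ne hLnn (Ne.symm hL)
    obtain ⟨m, hm0, hm1, hmsq⟩ : ∃ m : ℝ, 0 < m ∧ m ≤ 1 ∧ m^2 ≤ L/28 := by
      refine ⟨min 1 (Real.sqrt (L/28)), lt_min one_pos (Real.sqrt_pos.2 (by linarith)),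
        min_le_left _ _, ?_⟩
      have h1 : min 1 (Real.sqrt (L/28)) ≤ Real.sqrt (L/28) := min_le_right _ _
      have h2 : 0 ≤ min 1 (Real.sqrt (L/28)) :=
        le_min zero_le_one (Real.sqrt_nonneg _)
      calc (min 1 (Real.sqrt (L/28)))^2 ≤ (Real.sqrt (L/28))^2 := by nlinarith
        _ = L/28 := Real.sq_sqrt (by linarith)
    have hev1 : ∀ᶠ s in atTop, L/2 < 2*b*(Real.exp (x s) - x s - 1) :=
      hglim.eventually_const_lt (by linarith)
    have hbig : ∀ᶠ s in atTop, m < |x s| := by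
      filter_upwards [hev1] with s hs
      by_contra h
      push_neg at h
      have habs : |Real.exp (x s) - 1 - x s| ≤ (x s)^2 :=
        Real.abs_exp_sub_one_sub_id_le (le_trans h hm1)
      have h2 : Real.exp (x s) - x s - 1 ≤ (x s)^2 := by
        have := (abs_le.1 habs).2; linarith
      have h3 : (x s)^2 ≤ m^2 := by nlinarith [sq_abs (x s), abs_nonneg (x s)]
      nlinarith [mul_nonneg (by linarith : (0:ℝ) ≤ 7 - b) (hgnn s)]
    obtain ⟨T₁, hT₁⟩ := eventually_atTop.1 hbig
    have hsplit : (∀ s, T₁ ≤ s → m < x s) ∨ (∀ s, T₁ ≤ s → x s < -m) := by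
      rcases abs_cases (x T₁) with ⟨he, _⟩ | ⟨he, _⟩
      · left
        intro s hs
        by_contra hc
        push_neg at hc
        have h2 : x s < -m := by
          rcases abs_cases (x s) with ⟨he2, _⟩ | ⟨he2, _⟩
          · have := hT₁ s hs; linarith
          · have := hT₁ s hs; linarith
        have hT1x : m < x T₁ := by have := hT₁ T₁ le_rfl; linarith
        have hmem : m ∈ Set.Icc (x s) (x T₁) := ⟨by linarith, by linarith⟩
        obtain ⟨u, hu, hxu⟩ := intermediate_value_Icc' hs hxc.continuousOn hmem
        have := hT₁ u hu.1
        rw [hxu, abs_of_pos hm0] at this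
        exact lt_irrefl m this
      · right
        intro s hs
        by_contra hc
        push_neg at hc
        have h2 : m < x s := by
          rcases abs_cases (x s) with ⟨he2, _⟩ | ⟨he2, _⟩
          · have := hT₁ s hs; linarith
          · have := hT₁ s hs; linarith
        have h3 : x T₁ < -m := by have := hT₁ T₁ le_rfl; linarith
        have hmem : m ∈ Set.Icc (x T₁) (x s) := ⟨by linarith, by linarith⟩
        obtain ⟨u, hu, hxu⟩ := intermediate_value_Icc hs hxc.continuousOn hmem
        have := hT₁ u hu.1
        rw [hxu, abs_of_pos hm0] at this
        exact lt_irrefl m this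
    rcases hsplit with hpos | hneg
    · -- x > m eventually: y' ≤ -k/2 eventually
      obtain ⟨k, hkpos, hkdef⟩ : ∃ k : ℝ, 0 < k ∧ k = 2*b*(Real.exp m - 1) := by
        refine ⟨2*b*(Real.exp m - 1), ?_, rfl⟩
        have : 1 < Real.exp m := by rw [← Real.exp_zero]; exact Real.exp_lt_exp.2 hm0
        nlinarith
      have hyev : ∀ᶠ s in atTop, |y s| < k/14 := by
        have h := hy0.abs
        rw [abs_zero] at h
        exact h.eventually_lt_const (by positivity)
      obtain ⟨T₂', hT₂'⟩ := eventually_atTop.1 hyev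
      obtain ⟨T₂, hyT, hxT⟩ : ∃ T₂, (∀ s, T₂ ≤ s → |y s| < k/14) ∧ (∀ s, T₂ ≤ s → m < x s) :=
        ⟨max T₂' T₁, fun s hs => hT₂' s (le_trans (le_max_left _ _) hs),
          fun s hs => hpos s (le_trans (le_max_right _ _) hs)⟩
      have hdec := decayLemma y (fun u => -(b * y u) - 2*b*(Real.exp (x u) - 1)) T₂ (T₂+1) (k/2)
        (by linarith)
        (fun u _ => hy' u)
        (fun u hu => by
          have h1 : m < x u := hxT u hu.1
          have h2 : |y u| < k/14 := hyT u hu.1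
          have h3 : Real.exp m < Real.exp (x u) := Real.exp_lt_exp.2 h1
          have h6 : -(b * y u) ≤ b * |y u| := by
            have := neg_abs_le (y u)
            nlinarith [abs_nonneg (y u)]
          have h7 : b * |y u| ≤ 7 * (k/14) := by
            nlinarith [abs_nonneg (y u)]
          have h8 : k ≤ 2*b*(Real.exp (x u) - 1) := by
            rw [hkdef]; nlinarith
          linarith)
      have heq : T₂ + 1 - T₂ = 1 := by ring
      rw [heq, mul_one] at hdec
      have ha := abs_le.1 (hyT T₂ le_rfl).le
      have hb := abs_le.1 (hyT (T₂+1) (by linarith)).le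
      linarith
    · -- x < -m eventually: y' ≥ k/2 eventually
      obtain ⟨k, hkpos, hkdef⟩ : ∃ k : ℝ, 0 < k ∧ k = 2*b*(1 - Real.exp (-m)) := by
        refine ⟨2*b*(1 - Real.exp (-m)), ?_, rfl⟩
        have : Real.exp (-m) < 1 := by
          rw [← Real.exp_zero]; exact Real.exp_lt_exp.2 (by linarith)
        nlinarith
      have hyev : ∀ᶠ s in atTop, |y s| < k/14 := by
        have h := hy0.abs
        rw [abs_zero] at h
        exact h.eventually_lt_const (by positivity)
      obtain ⟨T₂', hT₂'⟩ := eventually_atTop.1 hyev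
      obtain ⟨T₂, hyT, hxT⟩ : ∃ T₂, (∀ s, T₂ ≤ s → |y s| < k/14) ∧ (∀ s, T₂ ≤ s → x s < -m) :=
        ⟨max T₂' T₁, fun s hs => hT₂' s (le_trans (le_max_left _ _) hs),
          fun s hs => hneg s (le_trans (le_max_right _ _) hs)⟩
      have hdec := decayLemma (fun u => -(y u))
        (fun u => -(-(b * y u) - 2*b*(Real.exp (x u) - 1))) T₂ (T₂+1) (k/2)
        (by linarith)
        (fun u _ => (hy' u).neg)
        (fun u hu => by
          have h1 : x u < -m := hxT u hu.1
          have h2 : |y u| < k/14 := hyT u hu.1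
          have h3 : Real.exp (x u) < Real.exp (-m) := Real.exp_lt_exp.2 h1
          have h6 : b * y u ≤ b * |y u| := by
            have := le_abs_self (y u)
            nlinarith [abs_nonneg (y u)]
          have h7 : b * |y u| ≤ 7 * (k/14) := by
            nlinarith [abs_nonneg (y u)]
          have h8 : k ≤ 2*b*(1 - Real.exp (x u)) := by
            rw [hkdef]; nlinarith
          linarith)
      have heq : T₂ + 1 - T₂ = 1 := by ring
      rw [heq, mul_one] at hdec
      have ha := abs_le.1 (hyT T₂ le_rfl).le
      have hb := abs_le.1 (hyT (T₂+1) (by linarith)).le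
      linarith
  rw [hL0] at hglim
  rw [Metric.tendsto_atTop]
  intro ε hε
  obtain ⟨ε', hε'pos, hε'1, hε'le⟩ : ∃ ε', 0 < ε' ∧ ε' ≤ 1 ∧ ε' ≤ ε :=
    ⟨min ε 1, lt_min hε one_pos, min_le_right _ _, min_le_left _ _⟩
  have hev := hglim.eventually_lt_const (show (0:ℝ) < 2*(ε'^2/16) by positivity)
  obtain ⟨N, hN⟩ := eventually_atTop.1 hev
  refine ⟨N, fun n hn => ?_⟩
  rw [Real.dist_0_eq_abs]
  by_contra h
  push_neg at h
  have h2 : ε' ≤ |x n| := le_trans hε'le h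
  have h3 := glb2 ε' hε'pos hε'1 (x n) h2
  have h4 := hN n hn
  nlinarith [hgnn n, mul_nonneg (by linarith : (0:ℝ) ≤ b - 1) (hgnn n)]


theorem expLip (R u v : ℝ) (hu : |u| ≤ R) (hv : |v| ≤ R) :
    |Real.exp u - Real.exp v| ≤ Real.exp R * |u - v| := by
  have h := Convex.norm_image_sub_le_of_norm_hasDerivWithin_le
    (f := Real.exp) (f' := Real.exp) (s := Set.Icc (-R) R) (C := Real.exp R)
    (fun z _ => (Real.hasDerivAt_exp z).hasDerivWithinAt)
    (fun z hz => by
      rw [Real.norm_eq_abs, abs_of_pos (Real.exp_pos z)]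
      exact Real.exp_le_exp.2 hz.2)
    (convex_Icc _ _) (abs_le.1 hv) (abs_le.1 hu)
  simpa [Real.norm_eq_abs] using h

theorem neverOrigin (hb1 : 1 ≤ b) (hb7 : b ≤ 7)
    (hx' : ∀ s, HasDerivAt x (y s) s)
    (hy' : ∀ s, HasDerivAt y (-(b * y s) - 2*b*(Real.exp (x s) - 1)) s)
    (hxbot : Tendsto x atBot atBot) (t₀ : ℝ) (hx0 : x t₀ = 0) (hy0 : y t₀ = 0) : False := by
  have hxc : Continuous x := continuous_iff_continuousAt.2 fun s => (hx' s).continuousAt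
  have hyc : Continuous y := continuous_iff_continuousAt.2 fun s => (hy' s).continuousAt
  obtain ⟨a, haneg, hat⟩ : ∃ a, x a < 0 ∧ a ≤ t₀ :=
    ((hxbot.eventually (eventually_lt_atBot 0)).and (eventually_le_atBot t₀)).exists
  set f : ℝ → ℝ × ℝ := fun t => (x t, y t) with hf
  have hfc : Continuous f := hxc.prodMk hyc
  obtain ⟨R, hR⟩ := (isCompact_Icc (a := a) (b := t₀)).exists_bound_of_continuousOn
    hfc.continuousOn
  set R' : ℝ := max R 0 with hR'
  have hR'nn : 0 ≤ R' := le_max_right _ _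
  have hRb : ∀ t ∈ Set.Icc a t₀, ‖f t‖ ≤ R' := fun t ht => le_trans (hR t ht) (le_max_left _ _)
  set v : ℝ → ℝ × ℝ → ℝ × ℝ := fun _ p => (p.2, -(b*p.2) - 2*b*(Real.exp p.1 - 1)) with hv
  set K : NNReal := Real.toNNReal (b + 2*b*Real.exp R') with hK
  have hKc : (K : ℝ) = b + 2*b*Real.exp R' := by
    rw [hK, Real.coe_toNNReal]
    positivity
  have hlip : ∀ t : ℝ, LipschitzOnWith K (v t) (Metric.closedBall (0 : ℝ × ℝ) R') := by
    intro t
    apply LipschitzOnWith.of_dist_le_mul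
    intro p hp q hq
    have hK1 : 1 ≤ (K:ℝ) := by rw [hKc]; nlinarith [Real.exp_pos R']
    have hp1 : |p.1| ≤ R' := by
      have h := mem_closedBall_iff_norm.1 hp
      rw [sub_zero] at h
      simpa [Real.norm_eq_abs] using le_trans (norm_fst_le p) h
    have hq1 : |q.1| ≤ R' := by
      have h := mem_closedBall_iff_norm.1 hq
      rw [sub_zero] at h
      simpa [Real.norm_eq_abs] using le_trans (norm_fst_le q) h
    have hd : dist p q = max (dist p.1 q.1) (dist p.2 q.2) := Prod.dist_eq
    have hd1 : dist p.1 q.1 ≤ dist p q := by rw [hd]; exact le_max_left _ _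
    have hd2 : dist p.2 q.2 ≤ dist p q := by rw [hd]; exact le_max_right _ _
    rw [hv]
    simp only
    rw [Prod.dist_eq]
    apply max_le
    · calc dist p.2 q.2 ≤ dist p q := hd2
        _ ≤ K * dist p q := by
          nlinarith [dist_nonneg (x := p) (y := q), hK1]
    · rw [Real.dist_eq]
      have he : |Real.exp p.1 - Real.exp q.1| ≤ Real.exp R' * |p.1 - q.1| :=
        expLip R' p.1 q.1 hp1 hq1
      have h1 : -(b*p.2) - 2*b*(Real.exp p.1 - 1) - (-(b*q.2) - 2*b*(Real.exp q.1 - 1))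
          = -(b*(p.2 - q.2)) - 2*b*(Real.exp p.1 - Real.exp q.1) := by ring
      rw [h1]
      calc |(-(b*(p.2 - q.2)) - 2*b*(Real.exp p.1 - Real.exp q.1))|
          ≤ |b*(p.2 - q.2)| + |2*b*(Real.exp p.1 - Real.exp q.1)| := by
            have := abs_add_le (-(b*(p.2 - q.2))) (-(2*b*(Real.exp p.1 - Real.exp q.1)))
            simp only [abs_neg] at this
            calc |(-(b*(p.2 - q.2)) - 2*b*(Real.exp p.1 - Real.exp q.1))|
                = |(-(b*(p.2 - q.2)) + -(2*b*(Real.exp p.1 - Real.exp q.1)))| := by ring_nf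
              _ ≤ _ := by rw [← abs_neg (b*(p.2-q.2)), ← abs_neg (2*b*(Real.exp p.1 - Real.exp q.1))] at this ⊢; exact this
        _ ≤ K * dist p q := by
          rw [abs_mul, abs_mul]
          have hb0 : |b| = b := abs_of_pos (by linarith)
          have h2b : |2*b| = 2*b := abs_of_pos (by linarith)
          rw [hb0, h2b]
          have e1 : |p.2 - q.2| = dist p.2 q.2 := (Real.dist_eq _ _).symm
          have e2 : |p.1 - q.1| = dist p.1 q.1 := (Real.dist_eq _ _).symm
          rw [e1]
          have h3 : |Real.exp p.1 - Real.exp q.1| ≤ Real.exp R' * dist p q := by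
            rw [e2] at he
            calc |Real.exp p.1 - Real.exp q.1| ≤ Real.exp R' * dist p.1 q.1 := he
              _ ≤ Real.exp R' * dist p q :=
                mul_le_mul_of_nonneg_left hd1 (Real.exp_pos R').le
          rw [hKc]
          nlinarith [dist_nonneg (x := p) (y := q), Real.exp_pos R']
  -- apply uniqueness on Icc a t₀
  have hueq := ODE_solution_unique_of_mem_Icc_left (v := v)
    (s := fun _ => Metric.closedBall (0 : ℝ × ℝ) R') (K := K)
    (f := f) (g := fun _ => (0,0)) (a := a) (b := t₀)
    (fun t _ => hlip t)
    (hfc.continuousOn)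
    (fun t ht => by
      have : HasDerivAt f (y t, -(b*y t) - 2*b*(Real.exp (x t) - 1)) t :=
        (hx' t).prodMk (hy' t)
      exact this.hasDerivWithinAt)
    (fun t ht => by
      rw [Metric.mem_closedBall, dist_zero_right]
      exact hRb t ⟨ht.1.le, ht.2⟩)
    (continuousOn_const)
    (fun t ht => by
      have hz : v t ((fun _ => ((0:ℝ),(0:ℝ))) t) = 0 := by
        rw [hv]; simp [Real.exp_zero]
      rw [hz]
      exact hasDerivWithinAt_const _ _ _)
    (fun t ht => by
      have h0 : ((0,0) : ℝ × ℝ) = 0 := rfl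
      rw [h0, Metric.mem_closedBall, dist_self]
      exact hR'nn)
    (by rw [hf]; simp [hx0, hy0])
  have heq := hueq (Set.left_mem_Icc.2 hat)
  have hxa : x a = 0 := congrArg Prod.fst heq
  linarith


theorem mainAux (hb1 : 1 ≤ b) (hb7 : b ≤ 7)
    (hx' : ∀ s, HasDerivAt x (y s) s)
    (hy' : ∀ s, HasDerivAt y (-(b * y s) - 2*b*(Real.exp (x s) - 1)) s)
    (hxbot : Tendsto x atBot atBot) :
    ∃ s : ℕ → ℝ, StrictMono s ∧ Tendsto s atTop atTop ∧
      (∀ j : ℕ, y (s j) = 0) ∧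
      (∀ j : ℕ, x (s (2 * j + 1)) < x (s (2 * j + 3))) ∧
      (∀ j : ℕ, x (s (2 * j + 1)) < 0) ∧
      (∀ j : ℕ, 0 < x (s (2 * j))) ∧
      (∀ j : ℕ, x (s (2 * j + 2)) < x (s (2 * j))) := by
  have hxc : Continuous x := continuous_iff_continuousAt.2 fun s => (hx' s).continuousAt
  have hyc : Continuous y := continuous_iff_continuousAt.2 fun s => (hy' s).continuousAt
  have hno : ∀ t, x t = 0 → y t = 0 → False := neverOrigin hb1 hb7 hx' hy' hxbot
  -- a time after which |x| ≤ 1/16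
  obtain ⟨T, hT⟩ : ∃ T : ℝ, ∀ s, T ≤ s → |x s| ≤ 1/16 := by
    have := (Metric.tendsto_atTop.1 (xtends hb1 hb7 hx' hy')) (1/16) (by norm_num)
    obtain ⟨N, hN⟩ := this
    exact ⟨N, fun s hs => by
      have := hN s hs
      rw [Real.dist_0_eq_abs] at this
      linarith⟩
  -- the "Good" predicate and the step
  set Good : ℝ → Prop := fun t => T ≤ t ∧ y t = 0 ∧ x t ≠ 0 with hGood
  have hstep : ∀ t, Good t → ∃ t', t < t' ∧ Good t' ∧
      (0 < x t → x t' < 0) ∧ (x t < 0 → 0 < x t') ∧ (∀ u ∈ Set.Ioo t t', y u ≠ 0) := by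
    rintro t ⟨hTt, hyt, hxt⟩
    rcases hxt.lt_or_gt with hneg | hpos
    · obtain ⟨t₂, h1, h2, h3, h4⟩ := stepB hb1 hb7 hx' hy' hT hTt hyt hneg
      exact ⟨t₂, h1, ⟨le_trans hTt h1.le, h2, ne_of_gt h3⟩,
        fun h => absurd h (not_lt.2 hneg.le), fun _ => h3,
        fun u hu => ne_of_gt (h4 u hu)⟩
    · obtain ⟨t₂, h1, h2, h3, h4⟩ := stepA hb1 hb7 hx' hy' hT hTt hyt hpos
      exact ⟨t₂, h1, ⟨le_trans hTt h1.le, h2, ne_of_lt h3⟩,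
        fun _ => h3, fun h => absurd h (not_lt.2 hpos.le),
        fun u hu => ne_of_lt (h4 u hu)⟩
  -- first good point with x > 0
  obtain ⟨t₀, hGood0, hx0pos⟩ : ∃ t₀, Good t₀ ∧ 0 < x t₀ := by
    obtain ⟨t', hTt', hyt'⟩ : ∃ t', T ≤ t' ∧ y t' = 0 := by
      rcases eq_or_ne (y T) 0 with h | h
      · exact ⟨T, le_rfl, h⟩
      · obtain ⟨t₁, h1, h2, _⟩ := exitY hb1 hb7 hx' hy' hT le_rfl h
        exact ⟨t₁, h1.le, h2⟩
    have hxt' : x t' ≠ 0 := fun h => hno t' h hyt'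
    rcases hxt'.lt_or_gt with hneg | hpos
    · obtain ⟨t₂, h1, h2, h3, _⟩ := stepB hb1 hb7 hx' hy' hT hTt' hyt' hneg
      exact ⟨t₂, ⟨le_trans hTt' h1.le, h2, ne_of_gt h3⟩, h3⟩
    · exact ⟨t', ⟨hTt', hyt', ne_of_gt hpos⟩, hpos⟩
  choose nxt hnlt hngood hnflip1 hnflip2 hnyne using hstep
  set F : {t : ℝ // Good t} → {t : ℝ // Good t} :=
    fun p => ⟨nxt p.1 p.2, hngood p.1 p.2⟩ with hF
  set S : ℕ → {t : ℝ // Good t} := fun n => F^[n] ⟨t₀, hGood0⟩ with hSdef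
  set s : ℕ → ℝ := fun n => (S n).1 with hs
  have hSsucc : ∀ n, S (n+1) = F (S n) := fun n => Function.iterate_succ_apply' F n _
  have hkey : ∀ n, s (n+1) = nxt (s n) (S n).2 := fun n => congrArg Subtype.val (hSsucc n)
  have hslt : ∀ n, s n < s (n+1) := by
    intro n
    rw [hkey n]
    exact hnlt _ _
  have hsmono : StrictMono s := strictMono_nat_of_lt_succ hslt
  have hsy : ∀ n, y (s n) = 0 := fun n => (S n).2.2.1
  have hsT : ∀ n, T ≤ s n := fun n => (S n).2.1
  have hsyne : ∀ n, ∀ u ∈ Set.Ioo (s n) (s (n+1)), y u ≠ 0 := by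
    intro n
    rw [hkey n]
    exact hnyne _ _
  have hsflip1 : ∀ n, 0 < x (s n) → x (s (n+1)) < 0 := by
    intro n
    rw [hkey n]
    exact hnflip1 _ _
  have hsflip2 : ∀ n, x (s n) < 0 → 0 < x (s (n+1)) := by
    intro n
    rw [hkey n]
    exact hnflip2 _ _
  have hs0 : x (s 0) = x t₀ := rfl
  have hsign : ∀ n, (Even n → 0 < x (s n)) ∧ (¬Even n → x (s n) < 0) := by
    intro n
    induction n with
    | zero => exact ⟨fun _ => hs0 ▸ hx0pos, fun h => absurd Even.zero h⟩
    | succ n ih =>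
      constructor
      · intro he
        have hodd : ¬Even n := by
          rw [Nat.even_add_one] at he
          exact he
        exact hsflip2 n (ih.2 hodd)
      · intro ho
        have heven : Even n := by
          rw [Nat.even_add_one] at ho
          push_neg at ho
          exact ho
        exact hsflip1 n (ih.1 heven)
  -- V strictly decreases between consecutive zeros
  set V : ℝ → ℝ := Vfun b x y with hV
  have hVanti : Antitone V := Vanti hb1 hx' hy'
  have hVstrict : ∀ n, V (s (n+1)) < V (s n) := by
    intro n
    have hanti : StrictAntiOn V (Set.Icc (s n) (s (n+1))) := by
      apply strictAntiOn_of_deriv_neg (convex_Icc _ _)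
      · exact fun u _ => ((Vderiv hx' hy' u).continuousAt).continuousWithinAt
      · intro u hu
        rw [interior_Icc] at hu
        rw [(Vderiv hx' hy' u).deriv]
        have hyne := hsyne n u hu
        have h2 : 0 < (y u)^2 := lt_of_le_of_ne (sq_nonneg _) (Ne.symm (pow_ne_zero 2 hyne))
        nlinarith
    exact hanti (Set.left_mem_Icc.2 (hslt n).le) (Set.right_mem_Icc.2 (hslt n).le) (hslt n)
  have hVlt : ∀ n, V (s (n+2)) < V (s n) := by
    intro n
    have h1 := hVstrict n
    have h2 : V (s (n+2)) ≤ V (s (n+1)) := hVanti (hslt (n+1)).le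
    linarith
  have hVzero : ∀ n, V (s n) = 2*b*(Real.exp (x (s n)) - x (s n) - 1) := by
    intro n
    rw [hV]
    unfold Vfun
    rw [hsy n]
    ring
  have hglt : ∀ n, Real.exp (x (s (n+2))) - x (s (n+2)) - 1
      < Real.exp (x (s n)) - x (s n) - 1 := by
    intro n
    have := hVlt n
    rw [hVzero n, hVzero (n+2)] at this
    nlinarith
  -- G monotonicity
  have hGd : ∀ u : ℝ, HasDerivAt (fun v => Real.exp v - v - 1) (Real.exp u - 1) u := by
    intro u
    have := ((Real.hasDerivAt_exp u).sub (hasDerivAt_id u)).sub_const 1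
    simpa using this
  have hGmono : StrictMonoOn (fun v => Real.exp v - v - 1) (Set.Ici 0) := by
    apply strictMonoOn_of_deriv_pos (convex_Ici _)
    · exact fun u _ => ((hGd u).continuousAt).continuousWithinAt
    · intro u hu
      rw [interior_Ici] at hu
      rw [(hGd u).deriv]
      have : 1 < Real.exp u := by rw [← Real.exp_zero]; exact Real.exp_lt_exp.2 hu
      linarith
  have hGanti : StrictAntiOn (fun v => Real.exp v - v - 1) (Set.Iic 0) := by
    apply strictAntiOn_of_deriv_neg (convex_Iic _)
    · exact fun u _ => ((hGd u).continuousAt).continuousWithinAt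
    · intro u hu
      rw [interior_Iic] at hu
      rw [(hGd u).deriv]
      have : Real.exp u < 1 := by rw [← Real.exp_zero]; exact Real.exp_lt_exp.2 hu
      linarith
  -- tendsto atTop
  have hstend : Tendsto s atTop atTop := by
    by_contra hcon
    have hbdd : BddAbove (Set.range s) := by
      by_contra hb
      exact hcon (tendsto_atTop_atTop_of_monotone' hsmono.monotone hb)
    have hconv := tendsto_atTop_ciSup hsmono.monotone hbdd
    set Slim : ℝ := ⨆ n, s n
    have hylim : Tendsto (fun n => y (s n)) atTop (nhds (y Slim)) :=
      (hyc.continuousAt.tendsto).comp hconv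
    have hyS : y Slim = 0 := by
      have h2 : Tendsto (fun n : ℕ => (0:ℝ)) atTop (nhds (y Slim)) := by
        convert hylim using 1
        funext n
        rw [hsy n]
      exact tendsto_nhds_unique h2 tendsto_const_nhds
    have hxlim : Tendsto (fun n => x (s n)) atTop (nhds (x Slim)) :=
      (hxc.continuousAt.tendsto).comp hconv
    have h2n : Tendsto (fun n : ℕ => 2*n) atTop atTop :=
      StrictMono.tendsto_atTop (fun a b h => by omega)
    have h2n1 : Tendsto (fun n : ℕ => 2*n+1) atTop atTop :=
      StrictMono.tendsto_atTop (fun a b h => by omega)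
    have hxSnn : 0 ≤ x Slim :=
      ge_of_tendsto (hxlim.comp h2n)
        (Filter.Eventually.of_forall fun n => ((hsign (2*n)).1 (even_two_mul n)).le)
    have hxSnp : x Slim ≤ 0 :=
      le_of_tendsto (hxlim.comp h2n1)
        (Filter.Eventually.of_forall fun n => by
          have : ¬Even (2*n+1) := by
            rw [Nat.even_add_one]
            push_neg
            exact even_two_mul n
          exact ((hsign (2*n+1)).2 this).le)
    exact hno Slim (le_antisymm hxSnp hxSnn) hyS
  -- final inequalities
  refine ⟨s, hsmono, hstend, hsy, ?_, ?_, ?_, ?_⟩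
  · intro j
    have hodd1 : ¬Even (2*j+1) := by
      rw [Nat.even_add_one]; push_neg; exact even_two_mul j
    have hodd3 : ¬Even (2*j+3) := by
      have : 2*j+3 = 2*(j+1)+1 := by ring
      rw [this, Nat.even_add_one]; push_neg; exact even_two_mul (j+1)
    have hx1 : x (s (2*j+1)) < 0 := (hsign (2*j+1)).2 hodd1
    have hx3 : x (s (2*j+3)) < 0 := (hsign (2*j+3)).2 hodd3
    have hglt' := hglt (2*j+1)
    have heq : 2*j+1+2 = 2*j+3 := by ring
    rw [heq] at hglt'
    have := (hGanti.lt_iff_gt (Set.mem_Iic.2 hx3.le) (Set.mem_Iic.2 hx1.le)).1 hglt'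
    linarith
  · intro j
    have hodd1 : ¬Even (2*j+1) := by
      rw [Nat.even_add_one]; push_neg; exact even_two_mul j
    exact (hsign (2*j+1)).2 hodd1
  · intro j
    exact (hsign (2*j)).1 (even_two_mul j)
  · intro j
    have he0 : Even (2*j) := even_two_mul j
    have he2 : Even (2*j+2) := by
      have : 2*j+2 = 2*(j+1) := by ring
      rw [this]; exact even_two_mul (j+1)
    have hx0 : 0 < x (s (2*j)) := (hsign (2*j)).1 he0
    have hx2 : 0 < x (s (2*j+2)) := (hsign (2*j+2)).1 he2
    have hglt' := hglt (2*j)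
    exact (hGmono.lt_iff_lt (Set.mem_Ici.2 hx2.le) (Set.mem_Ici.2 hx0.le)).1 hglt'


end SpiralProof
theorem stmt_9 (N : ℕ) (hN : 4 ≤ N) (hN' : N ≤ 10) (α κ : ℝ)
    (hκ : κ = Real.log (2 * ((N : ℝ) - 3)))
    (x : ℝ → ℝ) (hx2 : ContDiff ℝ 2 x)
    (hode : ∀ s : ℝ, deriv (deriv x) s + ((N : ℝ) - 3) * deriv x s
        + 2 * ((N : ℝ) - 3) * (Real.exp (x s) - 1) = 0)
    (hlim1 : Tendsto (fun s => x s - 2 * s + κ - α) atBot (nhds 0))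
    (hlim2 : Tendsto (fun s => Real.exp (-s) * (deriv x s - 2)) atBot (nhds 0))
    (y : ℝ → ℝ) (hy : y = deriv x) :
    -- s j is the (j+1)-st zero of y, i.e. s 0 = s₁, s 1 = s₂, ⋯
    ∃ s : ℕ → ℝ, StrictMono s ∧ Tendsto s atTop atTop ∧
      (∀ j : ℕ, y (s j) = 0) ∧
      (∀ j : ℕ, x (s (2 * j + 1)) < x (s (2 * j + 3))) ∧
      (∀ j : ℕ, x (s (2 * j + 1)) < 0) ∧
      (∀ j : ℕ, 0 < x (s (2 * j))) ∧
      (∀ j : ℕ, x (s (2 * j + 2)) < x (s (2 * j))) := by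
  set b : ℝ := (N : ℝ) - 3 with hb
  have hb1 : 1 ≤ b := by
    have : (4:ℝ) ≤ (N:ℝ) := by exact_mod_cast hN
    rw [hb]; linarith
  have hb7 : b ≤ 7 := by
    have : (N:ℝ) ≤ 10 := by exact_mod_cast hN'
    rw [hb]; linarith
  have hxdiff : Differentiable ℝ x := hx2.differentiable (by norm_num)
  have hx' : ∀ s, HasDerivAt x (y s) s := by
    intro s
    rw [hy]
    exact (hxdiff s).hasDerivAt
  have hcd2 : ContDiff ℝ (1+1 : ℕ) x := by exact_mod_cast hx2
  have hcd1 : ContDiff ℝ 1 (deriv x) := by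
    rw [show ((1+1 : ℕ) : WithTop ℕ∞) = (1 : WithTop ℕ∞) + 1 by norm_num] at hcd2
    exact (contDiff_succ_iff_deriv.1 hcd2).2.2
  have hydiff : Differentiable ℝ y := by
    rw [hy]
    exact hcd1.differentiable one_ne_zero
  have hy' : ∀ s, HasDerivAt y (-(b * y s) - 2*b*(Real.exp (x s) - 1)) s := by
    intro s
    have h1 := (hydiff s).hasDerivAt
    have h2 : deriv y s = -(b * y s) - 2*b*(Real.exp (x s) - 1) := by
      have h3 := hode s
      rw [hy]
      have h4 : deriv (deriv x) s = -(b * deriv x s) - 2*b*(Real.exp (x s) - 1) := by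
        linarith
      exact h4
    rwa [h2] at h1
  have hxbot : Tendsto x atBot atBot := by
    have h0 : Tendsto (fun s : ℝ => s) atBot atBot := tendsto_id
    have h1 : Tendsto (fun s : ℝ => 2*s) atBot atBot :=
      h0.const_mul_atBot (by norm_num : (0:ℝ) < 2)
    have h2 : Tendsto (fun s : ℝ => 2*s + (α - κ)) atBot atBot :=
      tendsto_atBot_add_const_right atBot (α - κ) h1
    have h3 := hlim1.add_atBot h2
    have h4 : (fun s : ℝ => (x s - 2*s + κ - α) + (2*s + (α - κ))) = x := by
      funext s; ring
    rwa [h4] at h3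
  exact mainAux hb1 hb7 hx' hy' hxbot
end

section
/- Let N ≥ 4 be an integer, α ∈ ℝ, and κ := log((N−3)/(N−2)). For θ ∈ (0,π/2] set t(θ) := log tan(θ/2) ∈ (−∞,0], and given v ∈ C²((0,π/2]) define x ∈ C²((−∞,0]) by x(t) := v(θ) − (−2 log sin θ + κ), where t = t(θ). Then v satisfies v'' + (N−2)(cos θ/sin θ) v' + 2(N−2)(e^v − 1) = 0 on (0,π/2) with v(θ) → α and v'(θ) → 0 as θ ↓ 0, if and only if x satisfies x''(t) − (N−3) tanh(t) x'(t) + 2(N−3)(e^{x(t)} − 1) = 0 on (−∞,0), x(t) + 2 log cosh(t) + κ − α → 0 as t → −∞, and cosh(t) x'(t) + 2 sinh(t) → 0 as t → −∞. -/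
open Real Set Filter

lemma sin_two_arctan (u : ℝ) : Real.sin (2 * Real.arctan u) = 2 * u / (1 + u ^ 2) := by
  rw [Real.sin_two_mul, Real.sin_arctan, Real.cos_arctan]
  have h : Real.sqrt (1 + u ^ 2) ^ 2 = 1 + u ^ 2 := Real.sq_sqrt (by positivity)
  have h0 : Real.sqrt (1 + u ^ 2) ≠ 0 := by positivity
  field_simp
  rw [h]

lemma cos_two_arctan (u : ℝ) : Real.cos (2 * Real.arctan u) = (1 - u ^ 2) / (1 + u ^ 2) := by
  rw [Real.cos_two_mul, Real.cos_arctan]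
  have h : Real.sqrt (1 + u ^ 2) ^ 2 = 1 + u ^ 2 := Real.sq_sqrt (by positivity)
  have h0 : Real.sqrt (1 + u ^ 2) ≠ 0 := by positivity
  field_simp
  nlinarith [h]

lemma sin_theta (t : ℝ) : Real.sin (2 * Real.arctan (Real.exp t)) = 1 / Real.cosh t := by
  rw [sin_two_arctan, Real.cosh_eq]
  have h := Real.exp_pos t
  have h2 : Real.exp (-t) = 1 / Real.exp t := by rw [Real.exp_neg]; ring_nf
  rw [h2]
  field_simp
  ring

lemma cos_theta (t : ℝ) : Real.cos (2 * Real.arctan (Real.exp t)) = - Real.tanh t := by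
  rw [cos_two_arctan, Real.tanh_eq_sinh_div_cosh, Real.sinh_eq, Real.cosh_eq]
  have h := Real.exp_pos t
  have h2 : Real.exp (-t) = 1 / Real.exp t := by rw [Real.exp_neg]; ring_nf
  rw [h2]
  have h3 : Real.exp t + 1 / Real.exp t ≠ 0 := by positivity
  field_simp
  ring

lemma theta_mem {t : ℝ} (ht : t < 0) : 2 * Real.arctan (Real.exp t) ∈ Ioo (0:ℝ) (π/2) := by
  constructor
  · have h := Real.arctan_strictMono (Real.exp_pos t)
    rw [Real.arctan_zero] at h
    linarith
  · have h1 : Real.arctan (Real.exp t) < Real.arctan 1 :=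
      Real.arctan_strictMono (by rw [← Real.exp_zero]; exact Real.exp_lt_exp.2 ht)
    rw [Real.arctan_one] at h1
    linarith

lemma tmap_neg {θ : ℝ} (hθ : θ ∈ Ioo (0:ℝ) (π/2)) : Real.log (Real.tan (θ/2)) < 0 := by
  have h1 : (0:ℝ) < Real.tan (θ/2) := Real.tan_pos_of_pos_of_lt_pi_div_two (by linarith [hθ.1]) (by linarith [hθ.2, Real.pi_pos])
  have h2 : Real.tan (θ/2) < 1 := by
    have := Real.tan_lt_tan_of_lt_of_lt_pi_div_two (x := θ/2) (y := π/4) (by linarith [hθ.1, Real.pi_pos]) (by linarith [Real.pi_pos]) (by linarith [hθ.2])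
    rwa [Real.tan_pi_div_four] at this
  exact Real.log_neg h1 h2

lemma theta_tmap {θ : ℝ} (hθ : θ ∈ Ioo (0:ℝ) (π/2)) :
    2 * Real.arctan (Real.exp (Real.log (Real.tan (θ/2)))) = θ := by
  have h1 : (0:ℝ) < Real.tan (θ/2) := Real.tan_pos_of_pos_of_lt_pi_div_two (by linarith [hθ.1]) (by linarith [hθ.2, Real.pi_pos])
  rw [Real.exp_log h1, Real.arctan_tan (by linarith [hθ.1, Real.pi_pos]) (by linarith [hθ.2, Real.pi_pos])]
  ring

lemma tendsto_theta : Tendsto (fun t : ℝ => 2 * Real.arctan (Real.exp t)) atBot (nhdsWithin 0 (Ioi 0)) := by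
  rw [tendsto_nhdsWithin_iff]
  constructor
  · have h : Tendsto (fun t : ℝ => 2 * Real.arctan (Real.exp t)) atBot (nhds (2 * Real.arctan 0)) :=
      (Real.continuous_arctan.continuousAt.tendsto.comp Real.tendsto_exp_atBot).const_mul 2
    simpa using h
  · filter_upwards with t
    have h := Real.arctan_strictMono (Real.exp_pos t)
    rw [Real.arctan_zero] at h
    have : (0:ℝ) < 2 * Real.arctan (Real.exp t) := by linarith
    exact this

lemma tendsto_tmap : Tendsto (fun θ : ℝ => Real.log (Real.tan (θ/2))) (nhdsWithin 0 (Ioi 0)) atBot := by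
  apply Real.tendsto_log_nhdsGT_zero.comp
  rw [tendsto_nhdsWithin_iff]
  constructor
  · have hc : ContinuousAt (fun θ : ℝ => Real.tan (θ/2)) 0 := by
      apply ContinuousAt.comp (g := Real.tan) (f := fun θ : ℝ => θ/2)
      · exact Real.continuousAt_tan.2 (by norm_num)
      · fun_prop
    have h := hc.tendsto
    rw [show Real.tan ((0:ℝ)/2) = 0 by norm_num [Real.tan_zero]] at h
    exact h.mono_left nhdsWithin_le_nhds
  · filter_upwards [Ioo_mem_nhdsGT_of_mem (show (0:ℝ) ∈ Ico (0:ℝ) (π/2) from ⟨le_refl 0, by positivity⟩)] with θ hθ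
    exact Real.tan_pos_of_pos_of_lt_pi_div_two (by linarith [hθ.1]) (by linarith [hθ.2, Real.pi_pos])

lemma hasDerivAt_theta (t : ℝ) :
    HasDerivAt (fun s : ℝ => 2 * Real.arctan (Real.exp s)) (1 / Real.cosh t) t := by
  have h := ((Real.hasDerivAt_arctan (Real.exp t)).comp t (Real.hasDerivAt_exp t)).const_mul 2
  refine h.congr_deriv ?_
  rw [Real.cosh_eq]
  have he := Real.exp_pos t
  have h2 : Real.exp (-t) = 1 / Real.exp t := by rw [Real.exp_neg]; ring_nf
  rw [h2]
  field_simp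
  ring

theorem stmt_10 (N : ℕ) (hN : 4 ≤ N) (α κ : ℝ)
    (hκ : κ = Real.log (((N : ℝ) - 3) / ((N : ℝ) - 2)))
    (v : ℝ → ℝ) (hv : ContDiffOn ℝ 2 v (Ioc 0 (π / 2)))
    (x : ℝ → ℝ)
    -- t = log tan (θ/2), i.e. θ = 2 arctan (exp t), and x(t) = v(θ) - v*(θ)
    (hx : ∀ t : ℝ, x t = v (2 * Real.arctan (Real.exp t))
        - (-2 * Real.log (Real.sin (2 * Real.arctan (Real.exp t))) + κ)) :
    ((∀ θ ∈ Ioo (0:ℝ) (π / 2),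
        deriv (deriv v) θ + ((N : ℝ) - 2) * (Real.cos θ / Real.sin θ) * deriv v θ
          + 2 * ((N : ℝ) - 2) * (Real.exp (v θ) - 1) = 0) ∧
      Tendsto v (nhdsWithin 0 (Ioi 0)) (nhds α) ∧
      Tendsto (deriv v) (nhdsWithin 0 (Ioi 0)) (nhds 0)) ↔
    ((∀ t : ℝ, t < 0 →
        deriv (deriv x) t - ((N : ℝ) - 3) * Real.tanh t * deriv x t
          + 2 * ((N : ℝ) - 3) * (Real.exp (x t) - 1) = 0) ∧
      Tendsto (fun t => x t + 2 * Real.log (Real.cosh t) + κ - α) atBot (nhds 0) ∧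
      Tendsto (fun t => Real.cosh t * deriv x t + 2 * Real.sinh t) atBot (nhds 0)) := by
  have hN4 : (4:ℝ) ≤ (N:ℝ) := by exact_mod_cast hN
  have h3 : (0:ℝ) < (N:ℝ) - 3 := by linarith
  have h2 : (0:ℝ) < (N:ℝ) - 2 := by linarith
  have hek : Real.exp κ = ((N:ℝ) - 3) / ((N:ℝ) - 2) := by
    rw [hκ, Real.exp_log (by positivity)]
  -- rewrite x in terms of cosh
  have hxf : ∀ t : ℝ, x t = v (2 * Real.arctan (Real.exp t)) - 2 * Real.log (Real.cosh t) - κ := by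
    intro t
    rw [hx t, sin_theta, one_div, Real.log_inv]
    ring
  -- smoothness of v on the open interval
  have hvO : ContDiffOn ℝ 2 v (Ioo 0 (π/2)) := hv.mono Ioo_subset_Ioc_self
  have hdvO : ContDiffOn ℝ 1 (deriv v) (Ioo 0 (π/2)) :=
    hvO.deriv_of_isOpen isOpen_Ioo (by norm_num)
  have hv1 : ∀ θ₀ ∈ Ioo (0:ℝ) (π/2), HasDerivAt v (deriv v θ₀) θ₀ := by
    intro θ₀ hθ₀
    exact (((hvO.differentiableOn (by norm_num)).differentiableAt
      (isOpen_Ioo.mem_nhds hθ₀))).hasDerivAt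
  have hv2 : ∀ θ₀ ∈ Ioo (0:ℝ) (π/2), HasDerivAt (deriv v) (deriv (deriv v) θ₀) θ₀ := by
    intro θ₀ hθ₀
    exact (((hdvO.differentiableOn (by norm_num)).differentiableAt
      (isOpen_Ioo.mem_nhds hθ₀))).hasDerivAt
  -- first derivative of x
  have hx1 : ∀ t : ℝ, t < 0 → HasDerivAt x
      (deriv v (2 * Real.arctan (Real.exp t)) / Real.cosh t
        - 2 * (Real.sinh t / Real.cosh t)) t := by
    intro t ht
    have hmem := theta_mem ht
    have hc := Real.cosh_pos t
    have h1 := (hv1 _ hmem).comp t (hasDerivAt_theta t)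
    have h2' : HasDerivAt (fun s : ℝ => Real.log (Real.cosh s))
        (Real.sinh t / Real.cosh t) t := by
      have := (Real.hasDerivAt_cosh t).log hc.ne'
      simpa [div_eq_mul_inv] using this
    have h3' := (h1.sub (h2'.const_mul 2)).sub_const κ
    have heq : (fun s : ℝ => v (2 * Real.arctan (Real.exp s)) - 2 * Real.log (Real.cosh s) - κ)
        =ᶠ[nhds t] x := by
      filter_upwards with s; rw [hxf s]
    refine (h3'.congr_of_eventuallyEq heq.symm).congr_deriv ?_
    field_simp
  have hderivx : ∀ t : ℝ, t < 0 → deriv x t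
      = deriv v (2 * Real.arctan (Real.exp t)) / Real.cosh t
        - 2 * (Real.sinh t / Real.cosh t) := fun t ht => (hx1 t ht).deriv
  -- second derivative of x
  have hx2 : ∀ t : ℝ, t < 0 → HasDerivAt (deriv x)
      (deriv (deriv v) (2 * Real.arctan (Real.exp t)) / Real.cosh t ^ 2
        - deriv v (2 * Real.arctan (Real.exp t)) * Real.sinh t / Real.cosh t ^ 2
        - 2 / Real.cosh t ^ 2) t := by
    intro t ht
    have hmem := theta_mem ht
    have hc := Real.cosh_pos t
    have hg1 := (hv2 _ hmem).comp t (hasDerivAt_theta t)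
    have hg2 := hg1.div (Real.hasDerivAt_cosh t) hc.ne'
    have hg3 := (Real.hasDerivAt_sinh t).div (Real.hasDerivAt_cosh t) hc.ne'
    have hg := hg2.sub (hg3.const_mul 2)
    have heq : (fun s : ℝ => deriv v (2 * Real.arctan (Real.exp s)) / Real.cosh s
        - 2 * (Real.sinh s / Real.cosh s)) =ᶠ[nhds t] deriv x := by
      filter_upwards [Iio_mem_nhds ht] with s hs
      exact (hderivx s hs).symm
    refine (hg.congr_of_eventuallyEq heq.symm).congr_deriv ?_
    have hpy := Real.cosh_sq_sub_sinh_sq t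
    simp only [Function.comp_apply]
    field_simp
    ring_nf
    nlinarith [hpy]
  -- the key pointwise identity between the two ODEs
  have hkey : ∀ t : ℝ, t < 0 →
      deriv (deriv x) t - ((N : ℝ) - 3) * Real.tanh t * deriv x t
          + 2 * ((N : ℝ) - 3) * (Real.exp (x t) - 1)
        = (1 / Real.cosh t ^ 2) *
          (deriv (deriv v) (2 * Real.arctan (Real.exp t))
            + ((N : ℝ) - 2) * (Real.cos (2 * Real.arctan (Real.exp t))
                / Real.sin (2 * Real.arctan (Real.exp t)))
              * deriv v (2 * Real.arctan (Real.exp t))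
            + 2 * ((N : ℝ) - 2) * (Real.exp (v (2 * Real.arctan (Real.exp t))) - 1)) := by
    intro t ht
    have hc := Real.cosh_pos t
    have hpy := Real.cosh_sq_sub_sinh_sq t
    have hcs : Real.cos (2 * Real.arctan (Real.exp t)) / Real.sin (2 * Real.arctan (Real.exp t))
        = - Real.sinh t := by
      rw [cos_theta, sin_theta, Real.tanh_eq_sinh_div_cosh]
      field_simp
    have hex : Real.exp (x t) = Real.exp (v (2 * Real.arctan (Real.exp t))) / Real.cosh t ^ 2
        * (((N : ℝ) - 2) / ((N : ℝ) - 3)) := by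
      rw [hxf t, Real.exp_sub, Real.exp_sub, hek]
      have h2l : Real.exp (2 * Real.log (Real.cosh t)) = Real.cosh t ^ 2 := by
        rw [show (2 : ℝ) * Real.log (Real.cosh t) = Real.log (Real.cosh t ^ 2) by
          rw [Real.log_pow]; push_cast; ring, Real.exp_log (by positivity)]
      rw [h2l]
      field_simp
    rw [(hx2 t ht).deriv, hderivx t ht, Real.tanh_eq_sinh_div_cosh, hcs, hex]
    field_simp
    linear_combination (-(2*(N:ℝ) - 6)) * hpy
  -- boundary identities
  have hbv : ∀ t : ℝ, x t + 2 * Real.log (Real.cosh t) + κ - α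
      = v (2 * Real.arctan (Real.exp t)) - α := by
    intro t; rw [hxf t]; ring
  have hbx : ∀ t : ℝ, t < 0 → Real.cosh t * deriv x t + 2 * Real.sinh t
      = deriv v (2 * Real.arctan (Real.exp t)) := by
    intro t ht
    have hc := Real.cosh_pos t
    rw [hderivx t ht]
    field_simp
    ring
  constructor
  · rintro ⟨hode, hv0, hv'0⟩
    refine ⟨?_, ?_, ?_⟩
    · intro t ht
      rw [hkey t ht, hode _ (theta_mem ht), mul_zero]
    · have h := (hv0.comp tendsto_theta).sub_const α
      rw [sub_self] at h
      exact h.congr (fun t => (hbv t).symm)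
    · have h := hv'0.comp tendsto_theta
      refine h.congr' ?_
      filter_upwards [eventually_lt_atBot (0:ℝ)] with t ht
      exact (hbx t ht).symm
  · rintro ⟨hode, hx0, hx'0⟩
    refine ⟨?_, ?_, ?_⟩
    · intro θ hθ
      have ht := tmap_neg hθ
      have hth := theta_tmap hθ
      have h := hode _ ht
      rw [hkey _ ht, hth] at h
      have hc := Real.cosh_pos (Real.log (Real.tan (θ/2)))
      have hne : (1 : ℝ) / Real.cosh (Real.log (Real.tan (θ/2))) ^ 2 ≠ 0 := by positivity
      exact (mul_eq_zero.1 h).resolve_left hne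
    · have hvθ : Tendsto (fun t => v (2 * Real.arctan (Real.exp t))) atBot (nhds α) := by
        have h := hx0.add_const α
        rw [zero_add] at h
        exact h.congr (fun t => by rw [hbv t]; ring)
      have h := hvθ.comp tendsto_tmap
      refine h.congr' ?_
      filter_upwards [Ioo_mem_nhdsGT_of_mem
        (show (0:ℝ) ∈ Ico (0:ℝ) (π/2) from ⟨le_refl 0, by positivity⟩)] with θ hθ
      show v (2 * Real.arctan (Real.exp (Real.log (Real.tan (θ/2))))) = v θ
      rw [theta_tmap hθ]
    · have h := hx'0.comp tendsto_tmap
      refine h.congr' ?_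
      filter_upwards [Ioo_mem_nhdsGT_of_mem
        (show (0:ℝ) ∈ Ico (0:ℝ) (π/2) from ⟨le_refl 0, by positivity⟩)] with θ hθ
      have ht := tmap_neg hθ
      have h2' := hbx _ ht
      rw [theta_tmap hθ] at h2'
      exact h2'
end

section
/- Let N ≥ 4 be an integer, α ∈ ℝ, δ := e^{−α}, s₀ ∈ ℝ, r₀ := e^{s₀}, and κ̃ := log((N−3)/(N−2)) − 2 log 2. Suppose u ∈ C²((0,r₀]) ∩ C¹([0,r₀]) satisfies u''(r) + ((N−2)/r) u'(r) + 8(N−2) e^{u(r)} − (2(N−3)δ/(1+δr²)) (r u'(r) + 2) = 0 for all r ∈ (0,r₀], with u(0) = 0 and u'(0) = 0. Define x̃(s) := u(e^s) + 2s − κ̃ for s ∈ (−∞,s₀] and ỹ := x̃'. Then x̃ ∈ C²((−∞,s₀]) satisfies x̃''(s) − (N−3) tanh(s − α/2) x̃'(s) + 2(N−3)(e^{x̃(s)} − 1) = 0 on (−∞,s₀), x̃(s) − 2s + κ̃ → 0 as s → −∞, and e^{−s}(ỹ(s) − 2) → 0 as s → −∞. -/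
open Real Set Filter

theorem stmt_12 (N : ℕ) (hN : 4 ≤ N) (α δ : ℝ) (hδ : δ = Real.exp (-α))
    (s₀ r₀ : ℝ) (hr₀ : r₀ = Real.exp s₀)
    (κ : ℝ) (hκ : κ = Real.log (((N : ℝ) - 3) / ((N : ℝ) - 2)) - 2 * Real.log 2)
    (u : ℝ → ℝ)
    (hu2 : ContDiffOn ℝ 2 u (Ioc 0 r₀)) (hu1 : ContDiffOn ℝ 1 u (Icc 0 r₀))
    (hode : ∀ r ∈ Ioc (0:ℝ) r₀,
      derivWithin (derivWithin u (Icc 0 r₀)) (Icc 0 r₀) r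
        + (((N : ℝ) - 2) / r) * derivWithin u (Icc 0 r₀) r
        + 8 * ((N : ℝ) - 2) * Real.exp (u r)
        - (2 * ((N : ℝ) - 3) * δ / (1 + δ * r ^ 2)) * (r * derivWithin u (Icc 0 r₀) r + 2) = 0)
    (hu0 : u 0 = 0) (hu0' : derivWithin u (Icc 0 r₀) 0 = 0)
    (x : ℝ → ℝ) (hx : x = fun s => u (Real.exp s) + 2 * s - κ) :
    ContDiffOn ℝ 2 x (Iic s₀) ∧
    (∀ s : ℝ, s < s₀ →
      deriv (deriv x) s - ((N : ℝ) - 3) * Real.tanh (s - α / 2) * deriv x s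
        + 2 * ((N : ℝ) - 3) * (Real.exp (x s) - 1) = 0) ∧
    Tendsto (fun s => x s - 2 * s + κ) atBot (nhds 0) ∧
    Tendsto (fun s => Real.exp (-s) * (deriv x s - 2)) atBot (nhds 0) := by
  have hN3 : (3:ℝ) < (N:ℝ) := by exact_mod_cast Nat.lt_of_lt_of_le (by norm_num) hN
  have hN3' : (N:ℝ) - 3 ≠ 0 := by linarith
  have hN2' : (N:ℝ) - 2 ≠ 0 := by linarith
  have hr₀pos : 0 < r₀ := hr₀ ▸ Real.exp_pos s₀
  -- membership of exp s in the relevant sets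
  have hmem : ∀ s : ℝ, s ≤ s₀ → Real.exp s ∈ Ioc (0:ℝ) r₀ := fun s hs =>
    ⟨Real.exp_pos s, hr₀ ▸ Real.exp_le_exp.2 hs⟩
  have hmemo : ∀ s : ℝ, s < s₀ → Real.exp s ∈ Ioo (0:ℝ) r₀ := fun s hs =>
    ⟨Real.exp_pos s, hr₀ ▸ Real.exp_lt_exp.2 hs⟩
  have hIoo_sub : Ioo (0:ℝ) r₀ ⊆ Ioc 0 r₀ := Ioo_subset_Ioc_self
  have hIoo_subI : Ioo (0:ℝ) r₀ ⊆ Icc 0 r₀ := Ioo_subset_Icc_self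
  have hnhds : ∀ r ∈ Ioo (0:ℝ) r₀, Ioo (0:ℝ) r₀ ∈ nhds r := fun r hr =>
    isOpen_Ioo.mem_nhds hr
  -- derivWithin equals deriv on the open interval
  have he1 : ∀ r ∈ Ioo (0:ℝ) r₀, derivWithin u (Icc 0 r₀) r = deriv u r := fun r hr =>
    derivWithin_of_mem_nhds (Filter.mem_of_superset (hnhds r hr) hIoo_subI)
  -- u is C² on the open interval, hence deriv u is C¹ there
  have hu2' : ContDiffOn ℝ 2 u (Ioo 0 r₀) := hu2.mono hIoo_sub
  have hdu : ContDiffOn ℝ 1 (deriv u) (Ioo 0 r₀) :=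
    hu2'.deriv_of_isOpen isOpen_Ioo (by norm_num)
  have hud : ∀ r ∈ Ioo (0:ℝ) r₀, DifferentiableAt ℝ u r := fun r hr =>
    ((hu2'.contDiffAt (hnhds r hr)).differentiableAt (by norm_num))
  have hdud : ∀ r ∈ Ioo (0:ℝ) r₀, DifferentiableAt ℝ (deriv u) r := fun r hr =>
    ((hdu.contDiffAt (hnhds r hr)).differentiableAt (by norm_num))
  -- derivative of x for s < s₀
  have hDx : ∀ t : ℝ, t < s₀ →
      HasDerivAt x (deriv u (Real.exp t) * Real.exp t + 2) t := by
    intro t ht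
    have h1 : HasDerivAt (fun s => u (Real.exp s)) (deriv u (Real.exp t) * Real.exp t) t :=
      ((hud _ (hmemo t ht)).hasDerivAt).comp t (Real.hasDerivAt_exp t)
    have h2 : HasDerivAt (fun s : ℝ => 2 * s - κ) 2 t := by
      simpa using ((hasDerivAt_id t).const_mul 2).sub_const κ
    rw [hx]
    have := h1.add h2
    exact this.congr_of_eventuallyEq (Filter.Eventually.of_forall fun s => by simp only [Pi.add_apply]; ring)
  have hderiv : ∀ t : ℝ, t < s₀ → deriv x t = deriv u (Real.exp t) * Real.exp t + 2 :=
    fun t ht => (hDx t ht).deriv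
  refine ⟨?_, ?_, ?_, ?_⟩
  · -- smoothness
    rw [hx]
    have h1 : ContDiffOn ℝ 2 (fun s => u (Real.exp s)) (Iic s₀) :=
      hu2.comp Real.contDiff_exp.contDiffOn (fun s hs => hmem s hs)
    have h2 : ContDiffOn ℝ 2 (fun s : ℝ => 2 * s - κ) (Iic s₀) :=
      ((contDiff_const.mul contDiff_id).sub contDiff_const).contDiffOn
    exact (h1.add h2).congr (fun s _ => by ring)
  · -- the ODE
    intro s hs
    set r := Real.exp s with hr
    have hrIoo : r ∈ Ioo (0:ℝ) r₀ := hmemo s hs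
    have hrpos : 0 < r := hrIoo.1
    have hrne : r ≠ 0 := ne_of_gt hrpos
    -- second derivative of x
    have hEq : deriv x =ᶠ[nhds s] fun t => deriv u (Real.exp t) * Real.exp t + 2 := by
      filter_upwards [Iio_mem_nhds hs] with t ht using hderiv t ht
    have hD2 : HasDerivAt (fun t => deriv u (Real.exp t) * Real.exp t + 2)
        (deriv (deriv u) r * r * r + deriv u r * r) s := by
      have h1 : HasDerivAt (fun t => deriv u (Real.exp t)) (deriv (deriv u) r * r) s :=
        by have := ((hdud _ hrIoo).hasDerivAt).comp s (Real.hasDerivAt_exp s); exact this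
      simpa using (h1.mul (Real.hasDerivAt_exp s)).add_const 2
    have hxd2 : deriv (deriv x) s = deriv (deriv u) r * r * r + deriv u r * r := by
      rw [hEq.deriv_eq]; exact hD2.deriv
    -- rewrite the within-derivatives in the ODE hypothesis
    have he2 : derivWithin (derivWithin u (Icc 0 r₀)) (Icc 0 r₀) r = deriv (deriv u) r := by
      rw [derivWithin_of_mem_nhds (Filter.mem_of_superset (hnhds r hrIoo) hIoo_subI)]
      exact (Filter.eventuallyEq_of_mem (hnhds r hrIoo) he1).deriv_eq
    have hE := hode r (hIoo_sub hrIoo)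
    rw [he1 r hrIoo, he2] at hE
    -- tanh identity
    have hδpos : 0 < δ := hδ ▸ Real.exp_pos _
    have hdenpos : 0 < 1 + δ * r ^ 2 := by nlinarith [sq_nonneg r]
    have hden : 1 + δ * r ^ 2 ≠ 0 := ne_of_gt hdenpos
    have hδr : δ * r ^ 2 = Real.exp (s - α / 2) ^ 2 := by
      rw [hδ, hr, pow_two, pow_two, ← Real.exp_add, ← Real.exp_add, ← Real.exp_add]
      congr 1; ring
    have htanh : Real.tanh (s - α / 2) = (δ * r ^ 2 - 1) / (δ * r ^ 2 + 1) := by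
      rw [Real.tanh_eq_sinh_div_cosh, Real.sinh_eq, Real.cosh_eq, hδr, Real.exp_neg]
      have ha : Real.exp (s - α / 2) ≠ 0 := (Real.exp_pos _).ne'
      have hb : Real.exp (s - α / 2) ^ 2 + 1 ≠ 0 := by positivity
      field_simp
    -- exp (x s) identity
    have hexp : Real.exp (x s) = 4 * ((N:ℝ) - 2) / ((N:ℝ) - 3) * (r ^ 2 * Real.exp (u r)) := by
      have hx3 : x s = u r + 2 * s - κ := by simp only [hx]; rfl
      rw [hx3, hκ, show u r + 2 * s - (Real.log (((N:ℝ) - 3) / ((N:ℝ) - 2)) - 2 * Real.log 2)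
        = u r + (s + s) + (Real.log 2 + Real.log 2) - Real.log (((N:ℝ) - 3) / ((N:ℝ) - 2)) by ring]
      rw [Real.exp_sub, Real.exp_add, Real.exp_add, Real.exp_add, Real.exp_add,
        Real.exp_log (div_pos (by linarith) (by linarith)), Real.exp_log two_pos, ← hr]
      field_simp
      ring
    rw [hxd2, hderiv s hs, htanh, hexp, ← hr]
    have hden' : δ * r ^ 2 + 1 ≠ 0 := by nlinarith [sq_nonneg r]
    field_simp at hE ⊢
    linear_combination r * hE
  · -- limit of x s - 2 s + κ
    have hfe : (fun s => x s - 2 * s + κ) = fun s => u (Real.exp s) := by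
      funext s; rw [hx]; ring
    rw [hfe, ← hu0]
    have hc : ContinuousWithinAt u (Icc 0 r₀) 0 :=
      hu1.continuousOn 0 (left_mem_Icc.2 hr₀pos.le)
    apply hc.tendsto.comp
    apply tendsto_nhdsWithin_of_tendsto_nhds_of_eventually_within _ Real.tendsto_exp_atBot
    filter_upwards [Iic_mem_atBot s₀] with s hs using Ioc_subset_Icc_self (hmem s hs)
  · -- limit of exp(-s) (x' - 2)
    have hcong : (fun s => Real.exp (-s) * (deriv x s - 2)) =ᶠ[atBot]
        fun s => derivWithin u (Icc 0 r₀) (Real.exp s) := by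
      filter_upwards [Iio_mem_atBot s₀] with s hs
      rw [hderiv s hs, he1 _ (hmemo s hs)]
      rw [show Real.exp (-s) * (deriv u (Real.exp s) * Real.exp s + 2 - 2)
        = deriv u (Real.exp s) * (Real.exp (-s) * Real.exp s) by ring, ← Real.exp_add]
      simp
    have hc : ContinuousWithinAt (derivWithin u (Icc 0 r₀)) (Icc 0 r₀) 0 :=
      (hu1.continuousOn_derivWithin (uniqueDiffOn_Icc hr₀pos) le_rfl) 0
        (left_mem_Icc.2 hr₀pos.le)
    have htends : Tendsto (fun s => derivWithin u (Icc 0 r₀) (Real.exp s)) atBot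
        (nhds (derivWithin u (Icc 0 r₀) 0)) := by
      apply hc.tendsto.comp
      apply tendsto_nhdsWithin_of_tendsto_nhds_of_eventually_within _ Real.tendsto_exp_atBot
      filter_upwards [Iic_mem_atBot s₀] with s hs using Ioc_subset_Icc_self (hmem s hs)
    rw [hu0'] at htends
    exact htends.congr' hcong.symm
end

section
/- Let N ≥ 4 be an integer, r₀ > 0, and let u₀ : [0,r₀] → ℝ be continuous. Suppose φ ∈ C²((0,r₀]) ∩ C¹([0,r₀]) satisfies φ''(r) + ((N−2)/r) φ'(r) + 8(N−2) e^{u₀(r)} φ(r) = 0 for all r ∈ (0,r₀], with φ(0) = 0 and φ'(0) = 0. Then φ(r) = 0 for all r ∈ [0,r₀]. -/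
open Real Set Filter Topology

theorem stmt_14 (N : ℕ) (hN : 4 ≤ N) (r₀ : ℝ) (hr₀ : 0 < r₀)
    (u₀ : ℝ → ℝ) (hu₀ : ContinuousOn u₀ (Icc 0 r₀))
    (φ : ℝ → ℝ)
    (hφ2 : ContDiffOn ℝ 2 φ (Ioc 0 r₀)) (hφ1 : ContDiffOn ℝ 1 φ (Icc 0 r₀))
    (hode : ∀ r ∈ Ioc (0:ℝ) r₀,
      derivWithin (derivWithin φ (Icc 0 r₀)) (Icc 0 r₀) r
        + (((N : ℝ) - 2) / r) * derivWithin φ (Icc 0 r₀) r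
        + 8 * ((N : ℝ) - 2) * Real.exp (u₀ r) * φ r = 0)
    (hφ0 : φ 0 = 0) (hφ0' : derivWithin φ (Icc 0 r₀) 0 = 0) :
    ∀ r ∈ Icc (0:ℝ) r₀, φ r = 0 := by
  set ψ : ℝ → ℝ := derivWithin φ (Icc 0 r₀) with hψdef
  have hUD : UniqueDiffOn ℝ (Icc (0:ℝ) r₀) := uniqueDiffOn_Icc hr₀
  have hφc : ContinuousOn φ (Icc 0 r₀) := hφ1.continuousOn
  have hψc : ContinuousOn ψ (Icc 0 r₀) :=
    hφ1.continuousOn_derivWithin hUD le_rfl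
  -- bound for u₀
  obtain ⟨z, hz, hzmax⟩ : ∃ z ∈ Icc (0:ℝ) r₀, ∀ y ∈ Icc (0:ℝ) r₀, u₀ y ≤ u₀ z := by
    obtain ⟨z, hz, hzm⟩ := isCompact_Icc.exists_isMaxOn ⟨0, le_refl 0, le_of_lt hr₀⟩ hu₀
    exact ⟨z, hz, fun y hy => hzm hy⟩
  set M : ℝ := u₀ z with hMdef
  have hN2 : (2:ℝ) ≤ (N:ℝ) - 2 := by
    have : (4:ℝ) ≤ (N:ℝ) := by exact_mod_cast hN
    linarith
  set C : ℝ := 1 + 8 * ((N:ℝ) - 2) * Real.exp M with hCdef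
  have hC0 : 0 ≤ C := by
    have := Real.exp_pos M
    nlinarith
  set g : ℝ → ℝ := fun x => (φ x) ^ 2 + (ψ x) ^ 2 with hgdef
  have hgc : ContinuousOn g (Icc 0 r₀) := by
    exact (hφc.pow 2).add (hψc.pow 2)
  have hg0 : g 0 = 0 := by
    simp [hgdef, hφ0, ← hψdef, hφ0']
  have hgnn : ∀ x, 0 ≤ g x := fun x => by positivity
  -- key derivative estimate at interior points
  have key : ∀ x ∈ Ioo (0:ℝ) r₀, ∃ d, HasDerivAt g d x ∧ d ≤ C * g x := by
    intro x hx
    have hmem : Icc (0:ℝ) r₀ ∈ 𝓝 x := Icc_mem_nhds hx.1 hx.2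
    have hmemo : Ioo (0:ℝ) r₀ ∈ 𝓝 x := Ioo_mem_nhds hx.1 hx.2
    have hψeq : ψ =ᶠ[𝓝 x] deriv φ := by
      filter_upwards [hmemo] with y hy
      exact derivWithin_of_mem_nhds (Icc_mem_nhds hy.1 hy.2)
    -- φ differentiable with derivative ψ x
    have hφdiff : DifferentiableAt ℝ φ x :=
      ((hφ1.differentiableOn one_ne_zero) x ⟨le_of_lt hx.1, le_of_lt hx.2⟩).differentiableAt hmem
    have hψx : ψ x = deriv φ x := derivWithin_of_mem_nhds hmem
    have hφat : HasDerivAt φ (ψ x) x := by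
      rw [hψx]; exact hφdiff.hasDerivAt
    -- deriv φ differentiable at x
    have hφ2' : ContDiffOn ℝ 2 φ (Ioo 0 r₀) := hφ2.mono Ioo_subset_Ioc_self
    have hdd : ContDiffOn ℝ 1 (deriv φ) (Ioo 0 r₀) :=
      hφ2'.deriv_of_isOpen isOpen_Ioo (by norm_num)
    have hddiff : DifferentiableAt ℝ (deriv φ) x :=
      ((hdd.differentiableOn one_ne_zero) x hx).differentiableAt hmemo
    have hψat : HasDerivAt ψ (deriv (deriv φ) x) x :=
      hddiff.hasDerivAt.congr_of_eventuallyEq hψeq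
    -- the ODE at x
    have hodex := hode x ⟨hx.1, le_of_lt hx.2⟩
    have hχx : derivWithin ψ (Icc 0 r₀) x = deriv (deriv φ) x := by
      rw [derivWithin_of_mem_nhds hmem]
      exact hψeq.deriv_eq
    rw [hχx] at hodex
    have hD : deriv (deriv φ) x
        = -(((N:ℝ) - 2) / x) * ψ x - 8 * ((N:ℝ) - 2) * Real.exp (u₀ x) * φ x := by
      linarith
    -- derivative of g
    have hgat : HasDerivAt g (2 * φ x * ψ x + 2 * ψ x * deriv (deriv φ) x) x := by
      have h1 := (hφat.mul hφat)
      have h2 := (hψat.mul hψat)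
      have := h1.add h2
      exact (this.congr_deriv (by ring)).congr_of_eventuallyEq
        (Eventually.of_forall fun y => by simp only [hgdef, Pi.add_apply, Pi.mul_apply]; ring)
    refine ⟨_, hgat, ?_⟩
    rw [hD]
    have hA : 0 ≤ ((N:ℝ) - 2) / x := div_nonneg (by linarith) (le_of_lt hx.1)
    have hE : Real.exp (u₀ x) ≤ Real.exp M :=
      Real.exp_le_exp.2 (hzmax x ⟨le_of_lt hx.1, le_of_lt hx.2⟩)
    have hEpos : 0 < Real.exp (u₀ x) := Real.exp_pos _
    have h1 : 0 ≤ ((N:ℝ) - 2) / x * (ψ x) ^ 2 := by positivity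
    have h2 : 0 ≤ ((N:ℝ) - 2) * Real.exp (u₀ x) * (φ x + ψ x) ^ 2 := by positivity
    have h3 : 0 ≤ ((N:ℝ) - 2) * Real.exp (u₀ x) * (φ x - ψ x) ^ 2 := by positivity
    have h4 : 0 ≤ ((N:ℝ) - 2) * (Real.exp M - Real.exp (u₀ x)) * ((φ x) ^ 2 + (ψ x) ^ 2) := by
      have : 0 ≤ Real.exp M - Real.exp (u₀ x) := by linarith
      positivity
    simp only [hgdef, hCdef]
    nlinarith [sq_nonneg (φ x + ψ x), sq_nonneg (φ x - ψ x)]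
  -- main argument
  intro r hr
  rcases eq_or_lt_of_le hr.1 with h0 | h0
  · rw [← h0]; exact hφ0
  -- Gronwall on [ε, r] for every ε ∈ (0, r]
  have gron : ∀ ε ∈ Ioc (0:ℝ) r, g r ≤ g ε * Real.exp (C * (r - ε)) := by
    intro ε hε
    have hsub : Icc ε r ⊆ Icc 0 r₀ := Icc_subset_Icc (le_of_lt hε.1) hr.2
    have hsub' : Ico ε r ⊆ Ioo 0 r₀ := fun y hy =>
      ⟨lt_of_lt_of_le hε.1 hy.1, lt_of_lt_of_le hy.2 hr.2⟩
    have := le_gronwallBound_of_liminf_deriv_right_le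
      (f := g) (f' := fun x => C * g x) (δ := g ε) (K := C) (ε := 0)
      (a := ε) (b := r) (hgc.mono hsub)
      (fun x hx ρ hρ => by
        obtain ⟨d, hd, hdle⟩ := key x (hsub' hx)
        have hslope : Tendsto (slope g x) (𝓝[>] x) (𝓝 d) := by
          have := hasDerivAt_iff_tendsto_slope.1 hd
          exact this.mono_left (nhdsWithin_mono _ (fun y hy => ne_of_gt hy))
        have hev : ∀ᶠ ζ in 𝓝[>] x, slope g x ζ < ρ :=
          hslope.eventually_lt_const (lt_of_le_of_lt hdle hρ)
        refine (hev.mono fun ζ hζ => ?_).frequently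
        rwa [slope_def_field, div_eq_inv_mul] at hζ)
      le_rfl
      (fun x _ => by simp)
      r ⟨hε.2, le_refl r⟩
    rwa [gronwallBound_ε0] at this
  -- limit ε → 0⁺
  have hgr : g r ≤ 0 := by
    by_contra hpos
    push_neg at hpos
    have hη : 0 < g r / Real.exp (C * r) := by positivity
    have hcont : ContinuousWithinAt g (Icc 0 r₀) 0 :=
      hgc 0 ⟨le_refl 0, le_of_lt hr₀⟩
    have hev : ∀ᶠ x in 𝓝[Icc (0:ℝ) r₀] 0, g x < g r / Real.exp (C * r) := by
      have := hcont.tendsto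
      rw [hg0] at this
      exact this.eventually_lt_const hη
    have hev' : ∀ᶠ x in 𝓝[Ioc (0:ℝ) r] 0, g x < g r / Real.exp (C * r) :=
      hev.filter_mono (nhdsWithin_mono _ (Ioc_subset_Icc_self.trans (Icc_subset_Icc le_rfl hr.2)))
    have hNB : (𝓝[Ioc (0:ℝ) r] 0).NeBot := by
      rw [← mem_closure_iff_nhdsWithin_neBot, closure_Ioc (ne_of_lt h0)]
      exact ⟨le_refl 0, le_of_lt h0⟩
    obtain ⟨ε, hεlt, hεmem⟩ := (hev'.and (eventually_mem_nhdsWithin)).exists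
    have h1 := gron ε hεmem
    have h2 : Real.exp (C * (r - ε)) ≤ Real.exp (C * r) := by
      apply Real.exp_le_exp.2
      have hε0 : 0 ≤ ε := le_of_lt hεmem.1
      nlinarith
    have h3 : g ε * Real.exp (C * (r - ε)) < g r := by
      calc g ε * Real.exp (C * (r - ε)) ≤ g ε * Real.exp (C * r) :=
            mul_le_mul_of_nonneg_left h2 (hgnn ε)
        _ < (g r / Real.exp (C * r)) * Real.exp (C * r) := by
            apply mul_lt_mul_of_pos_right hεlt (Real.exp_pos _)
        _ = g r := by field_simp
    linarith
  have hgr' : φ r ^ 2 + ψ r ^ 2 ≤ 0 := hgr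
  have hφsq : φ r ^ 2 ≤ 0 := by nlinarith [sq_nonneg (ψ r)]
  have := sq_nonneg (φ r)
  have h2 : φ r ^ 2 = 0 := le_antisymm hφsq this
  exact pow_eq_zero_iff (by norm_num) |>.1 h2
end

section
/- Let N ≥ 4 be an integer, κ̃ := log((N−3)/(N−2)) − 2 log 2, and κ̄ := log(2(N−3)). Let x̄ ∈ C²(ℝ) be the unique entire solution of x̄'' + (N−3)x̄' + 2(N−3)(e^{x̄} − 1) = 0 with x̄(s) − 2s + κ̄ − log(8(N−2)) → 0 and e^{−s}(x̄'(s) − 2) → 0 as s → −∞, and set ȳ := x̄'. For α ∈ ℝ let x̃(·,α) ∈ C²((−∞,α/2]) be a solution of x̃'' − (N−3) tanh(s − α/2) x̃' + 2(N−3)(e^{x̃} − 1) = 0 on (−∞,α/2) with x̃(s,α) − 2s + κ̃ → 0 and e^{−s}(x̃'(s,α) − 2) → 0 as s → −∞, and set ỹ := x̃'. Then for every s₀ ∈ ℝ and every ε > 0 there exists α₀ > max(2s₀, 0) such that for all α > α₀: sup_{s ≤ s₀} |x̄(s) − x̃(s,α)| < ε and sup_{s ≤ s₀} |ȳ(s)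 − ỹ(s,α)| < ε. -/
open Real Set Filter

set_option maxHeartbeats 2000000

section helpers

private lemma aux_exp_diff (a b : ℝ) : |Real.exp a - Real.exp b| ≤ Real.exp (max a b) * |a - b| := by
  have key : ∀ u v : ℝ, v ≤ u → Real.exp u - Real.exp v ≤ Real.exp (max u v) * |u - v| := by
    intro u v huv
    rw [max_eq_left huv, abs_of_nonneg (sub_nonneg.mpr huv)]
    have h1 : (v - u) + 1 ≤ Real.exp (v - u) := Real.add_one_le_exp _
    have h2 : Real.exp v = Real.exp u * Real.exp (v - u) := by rw [← Real.exp_add]; ring_nf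
    nlinarith [Real.exp_pos u]
  rcases le_total b a with h | h
  · rw [abs_of_nonneg (sub_nonneg.mpr (Real.exp_le_exp.mpr h))]; exact key a b h
  · rw [abs_of_nonpos (sub_nonpos.mpr (Real.exp_le_exp.mpr h)), neg_sub, max_comm, abs_sub_comm]
    exact key b a h

private lemma aux_tanh_add_one_nonneg (x : ℝ) : 0 ≤ Real.tanh x + 1 := by
  have h := Real.cosh_pos x
  have h1 : Real.tanh x + 1 = Real.exp x / Real.cosh x := by
    rw [Real.tanh_eq_sinh_div_cosh, div_add' _ _ _ (ne_of_gt h), one_mul, Real.sinh_add_cosh]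
  rw [h1]
  exact div_nonneg (Real.exp_pos x).le h.le

private lemma aux_tanh_le_one (x : ℝ) : Real.tanh x ≤ 1 := by
  have h := Real.cosh_pos x
  rw [Real.tanh_eq_sinh_div_cosh, div_le_one h]
  nlinarith [Real.cosh_sub_sinh x, Real.exp_pos (-x)]

private lemma aux_tanh_add_one_le (x : ℝ) : Real.tanh x + 1 ≤ 2 * Real.exp (2 * x) := by
  have h := Real.cosh_pos x
  have h1 : Real.tanh x + 1 = Real.exp x / Real.cosh x := by
    rw [Real.tanh_eq_sinh_div_cosh, div_add' _ _ _ (ne_of_gt h), one_mul, Real.sinh_add_cosh]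
  rw [h1, div_le_iff₀ h]
  have h2 : Real.exp (-x) / 2 ≤ Real.cosh x := by rw [Real.cosh_eq]; nlinarith [Real.exp_pos x]
  have h7 : Real.exp (2 * x) * Real.exp (-x) = Real.exp x := by rw [← Real.exp_add]; ring_nf
  nlinarith [Real.exp_pos (2 * x), Real.exp_pos (-x)]

private lemma aux_bdd (f : ℝ → ℝ) (b c : ℝ) (hf : ContinuousOn f (Iic b))
    (hl : Tendsto f atBot (nhds c)) : ∃ M : ℝ, 1 ≤ M ∧ ∀ s ≤ b, |f s| ≤ M := by
  have h1 : ∀ᶠ s in atBot, |f s - c| < 1 := by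
    have := Metric.tendsto_nhds.mp hl 1 one_pos
    simpa [Real.dist_eq] using this
  obtain ⟨T, hT⟩ := eventually_atBot.mp h1
  obtain ⟨C, hC⟩ := (isCompact_Icc (a := T) (b := b)).exists_bound_of_continuousOn
      (hf.mono (fun x hx => hx.2))
  refine ⟨max (max (|c| + 1) C) 1, le_max_right _ _, fun s hs => ?_⟩
  rcases le_total s T with h | h
  · have h2 := hT s h
    have h3 : |f s| ≤ |c| + 1 := by
      have := abs_sub_abs_le_abs_sub (f s) c
      linarith
    exact le_trans h3 (le_trans (le_max_left _ _) (le_max_left _ _))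
  · have h2 := hC s ⟨h, hs⟩
    rw [Real.norm_eq_abs] at h2
    exact le_trans h2 (le_trans (le_max_right _ _) (le_max_left _ _))

private lemma aux_int_exp (cc a s : ℝ) (hcc : 0 < cc) :
    ∫ t in a..s, Real.exp (cc * t) = (Real.exp (cc * s) - Real.exp (cc * a)) / cc := by
  have h : ∀ t ∈ uIcc a s, HasDerivAt (fun t => Real.exp (cc * t) / cc) (Real.exp (cc * t)) t := by
    intro t _
    have h1 : HasDerivAt (fun t : ℝ => cc * t) cc t := by
      simpa using (hasDerivAt_id t).const_mul cc
    have h2 := (h1.exp).div_const cc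
    refine h2.congr_deriv ?_
    field_simp [hcc.ne']
  rw [intervalIntegral.integral_eq_sub_of_hasDerivAt h
      ((Real.continuous_exp.comp (continuous_const.mul continuous_id)).continuousOn.intervalIntegrable)]
  ring

private lemma stepA_est
    (d B s₂' : ℝ) (w w' w'' : ℝ → ℝ)
    (hd : 1 ≤ d) (hB : 0 ≤ B)
    (hw1 : ∀ s ≤ s₂', HasDerivAt w (w' s) s)
    (hw2 : ∀ s ≤ s₂', HasDerivAt w' (w'' s) s)
    (hw''c : ContinuousOn w'' (Iic s₂'))
    (hw0 : Tendsto w atBot (nhds 0))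
    (hwd0 : Tendsto (fun a => Real.exp (d * a) * w' a) atBot (nhds 0))
    (hG : ∀ t ≤ s₂', |w'' t + d * w' t| ≤ B * Real.exp (2 * t)) :
    ∀ s ≤ s₂', |w' s| ≤ B * Real.exp (2 * s) ∧ |w s| ≤ B * Real.exp (2 * s) := by
  have hd0 : 0 < d := lt_of_lt_of_le one_pos hd
  have hw'c : ContinuousOn w' (Iic s₂') :=
    fun s hs => ((hw2 s hs).continuousAt).continuousWithinAt
  have hA1 : ∀ s ≤ s₂', |w' s| ≤ B * Real.exp (2 * s) := by
    intro s hs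
    have hXbound : Real.exp (d * s) * |w' s| ≤ B * Real.exp ((d + 2) * s) / (d + 2) := by
      have hev : ∀ᶠ a in atBot, Real.exp (d * s) * |w' s| ≤
          |Real.exp (d * a) * w' a| + B * Real.exp ((d + 2) * s) / (d + 2) := by
        filter_upwards [eventually_le_atBot s] with a ha
        have hsub : Icc a s ⊆ Iic s₂' := fun t ht => le_trans ht.2 hs
        have hderiv : ∀ t ∈ uIcc a s,
            HasDerivAt (fun t => Real.exp (d * t) * w' t)
              (Real.exp (d * t) * (w'' t + d * w' t)) t := by
          intro t ht
          rw [uIcc_of_le ha] at ht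
          have h1 : HasDerivAt (fun t : ℝ => d * t) d t := by
            simpa using (hasDerivAt_id t).const_mul d
          have h2 := (h1.exp).mul (hw2 t (hsub ht))
          refine h2.congr_deriv ?_
          ring
        have hcont : ContinuousOn (fun t => Real.exp (d * t) * (w'' t + d * w' t)) (uIcc a s) := by
          rw [uIcc_of_le ha]
          exact ((Real.continuous_exp.comp (continuous_const.mul continuous_id)).continuousOn.mul
            (((hw''c.mono hsub)).add (continuousOn_const.mul (hw'c.mono hsub))))
        have hftc := intervalIntegral.integral_eq_sub_of_hasDerivAt hderiv
          (hcont.intervalIntegrable)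
        have hintb : |∫ t in a..s, Real.exp (d * t) * (w'' t + d * w' t)| ≤
            B * Real.exp ((d + 2) * s) / (d + 2) := by
          have hgi : IntervalIntegrable (fun t => B * Real.exp ((d + 2) * t))
              MeasureTheory.volume a s :=
            ((continuous_const.mul (Real.continuous_exp.comp
              (continuous_const.mul continuous_id))).continuousOn).intervalIntegrable
          have hb1 : ‖∫ t in a..s, Real.exp (d * t) * (w'' t + d * w' t)‖ ≤
              |∫ t in a..s, B * Real.exp ((d + 2) * t)| := by
            apply intervalIntegral.norm_integral_le_abs_of_norm_le _ hgi
            rw [MeasureTheory.ae_restrict_iff' measurableSet_uIoc]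
            apply Filter.Eventually.of_forall
            intro t ht
            rw [uIoc_of_le ha] at ht
            have ht' : t ≤ s₂' := le_trans ht.2 hs
            rw [Real.norm_eq_abs, abs_mul, abs_of_pos (Real.exp_pos _)]
            calc Real.exp (d * t) * |w'' t + d * w' t|
                ≤ Real.exp (d * t) * (B * Real.exp (2 * t)) :=
                  mul_le_mul_of_nonneg_left (hG t ht') (Real.exp_pos _).le
              _ = B * Real.exp ((d + 2) * t) := by
                  rw [show (d + 2) * t = d * t + 2 * t by ring, Real.exp_add]; ring
          have hb2 : ∫ t in a..s, B * Real.exp ((d + 2) * t) =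
              B * ((Real.exp ((d + 2) * s) - Real.exp ((d + 2) * a)) / (d + 2)) := by
            rw [intervalIntegral.integral_const_mul, aux_int_exp (d + 2) a s (by linarith)]
          rw [Real.norm_eq_abs] at hb1
          refine le_trans hb1 ?_
          rw [hb2, abs_of_nonneg]
          · have hexpm : Real.exp ((d + 2) * a) ≤ Real.exp ((d + 2) * s) :=
              Real.exp_le_exp.mpr (by nlinarith)
            rw [mul_div_assoc]
            gcongr
            nlinarith [Real.exp_pos ((d + 2) * a)]
          · apply mul_nonneg hB
            apply div_nonneg _ (by linarith)
            have : Real.exp ((d + 2) * a) ≤ Real.exp ((d + 2) * s) :=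
              Real.exp_le_exp.mpr (by nlinarith)
            linarith
        have heq : Real.exp (d * s) * w' s =
            Real.exp (d * a) * w' a + ∫ t in a..s, Real.exp (d * t) * (w'' t + d * w' t) := by
          rw [hftc]; ring
        calc Real.exp (d * s) * |w' s| = |Real.exp (d * s) * w' s| := by
              rw [abs_mul, abs_of_pos (Real.exp_pos _)]
          _ ≤ |Real.exp (d * a) * w' a| +
              |∫ t in a..s, Real.exp (d * t) * (w'' t + d * w' t)| := by
              rw [heq]; exact abs_add_le _ _
          _ ≤ |Real.exp (d * a) * w' a| + B * Real.exp ((d + 2) * s) / (d + 2) := by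
              linarith
      have h0 := hwd0.abs
      rw [abs_zero] at h0
      have hlim := h0.add_const (B * Real.exp ((d + 2) * s) / (d + 2))
      rw [zero_add] at hlim
      exact ge_of_tendsto hlim hev
    have h5 : Real.exp (d * s) * |w' s| ≤ Real.exp (d * s) * (B * Real.exp (2 * s)) := by
      refine le_trans hXbound ?_
      rw [show (d + 2) * s = d * s + 2 * s by ring, Real.exp_add,
        div_le_iff₀ (by linarith : (0:ℝ) < d + 2)]
      nlinarith [mul_nonneg hB (mul_nonneg (Real.exp_pos (d * s)).le (Real.exp_pos (2 * s)).le)]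
    exact le_of_mul_le_mul_left h5 (Real.exp_pos _)
  refine fun s hs => ⟨hA1 s hs, ?_⟩
  have hev : ∀ᶠ a in atBot, |w s| ≤ |w a| + B * Real.exp (2 * s) / 2 := by
    filter_upwards [eventually_le_atBot s] with a ha
    have hsub : Icc a s ⊆ Iic s₂' := fun t ht => le_trans ht.2 hs
    have hderiv : ∀ t ∈ uIcc a s, HasDerivAt w (w' t) t := by
      intro t ht
      rw [uIcc_of_le ha] at ht
      exact hw1 t (hsub ht)
    have hftc := intervalIntegral.integral_eq_sub_of_hasDerivAt hderiv
      ((hw'c.mono (by rw [uIcc_of_le ha]; exact hsub)).intervalIntegrable)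
    have hintb : |∫ t in a..s, w' t| ≤ B * Real.exp (2 * s) / 2 := by
      have hgi : IntervalIntegrable (fun t => B * Real.exp (2 * t)) MeasureTheory.volume a s :=
        ((continuous_const.mul (Real.continuous_exp.comp
          (continuous_const.mul continuous_id))).continuousOn).intervalIntegrable
      have hb1 : ‖∫ t in a..s, w' t‖ ≤ |∫ t in a..s, B * Real.exp (2 * t)| := by
        apply intervalIntegral.norm_integral_le_abs_of_norm_le _ hgi
        rw [MeasureTheory.ae_restrict_iff' measurableSet_uIoc]
        apply Filter.Eventually.of_forall
        intro t ht
        rw [uIoc_of_le ha] at ht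
        rw [Real.norm_eq_abs]
        exact hA1 t (le_trans ht.2 hs)
      have hb2 : ∫ t in a..s, B * Real.exp (2 * t) =
          B * ((Real.exp (2 * s) - Real.exp (2 * a)) / 2) := by
        rw [intervalIntegral.integral_const_mul, aux_int_exp 2 a s (by norm_num)]
      rw [Real.norm_eq_abs] at hb1
      refine le_trans hb1 ?_
      rw [hb2, abs_of_nonneg]
      · have hexpm : Real.exp (2 * a) ≤ Real.exp (2 * s) := Real.exp_le_exp.mpr (by linarith)
        rw [mul_div_assoc]
        gcongr
        nlinarith [Real.exp_pos (2 * a)]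
      · apply mul_nonneg hB
        apply div_nonneg _ (by norm_num)
        have : Real.exp (2 * a) ≤ Real.exp (2 * s) := Real.exp_le_exp.mpr (by linarith)
        linarith
    have heq : w s = w a + ∫ t in a..s, w' t := by rw [hftc]; ring
    calc |w s| ≤ |w a| + |∫ t in a..s, w' t| := by rw [heq]; exact abs_add_le _ _
      _ ≤ |w a| + B * Real.exp (2 * s) / 2 := by linarith
  have h0 := hw0.abs
  rw [abs_zero] at h0
  have hlim := h0.add_const (B * Real.exp (2 * s) / 2)
  rw [zero_add] at hlim
  have := ge_of_tendsto hlim hev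
  nlinarith [Real.exp_pos (2 * s), mul_nonneg hB (Real.exp_pos (2 * s)).le]

private lemma first_violation
    (ρ S₁ : ℝ) (g h : ℝ → ℝ)
    (hg : ContinuousOn g (Iic S₁)) (hh : ContinuousOn h (Iic S₁))
    (hρ : 0 < ρ)
    (h0 : ∀ᶠ t in atBot, g t < ρ ∧ h t < ρ)
    (key : ∀ s₂ ≤ S₁, (∀ t ≤ s₂, g t ≤ ρ ∧ h t ≤ ρ) → g s₂ ≤ ρ / 2 ∧ h s₂ ≤ ρ / 2) :
    ∀ t ≤ S₁, g t < ρ ∧ h t < ρ := by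
  by_contra hcon
  push_neg at hcon
  obtain ⟨t₀, ht₀S, ht₀⟩ := hcon
  set gC : ℝ → ℝ := fun t => g (min t S₁) with hgC
  set hC : ℝ → ℝ := fun t => h (min t S₁) with hhC
  have hgCc : Continuous gC :=
    hg.comp_continuous (continuous_id.min continuous_const) (fun x => min_le_right x S₁)
  have hhCc : Continuous hC :=
    hh.comp_continuous (continuous_id.min continuous_const) (fun x => min_le_right x S₁)
  have hgCeq : ∀ t, t ≤ S₁ → gC t = g t := fun t ht => by
    rw [hgC]; simp only [min_eq_left ht]
  have hhCeq : ∀ t, t ≤ S₁ → hC t = h t := fun t ht => by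
    rw [hhC]; simp only [min_eq_left ht]
  set V : Set ℝ := {t | t ≤ S₁ ∧ (ρ ≤ gC t ∨ ρ ≤ hC t)} with hV
  have hVne : V.Nonempty := by
    refine ⟨t₀, ht₀S, ?_⟩
    rw [hgCeq t₀ ht₀S, hhCeq t₀ ht₀S]
    by_cases hg0 : g t₀ < ρ
    · exact Or.inr (ht₀ hg0)
    · exact Or.inl (not_lt.mp hg0)
  have hVclosed : IsClosed V := by
    have h1 : V = Iic S₁ ∩ ({t | ρ ≤ gC t} ∪ {t | ρ ≤ hC t}) := by
      ext t
      simp only [hV, mem_setOf_eq, mem_inter_iff, mem_Iic, mem_union]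
    rw [h1]
    exact isClosed_Iic.inter ((isClosed_le continuous_const hgCc).union
      (isClosed_le continuous_const hhCc))
  obtain ⟨a₀, ha₀⟩ := eventually_atBot.mp h0
  have hVbdd : BddBelow V := by
    refine ⟨a₀, fun t htV => ?_⟩
    by_contra hlt
    push_neg at hlt
    have h1 := ha₀ t hlt.le
    rcases htV.2 with h2 | h2
    · rw [hgCeq t htV.1] at h2; linarith [h1.1]
    · rw [hhCeq t htV.1] at h2; linarith [h1.2]
  set s₂ : ℝ := sInf V with hs₂def
  have hs₂V : s₂ ∈ V := hVclosed.csInf_mem hVne hVbdd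
  have hs₂S : s₂ ≤ S₁ := hs₂V.1
  have hPlt : ∀ t, t < s₂ → g t ≤ ρ ∧ h t ≤ ρ := by
    intro t ht
    have htS : t ≤ S₁ := le_trans ht.le hs₂S
    have hnot : t ∉ V := notMem_of_lt_csInf ht hVbdd
    rw [hV] at hnot
    simp only [mem_setOf_eq, not_and_or, not_or, not_le] at hnot
    rcases hnot with h1 | h1
    · exact absurd h1 (not_lt.mpr htS)
    · rw [hgCeq t htS, hhCeq t htS] at h1
      exact ⟨h1.1.le, h1.2.le⟩
  have hPs₂ : g s₂ ≤ ρ ∧ h s₂ ≤ ρ := by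
    have hsub : Iio s₂ ⊆ Iic S₁ := fun u hu => le_trans hu.le hs₂S
    constructor
    · have hcg : Tendsto g (nhdsWithin s₂ (Iio s₂)) (nhds (g s₂)) :=
        ((hg s₂ hs₂S).mono hsub)
      exact le_of_tendsto hcg (eventually_mem_nhdsWithin.mono (fun u hu => (hPlt u hu).1))
    · have hch : Tendsto h (nhdsWithin s₂ (Iio s₂)) (nhds (h s₂)) :=
        ((hh s₂ hs₂S).mono hsub)
      exact le_of_tendsto hch (eventually_mem_nhdsWithin.mono (fun u hu => (hPlt u hu).2))
  have hP : ∀ t ≤ s₂, g t ≤ ρ ∧ h t ≤ ρ := by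
    intro t ht
    rcases lt_or_eq_of_le ht with hlt | heq
    · exact hPlt t hlt
    · rw [heq]; exact hPs₂
  have hfin := key s₂ hs₂S hP
  rcases hs₂V.2 with h2 | h2
  · rw [hgCeq s₂ hs₂S] at h2; linarith [hfin.1]
  · rw [hhCeq s₂ hs₂S] at h2; linarith [hfin.2]

private lemma first_violation_Icc
    (S₁ s₀ : ℝ) (g : ℝ → ℝ) (hS : S₁ ≤ s₀)
    (hg : ContinuousOn g (Icc S₁ s₀))
    (key : ∀ b ∈ Icc S₁ s₀, (∀ x ∈ Ico S₁ b, g x ≤ 1) → g b ≤ 1 / 2) :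
    ∀ x ∈ Icc S₁ s₀, g x ≤ 1 := by
  by_contra hcon
  push_neg at hcon
  obtain ⟨x₀, hx₀I, hx₀⟩ := hcon
  set gC : ℝ → ℝ := fun t => g (max S₁ (min t s₀)) with hgC
  have hclamp : ∀ t, max S₁ (min t s₀) ∈ Icc S₁ s₀ :=
    fun t => ⟨le_max_left _ _, max_le hS (min_le_right t s₀)⟩
  have hgCc : Continuous gC :=
    hg.comp_continuous (continuous_const.max (continuous_id.min continuous_const)) hclamp
  have hgCeq : ∀ t, t ∈ Icc S₁ s₀ → gC t = g t := fun t ht => by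
    rw [hgC]
    simp only [min_eq_left ht.2, max_eq_right ht.1]
  set V : Set ℝ := {t | t ∈ Icc S₁ s₀ ∧ 1 ≤ gC t} with hV
  have hVne : V.Nonempty := ⟨x₀, hx₀I, by rw [hgCeq x₀ hx₀I]; exact hx₀.le⟩
  have hVclosed : IsClosed V := by
    have h1 : V = Icc S₁ s₀ ∩ {t | 1 ≤ gC t} := by
      ext t; simp only [hV, mem_setOf_eq, mem_inter_iff]
    rw [h1]
    exact isClosed_Icc.inter (isClosed_le continuous_const hgCc)
  have hVbdd : BddBelow V := ⟨S₁, fun t htV => htV.1.1⟩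
  set s₃ : ℝ := sInf V with hs₃def
  have hs₃V : s₃ ∈ V := hVclosed.csInf_mem hVne hVbdd
  have hs₃I : s₃ ∈ Icc S₁ s₀ := hs₃V.1
  have hs₃g : 1 ≤ g s₃ := by rw [← hgCeq s₃ hs₃I]; exact hs₃V.2
  have hpre : ∀ x ∈ Ico S₁ s₃, g x ≤ 1 := by
    intro x hx
    have hxI : x ∈ Icc S₁ s₀ := ⟨hx.1, le_trans hx.2.le hs₃I.2⟩
    have hnot : x ∉ V := notMem_of_lt_csInf hx.2 hVbdd
    rw [hV] at hnot
    simp only [mem_setOf_eq, not_and_or, not_le] at hnot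
    rcases hnot with h1 | h1
    · exact absurd hxI h1
    · rw [hgCeq x hxI] at h1; exact h1.le
  have := key s₃ hs₃I hpre
  linarith

end helpers

theorem stmt_15 (N : ℕ) (hN : 4 ≤ N) (κt κb : ℝ)
    (hκt : κt = Real.log (((N : ℝ) - 3) / ((N : ℝ) - 2)) - 2 * Real.log 2)
    (hκb : κb = Real.log (2 * ((N : ℝ) - 3)))
    -- x̄ : the entire solution of the autonomous limit problem
    (xb : ℝ → ℝ) (hxb2 : ContDiff ℝ 2 xb)
    (hxbode : ∀ s : ℝ, deriv (deriv xb) s + ((N : ℝ) - 3) * deriv xb s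
        + 2 * ((N : ℝ) - 3) * (Real.exp (xb s) - 1) = 0)
    (hxblim1 : Tendsto (fun s => xb s - 2 * s + κb - Real.log (8 * ((N : ℝ) - 2)))
        atBot (nhds 0))
    (hxblim2 : Tendsto (fun s => Real.exp (-s) * (deriv xb s - 2)) atBot (nhds 0))
    -- x̃(·, α) : solutions of the non-autonomous problem, one for each α
    (xt : ℝ → ℝ → ℝ)
    (hxt2 : ∀ α : ℝ, ContDiffOn ℝ 2 (xt α) (Iic (α / 2)))
    (hxtode : ∀ α : ℝ, ∀ s : ℝ, s < α / 2 →
      deriv (deriv (xt α)) s - ((N : ℝ) - 3) * Real.tanh (s - α / 2) * deriv (xt α) s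
        + 2 * ((N : ℝ) - 3) * (Real.exp (xt α s) - 1) = 0)
    (hxtlim1 : ∀ α : ℝ, Tendsto (fun s => xt α s - 2 * s + κt) atBot (nhds 0))
    (hxtlim2 : ∀ α : ℝ,
      Tendsto (fun s => Real.exp (-s) * (deriv (xt α) s - 2)) atBot (nhds 0)) :
    ∀ s₀ ε : ℝ, 0 < ε → ∃ α₀ : ℝ, α₀ > max (2 * s₀) 0 ∧ ∀ α : ℝ, α > α₀ →
      (∀ s ≤ s₀, |xb s - xt α s| < ε) ∧ (∀ s ≤ s₀, |deriv xb s - deriv (xt α) s| < ε) := by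
  intro s₀ ε hε
  have hN4 : (4:ℝ) ≤ (N : ℝ) := by exact_mod_cast hN
  set d : ℝ := (N : ℝ) - 3 with hd_def
  have hd1 : 1 ≤ d := by rw [hd_def]; linarith
  have hd0 : 0 < d := lt_of_lt_of_le one_pos hd1
  have hN2 : (0:ℝ) < (N : ℝ) - 2 := by linarith
  have hN3 : (0:ℝ) < (N : ℝ) - 3 := by linarith
  -- the κ identity
  have hκ : κb - Real.log (8 * ((N : ℝ) - 2)) = κt := by
    rw [hκt, hκb, Real.log_mul (by norm_num : (2:ℝ) ≠ 0) (ne_of_gt hN3),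
      Real.log_mul (by norm_num : (8:ℝ) ≠ 0) (ne_of_gt hN2),
      Real.log_div (ne_of_gt hN3) (ne_of_gt hN2)]
    have h8 : Real.log 8 = 3 * Real.log 2 := by
      have h : (8:ℝ) = 2 ^ (3:ℕ) := by norm_num
      rw [h, Real.log_pow]; push_cast; ring
    rw [h8]; ring
  have hxblim1' : Tendsto (fun s => xb s - 2 * s + κt) atBot (nhds 0) :=
    hxblim1.congr (fun s => by rw [← hκ]; ring)
  -- regularity of xb
  have hxbd : Differentiable ℝ xb := hxb2.differentiable (by norm_num)
  have hxb11 : ContDiff ℝ ((1:WithTop ℕ∞) + 1) xb := by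
    have : ((1:WithTop ℕ∞) + 1) = 2 := by norm_num
    rw [this]; exact hxb2
  have hxb1 : ContDiff ℝ 1 (deriv xb) := (contDiff_succ_iff_deriv.mp hxb11).2.2
  have hxbd' : Differentiable ℝ (deriv xb) := hxb1.differentiable (by norm_num)
  have hxbc'' : Continuous (deriv (deriv xb)) := (contDiff_one_iff_deriv.mp hxb1).2
  -- limit of deriv xb
  have hdxblim : Tendsto (deriv xb) atBot (nhds 2) := by
    have h1 : Tendsto (fun s => deriv xb s - 2) atBot (nhds 0) := by
      have h2 := Real.tendsto_exp_atBot.mul hxblim2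
      rw [mul_zero] at h2
      refine h2.congr (fun s => ?_)
      rw [← mul_assoc, ← Real.exp_add, add_neg_cancel, Real.exp_zero, one_mul]
    have h3 := h1.add_const 2
    rw [zero_add] at h3
    exact h3.congr (fun s => by ring)
  -- bound M for deriv xb on Iic s₀
  obtain ⟨M, hM1, hM⟩ := aux_bdd (deriv xb) s₀ 2 (hxb1.continuous.continuousOn) hdxblim
  -- bound K for exp (xb - 2s) on Iic s₀
  have hKlim : Tendsto (fun s => Real.exp (xb s - 2 * s)) atBot (nhds (Real.exp (-κt))) := by
    have h1 : Tendsto (fun s => xb s - 2 * s) atBot (nhds (-κt)) := by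
      have h2 := hxblim1'.sub_const κt
      rw [zero_sub] at h2
      exact h2.congr (fun s => by ring)
    exact (Real.continuous_exp.tendsto _).comp h1
  obtain ⟨K, hK1, hKb⟩ := aux_bdd (fun s => Real.exp (xb s - 2 * s)) s₀ (Real.exp (-κt))
    ((Real.continuous_exp.comp (hxb2.continuous.sub (by continuity))).continuousOn) hKlim
  have hK : ∀ s ≤ s₀, Real.exp (xb s) ≤ K * Real.exp (2 * s) := by
    intro s hs
    have h1 : Real.exp (xb s) = Real.exp (xb s - 2 * s) * Real.exp (2 * s) := by
      rw [← Real.exp_add]; ring_nf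
    have h2 : Real.exp (xb s - 2 * s) ≤ K := le_trans (le_abs_self _) (hKb s hs)
    rw [h1]
    exact mul_le_mul_of_nonneg_right h2 (Real.exp_pos _).le
  -- constants
  set C₁ : ℝ := 2 * d * ((M + 1) + K * Real.exp 1) with hC₁def
  have hC₁pos : 0 < C₁ := by
    have hKe : 0 < K * Real.exp 1 := mul_pos (by linarith) (Real.exp_pos 1)
    have h2 : 0 < M + 1 + K * Real.exp 1 := by linarith
    rw [hC₁def]
    exact mul_pos (mul_pos two_pos hd0) h2
  set S₁ : ℝ := min s₀ (Real.log (1 / (4 * C₁)) / 2) with hS₁def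
  have hS₁s₀ : S₁ ≤ s₀ := min_le_left _ _
  have hS₁exp : Real.exp (2 * S₁) ≤ 1 / (4 * C₁) := by
    have h1 : 2 * S₁ ≤ Real.log (1 / (4 * C₁)) := by
      have := min_le_right s₀ (Real.log (1 / (4 * C₁)) / 2)
      rw [hS₁def]; linarith [this]
    calc Real.exp (2 * S₁) ≤ Real.exp (Real.log (1 / (4 * C₁))) := Real.exp_le_exp.mpr h1
      _ = 1 / (4 * C₁) := Real.exp_log (by positivity)
  set K₂ : ℝ := K * Real.exp (1 + 2 * s₀) with hK₂def
  have hK₂0 : 0 < K₂ := by rw [hK₂def]; positivity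
  set L : ℝ := d + 2 * d * K₂ with hLdef
  have hL0 : 0 < L := by rw [hLdef]; nlinarith [mul_pos hd0 hK₂0]
  have hL1 : 1 ≤ L := by rw [hLdef]; nlinarith [mul_pos hd0 hK₂0]
  set E : ℝ := Real.exp (L * (s₀ - S₁)) with hEdef
  have hE0 : 0 < E := Real.exp_pos _
  have hE1 : 1 ≤ E := Real.one_le_exp (mul_nonneg hL0.le (by linarith [hS₁s₀]))
  set m : ℝ := min 1 ε with hmdef
  have hm0 : 0 < m := lt_min one_pos hε
  have hm1 : m ≤ 1 := min_le_left _ _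
  have hmε : m ≤ ε := min_le_right _ _
  set ρ : ℝ := min 1 (m / (4 * E)) with hρdef
  have hρ0 : 0 < ρ := lt_min one_pos (by positivity)
  have hρ1 : ρ ≤ 1 := min_le_left _ _
  have hρ4E : ρ ≤ m / (4 * E) := min_le_right _ _
  set P₀ : ℝ := 2 * d * M * Real.exp (2 * s₀) with hP₀def
  have hP₀0 : 0 < P₀ := by rw [hP₀def]; positivity
  set c₂ : ℝ := (L * m / (4 * E)) / P₀ with hc₂def
  have hc₂0 : 0 < c₂ := by rw [hc₂def]; positivity
  set c : ℝ := min ρ c₂ with hcdef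
  have hc0 : 0 < c := lt_min hρ0 hc₂0
  refine ⟨max (max (2 * s₀) 0) (-Real.log c) + 1, ?_, ?_⟩
  · have := le_max_left (max (2 * s₀) 0) (-Real.log c)
    linarith
  intro α hα
  have hmax1 := le_max_left (max (2 * s₀) 0) (-Real.log c)
  have hmax2 := le_max_right (max (2 * s₀) 0) (-Real.log c)
  have hmax3 := le_max_left (2 * s₀) 0
  have hαhalf : s₀ < α / 2 := by linarith
  have hexpc : Real.exp (-α) < c := by
    have h1 : -α < Real.log c := by linarith
    calc Real.exp (-α) < Real.exp (Real.log c) := Real.exp_lt_exp.mpr h1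
      _ = c := Real.exp_log hc0
  have hαρ : Real.exp (-α) ≤ ρ := le_trans hexpc.le (min_le_left _ _)
  have hαε₁ : P₀ * Real.exp (-α) ≤ L * m / (4 * E) := by
    have h1 : Real.exp (-α) ≤ c₂ := le_trans hexpc.le (min_le_right _ _)
    have h3 : P₀ * c₂ = L * m / (4 * E) := by
      rw [hc₂def]
      field_simp
    calc P₀ * Real.exp (-α) ≤ P₀ * c₂ := mul_le_mul_of_nonneg_left h1 hP₀0.le
      _ = L * m / (4 * E) := h3
  -- derivative setup for xt α
  have hxtU : ContDiffOn ℝ 2 (xt α) (Iio (α / 2)) := (hxt2 α).mono Iio_subset_Iic_self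
  have hxtd : ∀ s, s < α / 2 → HasDerivAt (xt α) (deriv (xt α) s) s := by
    intro s hs
    exact ((hxtU.differentiableOn (by norm_num)).differentiableAt
      (isOpen_Iio.mem_nhds hs)).hasDerivAt
  have hxtd1 : ContDiffOn ℝ 1 (deriv (xt α)) (Iio (α / 2)) :=
    hxtU.deriv_of_isOpen isOpen_Iio (by norm_num)
  have hxtd2 : ∀ s, s < α / 2 → HasDerivAt (deriv (xt α)) (deriv (deriv (xt α)) s) s := by
    intro s hs
    exact ((hxtd1.differentiableOn (by norm_num)).differentiableAt
      (isOpen_Iio.mem_nhds hs)).hasDerivAt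
  have hxtc2 : ContinuousOn (deriv (deriv (xt α))) (Iio (α / 2)) :=
    (hxtd1.deriv_of_isOpen (m := 0) isOpen_Iio (by norm_num)).continuousOn
  -- w and its derivatives
  set w : ℝ → ℝ := fun s => xt α s - xb s with hwdef
  set w1 : ℝ → ℝ := fun s => deriv (xt α) s - deriv xb s with hw1def
  set w2 : ℝ → ℝ := fun s => deriv (deriv (xt α)) s - deriv (deriv xb) s with hw2def
  have hw1 : ∀ s, s < α / 2 → HasDerivAt w (w1 s) s := fun s hs =>
    (hxtd s hs).sub (hxbd s).hasDerivAt
  have hw2' : ∀ s, s < α / 2 → HasDerivAt w1 (w2 s) s := fun s hs =>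
    (hxtd2 s hs).sub ((hxbd' s).hasDerivAt)
  have hw2c : ContinuousOn w2 (Iio (α / 2)) := hxtc2.sub hxbc''.continuousOn
  -- limits of w at -infty
  have hw0 : Tendsto w atBot (nhds 0) := by
    have h1 := (hxtlim1 α).sub hxblim1'
    rw [sub_zero] at h1
    exact h1.congr (fun s => by simp only [hwdef]; ring)
  have hw1exp : Tendsto (fun s => Real.exp (-s) * w1 s) atBot (nhds 0) := by
    have h1 := (hxtlim2 α).sub hxblim2
    rw [sub_zero] at h1
    exact h1.congr (fun s => by simp only [hw1def]; ring)
  have hw1lim : Tendsto w1 atBot (nhds 0) := by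
    have h2 := Real.tendsto_exp_atBot.mul hw1exp
    rw [mul_zero] at h2
    refine h2.congr (fun s => ?_)
    rw [← mul_assoc, ← Real.exp_add, add_neg_cancel, Real.exp_zero, one_mul]
  have hwd0 : Tendsto (fun a => Real.exp (d * a) * w1 a) atBot (nhds 0) := by
    have hda : Tendsto (fun a : ℝ => (d + 1) * a) atBot atBot :=
      (tendsto_const_mul_atBot_of_pos (by linarith)).mpr tendsto_id
    have h2 : Tendsto (fun a => Real.exp ((d + 1) * a)) atBot (nhds 0) :=
      Real.tendsto_exp_atBot.comp hda
    have h3 := h2.mul hw1exp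
    rw [mul_zero] at h3
    refine h3.congr (fun a => ?_)
    rw [← mul_assoc, ← Real.exp_add, show (d + 1) * a + -a = d * a by ring]
  -- the combined ODE identities
  have hODE : ∀ s, s < α / 2 → w2 s + d * w1 s =
      d * (Real.tanh (s - α / 2) + 1) * deriv (xt α) s
      - 2 * d * (Real.exp (xt α s) - Real.exp (xb s)) := by
    intro s hs
    have h1 := hxtode α s hs
    have h2 := hxbode s
    simp only [hw2def, hw1def]
    linear_combination h1 - h2
  have hODE2 : ∀ s, s < α / 2 → w2 s =
      d * Real.tanh (s - α / 2) * w1 s + d * (Real.tanh (s - α / 2) + 1) * deriv xb s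
      - 2 * d * (Real.exp (xt α s) - Real.exp (xb s)) := by
    intro s hs
    have h1 := hODE s hs
    have h2 : deriv (xt α) s = deriv xb s + w1 s := by simp only [hw1def]; ring
    rw [h2] at h1
    linear_combination h1
  -- continuity of |w| and |w1| on Iic S₁
  have hwcont : ContinuousOn (fun t => |w t|) (Iic S₁) := fun t ht =>
    (((hw1 t (lt_of_le_of_lt (le_trans ht hS₁s₀) hαhalf)).continuousAt).continuousWithinAt).abs
  have hw1cont : ContinuousOn (fun t => |w1 t|) (Iic S₁) := fun t ht =>
    (((hw2' t (lt_of_le_of_lt (le_trans ht hS₁s₀) hαhalf)).continuousAt).continuousWithinAt).abs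
  have hev : ∀ᶠ t in atBot, |w t| < ρ ∧ |w1 t| < ρ := by
    have e1 : Tendsto (fun t => |w t|) atBot (nhds 0) := by simpa using hw0.abs
    have e2 : Tendsto (fun t => |w1 t|) atBot (nhds 0) := by simpa using hw1lim.abs
    exact (e1.eventually_lt_const hρ0).and (e2.eventually_lt_const hρ0)
  -- Step A: smallness on (-infty, S₁]
  have hstepA : ∀ t ≤ S₁, |w t| < ρ ∧ |w1 t| < ρ := by
    apply first_violation ρ S₁ (fun t => |w t|) (fun t => |w1 t|) hwcont hw1cont hρ0 hev
    intro s₂v hs₂S hP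
    have hUsub : ∀ t, t ≤ s₂v → t < α / 2 := fun t ht =>
      lt_of_le_of_lt (le_trans ht (le_trans hs₂S hS₁s₀)) hαhalf
    have hBnn : 0 ≤ C₁ * (ρ + Real.exp (-α)) :=
      mul_nonneg hC₁pos.le (by linarith [Real.exp_pos (-α)])
    have hGb : ∀ t, t ≤ s₂v →
        |w2 t + d * w1 t| ≤ C₁ * (ρ + Real.exp (-α)) * Real.exp (2 * t) := by
      intro t ht
      have hts₀ : t ≤ s₀ := le_trans ht (le_trans hs₂S hS₁s₀)
      rw [hODE t (hUsub t ht)]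
      have ht1 := aux_tanh_add_one_nonneg (t - α / 2)
      have ht2 : Real.tanh (t - α / 2) + 1 ≤ 2 * (Real.exp (2 * t) * Real.exp (-α)) := by
        have h := aux_tanh_add_one_le (t - α / 2)
        rw [show 2 * (t - α / 2) = 2 * t + -α by ring, Real.exp_add] at h
        exact h
      have hxt'b : |deriv (xt α) t| ≤ M + 1 := by
        have h1 : deriv (xt α) t = deriv xb t + w1 t := by simp only [hw1def]; ring
        rw [h1]
        have h2 := hM t hts₀
        have h3 := (hP t ht).2
        calc |deriv xb t + w1 t| ≤ |deriv xb t| + |w1 t| := abs_add_le _ _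
          _ ≤ M + 1 := by linarith
      have hΔ : |Real.exp (xt α t) - Real.exp (xb t)| ≤ K * Real.exp 1 * Real.exp (2 * t) * ρ := by
        have h1 := aux_exp_diff (xt α t) (xb t)
        have hwt : |w t| ≤ ρ := (hP t ht).1
        have h2 : max (xt α t) (xb t) ≤ xb t + 1 := by
          apply max_le _ (by linarith)
          have h3 : xt α t = xb t + w t := by simp only [hwdef]; ring
          rw [h3]
          have h4 := le_abs_self (w t)
          linarith
        have h3 : Real.exp (max (xt α t) (xb t)) ≤ K * Real.exp (2 * t) * Real.exp 1 := by
          calc Real.exp (max (xt α t) (xb t)) ≤ Real.exp (xb t + 1) := Real.exp_le_exp.mpr h2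
            _ = Real.exp (xb t) * Real.exp 1 := by rw [Real.exp_add]
            _ ≤ K * Real.exp (2 * t) * Real.exp 1 :=
                mul_le_mul_of_nonneg_right (hK t hts₀) (Real.exp_pos 1).le
        have h4 : |xt α t - xb t| = |w t| := by simp only [hwdef]
        calc |Real.exp (xt α t) - Real.exp (xb t)|
            ≤ Real.exp (max (xt α t) (xb t)) * |xt α t - xb t| := h1
          _ = Real.exp (max (xt α t) (xb t)) * |w t| := by rw [h4]
          _ ≤ (K * Real.exp (2 * t) * Real.exp 1) * ρ := by
              apply mul_le_mul h3 hwt (abs_nonneg _)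
              exact mul_nonneg (mul_nonneg (by linarith : (0:ℝ) ≤ K)
                (Real.exp_pos _).le) (Real.exp_pos 1).le
          _ = K * Real.exp 1 * Real.exp (2 * t) * ρ := by ring
      have hT1 : |d * (Real.tanh (t - α / 2) + 1) * deriv (xt α) t| ≤
          d * (2 * (Real.exp (2 * t) * Real.exp (-α))) * (M + 1) := by
        rw [abs_mul, abs_mul, abs_of_pos hd0, abs_of_nonneg ht1]
        apply mul_le_mul (mul_le_mul_of_nonneg_left ht2 hd0.le) hxt'b (abs_nonneg _)
        exact mul_nonneg hd0.le (mul_nonneg (by norm_num)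
          (mul_nonneg (Real.exp_pos _).le (Real.exp_pos _).le))
      have hT2 : |2 * d * (Real.exp (xt α t) - Real.exp (xb t))| ≤
          2 * d * (K * Real.exp 1 * Real.exp (2 * t) * ρ) := by
        rw [abs_mul, abs_of_pos (by linarith : (0:ℝ) < 2 * d)]
        exact mul_le_mul_of_nonneg_left hΔ (by linarith)
      rw [hC₁def]
      calc |d * (Real.tanh (t - α / 2) + 1) * deriv (xt α) t
          - 2 * d * (Real.exp (xt α t) - Real.exp (xb t))|
          ≤ |d * (Real.tanh (t - α / 2) + 1) * deriv (xt α) t| +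
            |2 * d * (Real.exp (xt α t) - Real.exp (xb t))| := abs_sub _ _
        _ ≤ d * (2 * (Real.exp (2 * t) * Real.exp (-α))) * (M + 1) +
            2 * d * (K * Real.exp 1 * Real.exp (2 * t) * ρ) := add_le_add hT1 hT2
        _ ≤ 2 * d * (M + 1 + K * Real.exp 1) * (ρ + Real.exp (-α)) * Real.exp (2 * t) := by
            have hterm1 : 0 ≤ 2 * d * (M + 1) * ρ * Real.exp (2 * t) :=
              mul_nonneg (mul_nonneg (mul_nonneg (by linarith : (0:ℝ) ≤ 2 * d)
                (by linarith : (0:ℝ) ≤ M + 1)) hρ0.le) (Real.exp_pos _).le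
            have hterm2 : 0 ≤ 2 * d * (K * Real.exp 1) * Real.exp (-α) * Real.exp (2 * t) :=
              mul_nonneg (mul_nonneg (mul_nonneg (by linarith : (0:ℝ) ≤ 2 * d)
                (mul_nonneg (by linarith : (0:ℝ) ≤ K) (Real.exp_pos 1).le))
                (Real.exp_pos _).le) (Real.exp_pos _).le
            have hkey : 2 * d * (M + 1 + K * Real.exp 1) * (ρ + Real.exp (-α)) * Real.exp (2 * t)
                - (d * (2 * (Real.exp (2 * t) * Real.exp (-α))) * (M + 1)
                  + 2 * d * (K * Real.exp 1 * Real.exp (2 * t) * ρ))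
                = 2 * d * (M + 1) * ρ * Real.exp (2 * t)
                  + 2 * d * (K * Real.exp 1) * Real.exp (-α) * Real.exp (2 * t) := by ring
            linarith only [hterm1, hterm2, hkey]
    have hres := stepA_est d (C₁ * (ρ + Real.exp (-α))) s₂v w w1 w2 hd1 hBnn
      (fun s hs => hw1 s (hUsub s hs)) (fun s hs => hw2' s (hUsub s hs))
      (hw2c.mono (fun t ht => hUsub t ht)) hw0 hwd0 hGb s₂v le_rfl
    have hBe : C₁ * (ρ + Real.exp (-α)) * Real.exp (2 * s₂v) ≤ ρ / 2 := by
      have h1 : Real.exp (2 * s₂v) ≤ 1 / (4 * C₁) :=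
        le_trans (Real.exp_le_exp.mpr (by linarith)) hS₁exp
      have h2 : ρ + Real.exp (-α) ≤ 2 * ρ := by linarith
      calc C₁ * (ρ + Real.exp (-α)) * Real.exp (2 * s₂v)
          ≤ C₁ * (2 * ρ) * (1 / (4 * C₁)) := by
            apply mul_le_mul (mul_le_mul_of_nonneg_left h2 hC₁pos.le) h1 (Real.exp_pos _).le
            exact mul_nonneg hC₁pos.le (by linarith only [hρ0])
        _ = ρ / 2 := by field_simp [hC₁pos.ne']; ring
    exact ⟨le_trans hres.2 hBe, le_trans hres.1 hBe⟩
  -- Step B: Gronwall on [S₁, s₀]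
  have hfS₁ : max |w S₁| |w1 S₁| ≤ ρ := by
    have h := hstepA S₁ le_rfl
    exact max_le h.1.le h.2.le
  have hε₁0 : 0 ≤ P₀ * Real.exp (-α) := mul_nonneg hP₀0.le (Real.exp_pos _).le
  have hgron : ∀ b, b ∈ Icc S₁ s₀ → (∀ x ∈ Ico S₁ b, |w x| ≤ 1) →
      ∀ x ∈ Icc S₁ b, max |w x| |w1 x| ≤ gronwallBound ρ L (P₀ * Real.exp (-α)) (x - S₁) := by
    intro b hb hble
    have hsubU : ∀ x, x ∈ Icc S₁ b → x < α / 2 := fun x hx =>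
      lt_of_le_of_lt (le_trans hx.2 hb.2) hαhalf
    have hf : ContinuousOn (fun s => (w s, w1 s)) (Icc S₁ b) := by
      apply ContinuousOn.prodMk
      · intro x hx; exact ((hw1 x (hsubU x hx)).continuousAt).continuousWithinAt
      · intro x hx; exact ((hw2' x (hsubU x hx)).continuousAt).continuousWithinAt
    have hf' : ∀ x ∈ Ico S₁ b,
        HasDerivWithinAt (fun s => (w s, w1 s)) (w1 x, w2 x) (Ici x) x := by
      intro x hx
      have hxU : x < α / 2 := hsubU x ⟨hx.1, hx.2.le⟩
      exact ((hw1 x hxU).prodMk (hw2' x hxU)).hasDerivWithinAt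
    have ha : ‖((fun s => (w s, w1 s)) S₁)‖ ≤ ρ := by
      simpa only [Prod.norm_def, Real.norm_eq_abs] using hfS₁
    have hbound : ∀ x ∈ Ico S₁ b, ‖(w1 x, w2 x)‖ ≤
        L * ‖(fun s => (w s, w1 s)) x‖ + P₀ * Real.exp (-α) := by
      intro x hx
      simp only [Prod.norm_def, Real.norm_eq_abs]
      have hxU : x < α / 2 := hsubU x ⟨hx.1, hx.2.le⟩
      have hxs₀ : x ≤ s₀ := le_trans hx.2.le hb.2
      have hwx1 : |w x| ≤ 1 := hble x hx
      have htb : |Real.tanh (x - α / 2)| ≤ 1 :=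
        abs_le.mpr ⟨by linarith [aux_tanh_add_one_nonneg (x - α / 2)], aux_tanh_le_one _⟩
      have ht1 := aux_tanh_add_one_nonneg (x - α / 2)
      have ht2 : Real.tanh (x - α / 2) + 1 ≤ 2 * (Real.exp (2 * s₀) * Real.exp (-α)) := by
        have h := aux_tanh_add_one_le (x - α / 2)
        rw [show 2 * (x - α / 2) = 2 * x + -α by ring, Real.exp_add] at h
        refine le_trans h ?_
        have h2 : Real.exp (2 * x) ≤ Real.exp (2 * s₀) := Real.exp_le_exp.mpr (by linarith)
        have h3 := mul_le_mul_of_nonneg_right h2 (Real.exp_pos (-α)).le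
        linarith only [h3]
      have hΔ : |Real.exp (xt α x) - Real.exp (xb x)| ≤ K₂ * |w x| := by
        have h1 := aux_exp_diff (xt α x) (xb x)
        have h2 : max (xt α x) (xb x) ≤ xb x + 1 := by
          apply max_le _ (by linarith)
          have h3 : xt α x = xb x + w x := by simp only [hwdef]; ring
          rw [h3]
          have h4 := le_abs_self (w x)
          linarith
        have h3 : Real.exp (max (xt α x) (xb x)) ≤ K₂ := by
          calc Real.exp (max (xt α x) (xb x)) ≤ Real.exp (xb x + 1) := Real.exp_le_exp.mpr h2
            _ = Real.exp (xb x) * Real.exp 1 := by rw [Real.exp_add]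
            _ ≤ (K * Real.exp (2 * x)) * Real.exp 1 :=
                mul_le_mul_of_nonneg_right (hK x hxs₀) (Real.exp_pos 1).le
            _ ≤ (K * Real.exp (2 * s₀)) * Real.exp 1 := by
                have h5 : Real.exp (2 * x) ≤ Real.exp (2 * s₀) := Real.exp_le_exp.mpr (by linarith)
                exact mul_le_mul_of_nonneg_right
                  (mul_le_mul_of_nonneg_left h5 (by linarith)) (Real.exp_pos 1).le
            _ = K₂ := by rw [hK₂def, Real.exp_add]; ring
        have h4 : |xt α x - xb x| = |w x| := by simp only [hwdef]
        calc |Real.exp (xt α x) - Real.exp (xb x)|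
            ≤ Real.exp (max (xt α x) (xb x)) * |xt α x - xb x| := h1
          _ = Real.exp (max (xt α x) (xb x)) * |w x| := by rw [h4]
          _ ≤ K₂ * |w x| := mul_le_mul_of_nonneg_right h3 (abs_nonneg _)
      have e1 : |d * Real.tanh (x - α / 2) * w1 x| ≤ d * |w1 x| := by
        rw [abs_mul, abs_mul, abs_of_pos hd0]
        have h5 : |Real.tanh (x - α / 2)| * |w1 x| ≤ 1 * |w1 x| :=
          mul_le_mul_of_nonneg_right htb (abs_nonneg _)
        rw [one_mul] at h5
        rw [mul_assoc]
        exact mul_le_mul_of_nonneg_left h5 hd0.le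
      have e2 : |d * (Real.tanh (x - α / 2) + 1) * deriv xb x| ≤ P₀ * Real.exp (-α) := by
        rw [abs_mul, abs_mul, abs_of_pos hd0, abs_of_nonneg ht1]
        have hMx := hM x hxs₀
        calc d * (Real.tanh (x - α / 2) + 1) * |deriv xb x|
            ≤ d * (2 * (Real.exp (2 * s₀) * Real.exp (-α))) * M := by
              apply mul_le_mul (mul_le_mul_of_nonneg_left ht2 hd0.le) hMx (abs_nonneg _)
              exact mul_nonneg hd0.le (mul_nonneg (by norm_num)
                (mul_nonneg (Real.exp_pos _).le (Real.exp_pos _).le))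
          _ = P₀ * Real.exp (-α) := by rw [hP₀def]; ring
      have e3 : |2 * d * (Real.exp (xt α x) - Real.exp (xb x))| ≤ 2 * d * K₂ * |w x| := by
        rw [abs_mul, abs_of_pos (by linarith : (0:ℝ) < 2 * d)]
        have h9 := mul_le_mul_of_nonneg_left hΔ (by linarith : (0:ℝ) ≤ 2 * d)
        have h10 : 2 * d * (K₂ * |w x|) = 2 * d * K₂ * |w x| := by ring
        linarith only [h9, h10]
      have hw2b : |w2 x| ≤ d * |w1 x| + 2 * d * K₂ * |w x| + P₀ * Real.exp (-α) := by
        rw [hODE2 x hxU]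
        calc |d * Real.tanh (x - α / 2) * w1 x + d * (Real.tanh (x - α / 2) + 1) * deriv xb x
            - 2 * d * (Real.exp (xt α x) - Real.exp (xb x))|
            ≤ |d * Real.tanh (x - α / 2) * w1 x + d * (Real.tanh (x - α / 2) + 1) * deriv xb x| +
              |2 * d * (Real.exp (xt α x) - Real.exp (xb x))| := abs_sub _ _
          _ ≤ |d * Real.tanh (x - α / 2) * w1 x| +
              |d * (Real.tanh (x - α / 2) + 1) * deriv xb x| +
              |2 * d * (Real.exp (xt α x) - Real.exp (xb x))| :=
              add_le_add_left (abs_add_le _ _) _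
          _ ≤ d * |w1 x| + P₀ * Real.exp (-α) + 2 * d * K₂ * |w x| :=
              add_le_add (add_le_add e1 e2) e3
          _ = d * |w1 x| + 2 * d * K₂ * |w x| + P₀ * Real.exp (-α) := by ring
      have hmx1 : |w x| ≤ max |w x| |w1 x| := le_max_left _ _
      have hmx2 : |w1 x| ≤ max |w x| |w1 x| := le_max_right _ _
      have hmxnn : (0:ℝ) ≤ max |w x| |w1 x| := le_trans (abs_nonneg _) hmx1
      apply max_le
      · have hLmax : max |w x| |w1 x| ≤ L * max |w x| |w1 x| :=
          le_mul_of_one_le_left hmxnn hL1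
        linarith only [hLmax, hmx2, hε₁0]
      · have h5 : d * |w1 x| ≤ d * max |w x| |w1 x| := mul_le_mul_of_nonneg_left hmx2 hd0.le
        have h6 : 2 * d * K₂ * |w x| ≤ 2 * d * K₂ * max |w x| |w1 x| :=
          mul_le_mul_of_nonneg_left hmx1 (mul_nonneg (mul_nonneg (by norm_num : (0:ℝ) ≤ 2) hd0.le) hK₂0.le)
        have h7 : (d + 2 * d * K₂) * max |w x| |w1 x|
            = d * max |w x| |w1 x| + 2 * d * K₂ * max |w x| |w1 x| := by ring
        rw [hLdef]
        linarith only [hw2b, h5, h6, h7]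
    have hgw := norm_le_gronwallBound_of_norm_deriv_right_le hf hf' ha hbound
    intro x hx
    have h := hgw x hx
    simpa only [Prod.norm_def, Real.norm_eq_abs] using h
  have hgb : ∀ x, x ∈ Icc S₁ s₀ →
      gronwallBound ρ L (P₀ * Real.exp (-α)) (x - S₁) ≤ m / 2 := by
    intro x hx
    simp only [gronwallBound_of_K_ne_0 (ne_of_gt hL0)]
    have hX1 : 1 ≤ Real.exp (L * (x - S₁)) := Real.one_le_exp (mul_nonneg hL0.le (by linarith [hx.1]))
    have hXE : Real.exp (L * (x - S₁)) ≤ E := by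
      rw [hEdef]
      exact Real.exp_le_exp.mpr (mul_le_mul_of_nonneg_left (by linarith [hx.2]) hL0.le)
    have h4E : (0:ℝ) < 4 * E := by linarith
    have hm4E : (0:ℝ) ≤ m / (4 * E) := div_nonneg hm0.le h4E.le
    have hdiv : P₀ * Real.exp (-α) / L ≤ m / (4 * E) := by
      rw [div_le_div_iff₀ hL0 h4E]
      have h2 := hαε₁
      rw [le_div_iff₀ h4E] at h2
      linarith
    have h3 : m / (4 * E) * E = m / 4 := by
      field_simp
    have h4 : ρ * Real.exp (L * (x - S₁)) ≤ m / 4 := by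
      calc ρ * Real.exp (L * (x - S₁)) ≤ (m / (4 * E)) * E :=
          mul_le_mul hρ4E hXE (by linarith) hm4E
        _ = m / 4 := h3
    have h5 : P₀ * Real.exp (-α) / L * (Real.exp (L * (x - S₁)) - 1) ≤ m / 4 := by
      calc P₀ * Real.exp (-α) / L * (Real.exp (L * (x - S₁)) - 1)
          ≤ (m / (4 * E)) * E := by
            apply mul_le_mul hdiv (by linarith) (by linarith) hm4E
        _ = m / 4 := h3
    linarith
  have hb1 : ∀ x ∈ Icc S₁ s₀, |w x| ≤ 1 := by
    apply first_violation_Icc S₁ s₀ (fun x => |w x|) hS₁s₀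
    · intro x hx
      exact (((hw1 x (lt_of_le_of_lt hx.2 hαhalf)).continuousAt).continuousWithinAt).abs
    · intro b hb hpre
      have h := hgron b hb hpre b ⟨hb.1, le_rfl⟩
      have h2 := hgb b hb
      have h3 : |w b| ≤ max |w b| |w1 b| := le_max_left _ _
      have hm12 : m / 2 ≤ 1 / 2 := by linarith
      linarith
  have hfinal : ∀ x ∈ Icc S₁ s₀, max |w x| |w1 x| ≤ m / 2 := by
    intro x hx
    exact le_trans (hgron s₀ ⟨hS₁s₀, le_rfl⟩ (fun y hy => hb1 y ⟨hy.1, hy.2.le⟩) x hx) (hgb x hx)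
  -- conclusion
  have hρε : ρ < ε := by
    have h1 : m / (4 * E) ≤ m / 4 :=
      div_le_div_of_nonneg_left hm0.le (by norm_num) (by linarith)
    linarith
  constructor
  · intro s hs
    have heq : |xb s - xt α s| = |w s| := by
      rw [abs_sub_comm]
    rw [heq]
    rcases le_or_gt s S₁ with h | h
    · exact lt_trans (hstepA s h).1 hρε
    · have h2 := hfinal s ⟨h.le, hs⟩
      have h3 : |w s| ≤ m / 2 := le_trans (le_max_left _ _) h2
      linarith
  · intro s hs
    have heq : |deriv xb s - deriv (xt α) s| = |w1 s| := by
      rw [abs_sub_comm]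
    rw [heq]
    rcases le_or_gt s S₁ with h | h
    · exact lt_trans (hstepA s h).2 hρε
    · have h2 := hfinal s ⟨h.le, hs⟩
      have h3 : |w1 s| ≤ m / 2 := le_trans (le_max_right _ _) h2
      linarith
end
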